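/- arXiv:2009.13206 — 5 statements merged into one kernel-verified Lean document; each statement's English description precedes it below -/
import Mathlib

section
/- Let q : (K,G) → (L,G) be an open extension of topological dynamical systems such that (L,G) is topologically ergodic. Then q is pseudoisometric if and only if the uniform enveloping semigroupoid E_u(q) is compact in the compact-open topology (in which case E_u(q) is automatically a compact groupoid). -/
open Filter Topology Set Function MeasureTheory

/-- A continuous fiber map between the fibers of the bundles `p : X → L` and `q : Y → L'`:
an element of `C_p^q(X,Y)` with source `src` and range `rng`. -/
structure FiberMap {X L Y L' : Type} [TopologicalSpace X] [TopologicalSpace Y]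
    (p : X → L) (q : Y → L') where
  src : L
  rng : L'
  toFun : {x : X // p x = src} → Y
  maps_to : ∀ x, q (toFun x) = rng
  continuous_toFun : Continuous toFun

/-- The compact-open topology on `C_p^q(X,Y)`, generated by the sets
`W(C,O) = {θ | θ(C ∩ X_{s(θ)}) ⊆ O}` for `C ⊆ X` compact and `O ⊆ Y` open. -/
def fiberCO {X L Y L' : Type} [TopologicalSpace X] [TopologicalSpace Y]
    (p : X → L) (q : Y → L') : TopologicalSpace (FiberMap p q) :=
  TopologicalSpace.generateFrom
    {W | ∃ (C : Set X) (O : Set Y), IsCompact C ∧ IsOpen O ∧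
      W = {θ : FiberMap p q | ∀ x : {x : X // p x = θ.src}, (x : X) ∈ C → θ.toFun x ∈ O}}

instance fiberMapTopology {X L Y L' : Type} [TopologicalSpace X] [TopologicalSpace Y]
    (p : X → L) (q : Y → L') : TopologicalSpace (FiberMap p q) :=
  fiberCO p q

/-- Composition `η ∘ θ` of continuous fiber maps in `C_q^q(K,K)` with `r(θ) = s(η)`. -/
def FiberMap.comp {K L : Type} [TopologicalSpace K] {q : K → L}
    (η θ : FiberMap q q) (h : θ.rng = η.src) : FiberMap q q where
  src := θ.src
  rng := η.rng
  toFun x := η.toFun ⟨θ.toFun x, (θ.maps_to x).trans h⟩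
  maps_to x := η.maps_to _
  continuous_toFun := η.continuous_toFun.comp
    (θ.continuous_toFun.subtype_mk fun x => (θ.maps_to x).trans h)

/-- A set of fiber maps is a subsemigroupoid if it is closed under composition of
composable elements. -/
def IsSubsemigroupoid {K L : Type} [TopologicalSpace K] {q : K → L}
    (S : Set (FiberMap q q)) : Prop :=
  ∀ θ ∈ S, ∀ η ∈ S, ∀ h : θ.rng = η.src, FiberMap.comp η θ h ∈ S

/-- The set `S(q)` of transition maps `φ_g|_{K_l} : K_l → K_{g•l}`. -/
def transitionSet (G : Type) {K L : Type} [Group G] [TopologicalSpace K]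
    [MulAction G K] [MulAction G L] (q : K → L) : Set (FiberMap q q) :=
  {θ | ∃ g : G, θ.rng = g • θ.src ∧ ∀ x : {x : K // q x = θ.src}, θ.toFun x = g • (x : K)}

/-- The uniform enveloping semigroupoid `E_u(q)`: the smallest subsemigroupoid of
`C_q^q(K,K)` containing `S(q)` that is closed in the compact-open topology. -/
def uniformEnveloping (G : Type) {K L : Type} [Group G] [TopologicalSpace K]
    [MulAction G K] [MulAction G L] (q : K → L) : Set (FiberMap q q) :=
  ⋂₀ {S : Set (FiberMap q q) | transitionSet G q ⊆ S ∧ IsSubsemigroupoid S ∧ IsClosed S}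

/-- The extension `q : (K,G) → (L,G)` is pseudoisometric: there is a set `P` of continuous
functions on `K ×_q K` restricting to pseudometrics on each fiber which generate the
fiber topologies and are invariant under the action of `G`. -/
def IsPseudoIsometricExt (G : Type) {K L : Type} [Group G] [TopologicalSpace K]
    [MulAction G K] (q : K → L) : Prop :=
  ∃ P : Set ({z : K × K // q z.1 = q z.2} → ℝ),
    (∀ p ∈ P, Continuous p) ∧
    (∀ p ∈ P, ∀ z, 0 ≤ p z) ∧
    (∀ p ∈ P, ∀ x : K, p ⟨(x, x), rfl⟩ = 0) ∧
    (∀ p ∈ P, ∀ x y : K, ∀ h : q x = q y, p ⟨(x, y), h⟩ = p ⟨(y, x), h.symm⟩) ∧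
    (∀ p ∈ P, ∀ x y z : K, ∀ (hxy : q x = q y) (hyz : q y = q z),
      p ⟨(x, z), hxy.trans hyz⟩ ≤ p ⟨(x, y), hxy⟩ + p ⟨(y, z), hyz⟩) ∧
    (∀ l : L, (inferInstance : TopologicalSpace {x : K // q x = l}) =
      TopologicalSpace.generateFrom
        {B | ∃ p ∈ P, ∃ (x₀ : {x : K // q x = l}) (ε : ℝ), 0 < ε ∧
          B = {y : {x : K // q x = l} | p ⟨((x₀ : K), (y : K)), x₀.2.trans y.2.symm⟩ < ε}}) ∧
    (∀ p ∈ P, ∀ g : G, ∀ x y : K, ∀ (h : q x = q y) (h' : q (g • x) = q (g • y)),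
      p ⟨(g • x, g • y), h'⟩ = p ⟨(x, y), h⟩)

/-- A topological dynamical system `(L,G)` is topologically ergodic if every continuous
`G`-invariant complex-valued function on `L` is constant. -/
def TopologicallyErgodic (G L : Type) [Group G] [TopologicalSpace L] [MulAction G L] : Prop :=
  ∀ f : ContinuousMap L ℂ, (∀ (g : G) (l : L), f (g • l) = f l) → ∀ l l' : L, f l = f l'

namespace EK

section Infra

variable {K L : Type}
  [TopologicalSpace K] [CompactSpace K] [T2Space K] [Nonempty K]
  [TopologicalSpace L] [CompactSpace L] [T2Space L]

variable {q : K → L}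

/-- The subbasic open sets of the fibered compact-open topology. -/
def Wset (q : K → L) (C O : Set K) : Set (FiberMap q q) :=
  {θ | ∀ x : {x : K // q x = θ.src}, (x : K) ∈ C → θ.toFun x ∈ O}

lemma isOpen_Wset {C O : Set K} (hC : IsCompact C) (hO : IsOpen O) :
    IsOpen (Wset q C O) := by
  show TopologicalSpace.GenerateOpen _ _
  exact TopologicalSpace.GenerateOpen.basic _ ⟨C, O, hC, hO, rfl⟩

lemma fiber_nonempty (hqs : Function.Surjective q) (l : L) :
    ∃ x : K, q x = l := hqs l

lemma isClosed_fiber (hq : Continuous q) (l : L) : IsClosed {x : K | q x = l} :=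
  isClosed_eq hq continuous_const

lemma isCompact_fiber (hq : Continuous q) (l : L) : IsCompact {x : K | q x = l} :=
  (isClosed_fiber hq l).isCompact

lemma continuous_src (hq : Continuous q) (hqs : Function.Surjective q) :
    Continuous (fun θ : FiberMap q q => θ.src) := by
  rw [continuous_def]
  intro V hV
  have hWeq : (fun θ : FiberMap q q => θ.src) ⁻¹' V = Wset q (q ⁻¹' Vᶜ) ∅ := by
    ext θ
    constructor
    · intro h x hx
      have hx' : q (x : K) ∈ Vᶜ := hx
      rw [x.2] at hx'
      exact absurd h hx'
    · intro h
      by_contra hsrc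
      obtain ⟨x, hx⟩ := hqs θ.src
      exact h ⟨x, hx⟩ (by simp [hx]; exact hsrc)
  rw [hWeq]
  exact isOpen_Wset ((hV.isClosed_compl.preimage hq).isCompact) isOpen_empty

lemma continuous_rng (hq : Continuous q) (hqs : Function.Surjective q) :
    Continuous (fun θ : FiberMap q q => θ.rng) := by
  rw [continuous_def]
  intro V hV
  have hWeq : (fun θ : FiberMap q q => θ.rng) ⁻¹' V = Wset q univ (q ⁻¹' V) := by
    ext θ
    constructor
    · intro h x _
      show q (θ.toFun x) ∈ V
      rw [θ.maps_to x]; exact h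
    · intro h
      obtain ⟨x, hx⟩ := hqs θ.src
      have := h ⟨x, hx⟩ (mem_univ _)
      rwa [mem_preimage, θ.maps_to] at this
  rw [hWeq]
  exact isOpen_Wset isCompact_univ (hV.preimage hq)

/-- The evaluation domain: pairs `(θ, x)` with `x` in the source fiber of `θ`. -/
abbrev Dom (q : K → L) : Type _ := {z : FiberMap q q × K // q z.2 = z.1.src}

/-- Evaluation of a fiber map at a point of its source fiber. -/
def ev (z : Dom q) : K := z.1.1.toFun ⟨z.1.2, z.2⟩

lemma continuous_ev : Continuous (ev (q := q)) := by
  rw [continuous_iff_continuousAt]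
  rintro ⟨⟨θ₀, x₀⟩, h₀⟩
  rw [ContinuousAt, tendsto_def]
  intro O hO
  rw [mem_nhds_iff] at hO
  obtain ⟨O', hO'sub, hO', hevO'⟩ := hO
  -- find an open V in K with coe ⁻¹' V = θ₀.toFun ⁻¹' O'
  have hpre : IsOpen (θ₀.toFun ⁻¹' O') := θ₀.continuous_toFun.isOpen_preimage O' hO'
  rw [isOpen_induced_iff] at hpre
  obtain ⟨V, hV, hVeq⟩ := hpre
  have hx₀V : x₀ ∈ V := by
    have : (⟨x₀, h₀⟩ : {x : K // q x = θ₀.src}) ∈ θ₀.toFun ⁻¹' O' := hevO'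
    rw [← hVeq] at this; exact this
  -- closed neighbourhood C of x₀ inside V
  obtain ⟨C, ⟨hCmem, hCclosed⟩, hCV⟩ := (closed_nhds_basis x₀).mem_iff.mp (hV.mem_nhds hx₀V)
  -- the neighbourhood in Dom q
  have hWopen : IsOpen (Wset q C O') := isOpen_Wset hCclosed.isCompact hO'
  have hθ₀W : θ₀ ∈ Wset q C O' := by
    intro u hu
    have : (u : K) ∈ V := hCV hu
    have : u ∈ θ₀.toFun ⁻¹' O' := by rw [← hVeq]; exact this
    exact this
  refine mem_of_superset ?_ (fun z hz => hO'sub hz)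
  have hmem : (Wset q C O') ×ˢ (interior C) ∈ 𝓝 ((θ₀, x₀) : FiberMap q q × K) := by
    rw [nhds_prod_eq]
    exact prod_mem_prod (hWopen.mem_nhds hθ₀W) (interior_mem_nhds.mpr hCmem)
  have : Subtype.val ⁻¹' ((Wset q C O') ×ˢ (interior C)) ∈
      𝓝 (⟨(θ₀, x₀), h₀⟩ : Dom q) := by
    rw [nhds_subtype_eq_comap]
    exact preimage_mem_comap hmem
  refine mem_of_superset this ?_
  rintro ⟨⟨θ, x⟩, hz⟩ ⟨hθ, hx⟩
  exact hθ ⟨x, hz⟩ (interior_subset hx)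

lemma ev_congr {θ : FiberMap q q} (w : Dom q) (h : w.1.1 = θ) :
    ev w = θ.toFun ⟨w.1.2, h ▸ w.2⟩ := by
  obtain ⟨⟨θ₁, u⟩, hq⟩ := w
  subst h
  rfl

end Infra

end EK

namespace EK

section Alg

variable {G K L : Type} [Group G] [TopologicalSpace G]
  [TopologicalSpace K] [CompactSpace K] [T2Space K] [Nonempty K]
  [TopologicalSpace L] [CompactSpace L] [T2Space L]
  [MulAction G K] [ContinuousSMul G K] [MulAction G L]

variable {q : K → L}

/-- The identity fiber map over `l`. -/
def idFM (q : K → L) (l : L) : FiberMap q q where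
  src := l
  rng := l
  toFun x := (x : K)
  maps_to x := x.2
  continuous_toFun := continuous_subtype_val

@[simp] lemma idFM_src (l : L) : (idFM q l).src = l := rfl
@[simp] lemma idFM_rng (l : L) : (idFM q l).rng = l := rfl
@[simp] lemma idFM_toFun (l : L) (x : {x : K // q x = l}) : (idFM q l).toFun x = (x : K) := rfl

lemma idFM_mem_transitionSet (l : L) : idFM q l ∈ transitionSet G q :=
  ⟨1, (one_smul G l).symm, fun x => (one_smul G (x : K)).symm⟩

/-- The transition fiber map `φ_g|_{K_l}`. -/
def transFM (heq : ∀ (g : G) (x : K), q (g • x) = g • q x) (g : G) (l : L) :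
    FiberMap q q where
  src := l
  rng := g • l
  toFun x := g • (x : K)
  maps_to x := by rw [heq g (x : K), x.2]
  continuous_toFun := (continuous_const_smul g).comp continuous_subtype_val

variable (heq : ∀ (g : G) (x : K), q (g • x) = g • q x)

@[simp] lemma transFM_src (g : G) (l : L) : (transFM heq g l).src = l := rfl
@[simp] lemma transFM_rng (g : G) (l : L) : (transFM heq g l).rng = g • l := rfl
@[simp] lemma transFM_toFun (g : G) (l : L) (x : {x : K // q x = l}) :
    (transFM heq g l).toFun x = g • (x : K) := rfl

lemma transFM_mem_transitionSet (g : G) (l : L) :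
    transFM heq g l ∈ transitionSet G q := ⟨g, rfl, fun _ => rfl⟩

lemma Eu_isClosed : IsClosed (uniformEnveloping G q) :=
  isClosed_sInter (fun _ hS => hS.2.2)

lemma transitionSet_subset_Eu : transitionSet G q ⊆ uniformEnveloping G q :=
  fun _ hθ => mem_sInter.2 fun _ hS => hS.1 hθ

lemma Eu_sgpd : IsSubsemigroupoid (uniformEnveloping G q) :=
  fun θ hθ η hη h => mem_sInter.2 fun S hS =>
    hS.2.1 θ (mem_sInter.1 hθ S hS) η (mem_sInter.1 hη S hS) h

lemma Eu_subset {S : Set (FiberMap q q)} (h1 : transitionSet G q ⊆ S)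
    (h2 : IsSubsemigroupoid S) (h3 : IsClosed S) : uniformEnveloping G q ⊆ S :=
  fun _ hθ => mem_sInter.1 hθ S ⟨h1, h2, h3⟩

lemma idFM_mem_Eu (l : L) : idFM q l ∈ uniformEnveloping G q :=
  transitionSet_subset_Eu (idFM_mem_transitionSet l)

lemma transFM_mem_Eu (g : G) (l : L) : transFM heq g l ∈ uniformEnveloping G q :=
  transitionSet_subset_Eu (transFM_mem_transitionSet heq g l)

@[simp] lemma comp_src (η θ : FiberMap q q) (h : θ.rng = η.src) :
    (FiberMap.comp η θ h).src = θ.src := rfl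
@[simp] lemma comp_rng (η θ : FiberMap q q) (h : θ.rng = η.src) :
    (FiberMap.comp η θ h).rng = η.rng := rfl
lemma comp_toFun (η θ : FiberMap q q) (h : θ.rng = η.src) (x : {x : K // q x = θ.src}) :
    (FiberMap.comp η θ h).toFun x = η.toFun ⟨θ.toFun x, (θ.maps_to x).trans h⟩ := rfl

end Alg

section Approx

variable {K L : Type}
  [TopologicalSpace K] [CompactSpace K] [T2Space K] [Nonempty K]
  [TopologicalSpace L] [CompactSpace L] [T2Space L]
variable {q : K → L}

/-- Given an ultrafilter of fiber maps whose sources converge to `l₀` and a point `x` of the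
fiber over `l₀`, produce an ultrafilter on the evaluation domain lying over it whose point
component converges to `x`.  Uses openness of `q`. -/
lemma exists_approx_ultrafilter (hqo : IsOpenMap q)
    (𝒰 : Ultrafilter (FiberMap q q)) {l₀ : L}
    (hsrc : Tendsto (fun θ : FiberMap q q => θ.src) 𝒰 (𝓝 l₀))
    {x : K} (hx : q x = l₀) :
    ∃ 𝒱 : Ultrafilter (Dom q),
      Ultrafilter.map (fun z : Dom q => z.1.1) 𝒱 = 𝒰 ∧
      Tendsto (fun z : Dom q => z.1.2) 𝒱 (𝓝 x) := by
  set π : Dom q → FiberMap q q := fun z => z.1.1 with hπ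
  set pt : Dom q → K := fun z => z.1.2 with hpt
  set F : Filter (Dom q) := (comap π ↑𝒰) ⊓ (comap pt (𝓝 x)) with hF
  have hne : F.NeBot := by
    rw [← forall_mem_nonempty_iff_neBot]
    intro s hs
    rw [hF, mem_inf_iff] at hs
    obtain ⟨t₁, ht₁, t₂, ht₂, rfl⟩ := hs
    rw [mem_comap] at ht₁ ht₂
    obtain ⟨S, hS, hSsub⟩ := ht₁
    obtain ⟨U, hU, hUsub⟩ := ht₂
    rw [mem_nhds_iff] at hU
    obtain ⟨U', hU'U, hU'open, hxU'⟩ := hU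
    have hqU' : q '' U' ∈ 𝓝 l₀ := by
      rw [← hx]
      exact (hqo U' hU'open).mem_nhds ⟨x, hxU', rfl⟩
    have hmem : S ∩ ((fun θ : FiberMap q q => θ.src) ⁻¹' (q '' U')) ∈ 𝒰 :=
      inter_mem hS (hsrc hqU')
    obtain ⟨θ, hθS, hθU⟩ := Ultrafilter.nonempty_of_mem hmem
    obtain ⟨u, huU', hqu⟩ := hθU
    refine ⟨⟨(θ, u), hqu⟩, hSsub ?_, hUsub ?_⟩
    · exact hθS
    · exact hU'U huU'
  refine ⟨Ultrafilter.of F, ?_, ?_⟩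
  · have h1 : (Ultrafilter.map π (Ultrafilter.of F) : Filter (FiberMap q q)) ≤
        (𝒰 : Filter (FiberMap q q)) := by
      rw [Ultrafilter.coe_map]
      calc map π ↑(Ultrafilter.of F) ≤ map π F := map_mono (Ultrafilter.of_le F)
        _ ≤ map π (comap π ↑𝒰) := map_mono inf_le_left
        _ ≤ ↑𝒰 := map_comap_le
    exact Ultrafilter.coe_injective (𝒰.unique h1)
  · have : ↑(Ultrafilter.of F) ≤ comap pt (𝓝 x) := (Ultrafilter.of_le F).trans inf_le_right
    rwa [← map_le_iff_le_comap] at this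

end Approx

end EK

namespace EK

section PM

variable {G K L : Type} [Group G] [TopologicalSpace G]
  [TopologicalSpace K] [CompactSpace K] [T2Space K] [Nonempty K]
  [TopologicalSpace L] [CompactSpace L] [T2Space L]
  [MulAction G K] [ContinuousSMul G K] [MulAction G L] [ContinuousSMul G L]

variable {q : K → L}

lemma compactSpace_KqK (hq : Continuous q) : CompactSpace {z : K × K // q z.1 = q z.2} :=
  isCompact_iff_compactSpace.mp
    ((isClosed_eq (hq.comp continuous_fst) (hq.comp continuous_snd)).isCompact)

/-- Control of a continuous function on `K ×_q K` near a pair. -/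
lemma pair_control {p : {z : K × K // q z.1 = q z.2} → ℝ} (hpc : Continuous p)
    {a b : K} (hab : q a = q b) {ε : ℝ} (hε : 0 < ε) :
    ∃ A B : Set K, IsOpen A ∧ IsOpen B ∧ a ∈ A ∧ b ∈ B ∧
      ∀ (u v : K), u ∈ A → v ∈ B → ∀ h : q u = q v,
        |p ⟨(u, v), h⟩ - p ⟨(a, b), hab⟩| < ε := by
  set c := p ⟨(a, b), hab⟩ with hc
  have hball : {r : ℝ | |r - c| < ε} ∈ 𝓝 c := by
    have : {r : ℝ | |r - c| < ε} = Metric.ball c ε := by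
      ext r; simp [Metric.mem_ball, Real.dist_eq]
    rw [this]
    exact Metric.ball_mem_nhds c hε
  have hcont : p ⁻¹' {r : ℝ | |r - c| < ε} ∈ 𝓝 (⟨(a, b), hab⟩ : {z : K × K // q z.1 = q z.2}) :=
    hpc.continuousAt hball
  rw [nhds_subtype_eq_comap, mem_comap] at hcont
  obtain ⟨T, hT, hTsub⟩ := hcont
  rw [mem_nhds_prod_iff] at hT
  obtain ⟨A0, hA0, B0, hB0, hABT⟩ := hT
  refine ⟨interior A0, interior B0, isOpen_interior, isOpen_interior,
    mem_interior_iff_mem_nhds.mpr hA0, mem_interior_iff_mem_nhds.mpr hB0, ?_⟩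
  intro u v hu hv h
  exact hTsub (hABT (mk_mem_prod (interior_subset hu) (interior_subset hv)))

/-- Pairs lying over `l ∈ L`. -/
def PairsOver (q : K → L) (l : L) : Set {z : K × K // q z.1 = q z.2} :=
  {z | q z.1.1 = l}

lemma pairsOver_nonempty (hqs : Function.Surjective q) (l : L) :
    (PairsOver q l).Nonempty := by
  obtain ⟨x, hx⟩ := hqs l
  exact ⟨⟨(x, x), rfl⟩, hx⟩

lemma isCompact_pairsOver (hq : Continuous q) (l : L) : IsCompact (PairsOver q l) := by
  haveI := compactSpace_KqK (q := q) hq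
  exact (isClosed_eq ((hq.comp continuous_fst).comp continuous_subtype_val)
    continuous_const).isCompact

lemma exists_bound (hq : Continuous q) {p : {z : K × K // q z.1 = q z.2} → ℝ}
    (hpc : Continuous p) : ∃ M : ℝ, ∀ z, p z ≤ M := by
  haveI := compactSpace_KqK (q := q) hq
  haveI : Nonempty {z : K × K // q z.1 = q z.2} :=
    ⟨⟨(Classical.arbitrary K, Classical.arbitrary K), rfl⟩⟩
  obtain ⟨z₀, _, hz₀⟩ := isCompact_univ.exists_isMaxOn (univ_nonempty) hpc.continuousOn
  exact ⟨p z₀, fun z => hz₀ (mem_univ z)⟩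

lemma bddAbove_pairs (hq : Continuous q) {p : {z : K × K // q z.1 = q z.2} → ℝ}
    (hpc : Continuous p) (s : Set {z : K × K // q z.1 = q z.2}) : BddAbove (p '' s) := by
  obtain ⟨M, hM⟩ := exists_bound hq hpc
  exact ⟨M, by rintro r ⟨z, _, rfl⟩; exact hM z⟩

/-- The `p`-diameter of the fiber over `l`. -/
noncomputable def fdiam (p : {z : K × K // q z.1 = q z.2} → ℝ) (l : L) : ℝ :=
  sSup (p '' PairsOver q l)

lemma le_fdiam (hq : Continuous q) {p : {z : K × K // q z.1 = q z.2} → ℝ}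
    (hpc : Continuous p) {l : L} {z : {z : K × K // q z.1 = q z.2}}
    (hz : q z.1.1 = l) : p z ≤ fdiam p l :=
  le_csSup (bddAbove_pairs hq hpc _) ⟨z, hz, rfl⟩

lemma fdiam_le (hqs : Function.Surjective q) {p : {z : K × K // q z.1 = q z.2} → ℝ}
    {l : L} {r : ℝ} (h : ∀ z ∈ PairsOver q l, p z ≤ r) : fdiam p l ≤ r :=
  csSup_le ((pairsOver_nonempty hqs l).image p) (by rintro s ⟨z, hz, rfl⟩; exact h z hz)

lemma fdiam_smul (heq : ∀ (g : G) (x : K), q (g • x) = g • q x)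
    {p : {z : K × K // q z.1 = q z.2} → ℝ}
    (hPi : ∀ (g : G) (x y : K), ∀ (h : q x = q y) (h' : q (g • x) = q (g • y)),
      p ⟨(g • x, g • y), h'⟩ = p ⟨(x, y), h⟩) (g : G) (l : L) :
    fdiam p (g • l) = fdiam p l := by
  have key : ∀ (g : G) (l : L), p '' PairsOver q (g • l) ⊆ p '' PairsOver q l := by
    intro g l r hr
    obtain ⟨⟨⟨x, y⟩, hxy⟩, hz, rfl⟩ := hr
    have hx' : q (g⁻¹ • x) = q (g⁻¹ • y) := by
      rw [heq g⁻¹ x, heq g⁻¹ y, hxy]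
    have hx'' : q (g⁻¹ • x) = l := by
      rw [heq g⁻¹ x]
      have : q x = g • l := hz
      rw [this, inv_smul_smul]
    refine ⟨⟨(g⁻¹ • x, g⁻¹ • y), hx'⟩, hx'', ?_⟩
    have h1 : q (g • g⁻¹ • x) = q (g • g⁻¹ • y) := by
      rw [smul_inv_smul, smul_inv_smul]; exact hxy
    have h2 : p ⟨(g • g⁻¹ • x, g • g⁻¹ • y), h1⟩ = p ⟨(g⁻¹ • x, g⁻¹ • y), hx'⟩ :=
      hPi g (g⁻¹ • x) (g⁻¹ • y) hx' h1
    rw [← h2]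
    congr 1
    exact Subtype.ext (by simp [smul_inv_smul])
  have h1 := key g l
  have h2 := key g⁻¹ (g • l)
  rw [inv_smul_smul] at h2
  exact congrArg sSup (le_antisymm h1 h2)

/-- A function with open strict sublevel and superlevel sets is continuous. -/
lemma continuous_of_usc_lsc {X : Type*} [TopologicalSpace X] {h : X → ℝ}
    (h1 : ∀ c : ℝ, IsOpen {x | h x < c}) (h2 : ∀ c : ℝ, IsOpen {x | c < h x}) :
    Continuous h := by
  rw [continuous_iff_continuousAt]
  intro x₀
  rw [ContinuousAt, Metric.tendsto_nhds]
  intro ε hε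
  have hopen : IsOpen ({x | h x < h x₀ + ε} ∩ {x | h x₀ - ε < h x}) :=
    (h1 (h x₀ + ε)).inter (h2 (h x₀ - ε))
  have hx₀ : x₀ ∈ ({x | h x < h x₀ + ε} ∩ {x | h x₀ - ε < h x}) :=
    ⟨by simp only [mem_setOf_eq]; linarith, by simp only [mem_setOf_eq]; linarith⟩
  filter_upwards [hopen.mem_nhds hx₀] with x hx
  obtain ⟨hxa, hxb⟩ := hx
  simp only [mem_setOf_eq] at hxa hxb
  rw [Real.dist_eq, abs_sub_lt_iff]
  exact ⟨by linarith, by linarith⟩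

lemma fdiam_continuous (hq : Continuous q) (hqs : Function.Surjective q)
    (hqo : IsOpenMap q) {p : {z : K × K // q z.1 = q z.2} → ℝ}
    (hpc : Continuous p) : Continuous (fdiam (q := q) p) := by
  haveI := compactSpace_KqK (q := q) hq
  apply continuous_of_usc_lsc
  · -- upper semicontinuity : {fdiam < c} is open
    intro c
    have hclosed : IsClosed {l : L | c ≤ fdiam p l} := by
      have himg : {l : L | c ≤ fdiam p l} =
          (fun z : {z : K × K // q z.1 = q z.2} => q z.1.1) '' {z | c ≤ p z} := by
        ext l
        constructor
        · intro hl
          obtain ⟨z, hz, hmax⟩ := (isCompact_pairsOver hq l).exists_isMaxOn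
            (pairsOver_nonempty hqs l) hpc.continuousOn
          have : fdiam p l = p z := by
            refine le_antisymm (fdiam_le hqs fun w hw => hmax hw) (le_fdiam hq hpc hz)
          exact ⟨z, by rw [mem_setOf_eq, ← this]; exact hl, hz⟩
        · rintro ⟨z, hz, rfl⟩
          exact le_trans hz (le_fdiam hq hpc rfl)
      rw [himg]
      have hcpt : IsCompact {z : {z : K × K // q z.1 = q z.2} | c ≤ p z} :=
        (isClosed_le continuous_const hpc).isCompact
      exact (hcpt.image ((hq.comp continuous_fst).comp continuous_subtype_val)).isClosed
    have : {l : L | fdiam p l < c} = {l : L | c ≤ fdiam p l}ᶜ := by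
      ext l; simp [not_le]
    rw [this]
    exact hclosed.isOpen_compl
  · -- lower semicontinuity : {c < fdiam} is open
    intro c
    rw [isOpen_iff_forall_mem_open]
    intro l₀ hl₀
    obtain ⟨r, ⟨z, hz, rfl⟩, hrc⟩ := exists_lt_of_lt_csSup
      ((pairsOver_nonempty hqs l₀).image p) hl₀
    obtain ⟨A, B, hA, hB, haA, hbB, hctrl⟩ := pair_control hpc z.2 (sub_pos.mpr hrc)
    refine ⟨(q '' A) ∩ (q '' B), ?_, (hqo A hA).inter (hqo B hB),
      ⟨⟨z.1.1, haA, hz⟩, ⟨z.1.2, hbB, z.2.symm.trans hz⟩⟩⟩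
    · rintro m ⟨⟨u, huA, hum⟩, ⟨v, hvB, hvm⟩⟩
      have huv : q u = q v := hum.trans hvm.symm
      have := hctrl u v huA hvB huv
      have hgt : c < p ⟨(u, v), huv⟩ := by
        have h1 : p z - p ⟨(u, v), huv⟩ < p z - c := by
          have := abs_lt.mp this
          linarith [this.1]
        linarith
      calc c < p ⟨(u, v), huv⟩ := hgt
        _ ≤ fdiam p m := le_fdiam hq hpc hum

lemma fdiam_const (hq : Continuous q) (hqs : Function.Surjective q) (hqo : IsOpenMap q)
    (heq : ∀ (g : G) (x : K), q (g • x) = g • q x)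
    (hte : TopologicallyErgodic G L)
    {p : {z : K × K // q z.1 = q z.2} → ℝ} (hpc : Continuous p)
    (hPi : ∀ (g : G) (x y : K), ∀ (h : q x = q y) (h' : q (g • x) = q (g • y)),
      p ⟨(g • x, g • y), h'⟩ = p ⟨(x, y), h⟩) (l l' : L) :
    fdiam (q := q) p l = fdiam (q := q) p l' := by
  have hcont : Continuous fun m : L => ((fdiam (q := q) p m : ℝ) : ℂ) :=
    Complex.continuous_ofReal.comp (fdiam_continuous hq hqs hqo hpc)
  have := hte ⟨fun m => ((fdiam (q := q) p m : ℝ) : ℂ), hcont⟩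
    (fun g m => by simp only [ContinuousMap.coe_mk]; rw [fdiam_smul heq hPi]) l l'
  simp only [ContinuousMap.coe_mk] at this
  exact_mod_cast this

end PM

end EK

namespace EK

lemma generateOpen_exists_finite {α : Type*} {g : Set (Set α)} {O : Set α}
    (hO : TopologicalSpace.GenerateOpen g O) :
    ∀ a ∈ O, ∃ T : Finset (Set α), (∀ s ∈ T, s ∈ g ∧ a ∈ s) ∧ (⋂ s ∈ T, (s : Set α)) ⊆ O := by
  classical
  induction hO with
  | basic s hs =>
      intro a ha
      exact ⟨{s}, by simp [hs, ha], by simp⟩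
  | univ =>
      intro a _
      exact ⟨∅, by simp, by simp⟩
  | inter s t _ _ ihs iht =>
      intro a ha
      obtain ⟨T₁, h₁, hs₁⟩ := ihs a ha.1
      obtain ⟨T₂, h₂, hs₂⟩ := iht a ha.2
      refine ⟨T₁ ∪ T₂, ?_, ?_⟩
      · intro u hu
        rcases Finset.mem_union.mp hu with h | h
        exacts [h₁ u h, h₂ u h]
      · intro x hx
        refine ⟨hs₁ (mem_iInter₂.mpr fun u hu =>
            mem_iInter₂.mp hx u (Finset.mem_union_left _ hu)),
          hs₂ (mem_iInter₂.mpr fun u hu =>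
            mem_iInter₂.mp hx u (Finset.mem_union_right _ hu))⟩
  | sUnion S _ ih =>
      intro a ha
      obtain ⟨s, hsS, has⟩ := ha
      obtain ⟨T, h₁, h₂⟩ := ih s hsS a has
      exact ⟨T, h₁, h₂.trans (subset_sUnion_of_mem hsS)⟩

section BallsSec

variable {G K L : Type} [Group G]
  [TopologicalSpace K] [CompactSpace K] [T2Space K] [Nonempty K]
  [TopologicalSpace L] [CompactSpace L] [T2Space L]
  [MulAction G K]

variable {q : K → L}

/-- The generating balls of the fiber over `l`, as in `IsPseudoIsometricExt`. -/
def Balls (q : K → L) (P : Set ({z : K × K // q z.1 = q z.2} → ℝ)) (l : L) :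
    Set (Set {x : K // q x = l}) :=
  {B | ∃ p ∈ P, ∃ (x₀ : {x : K // q x = l}) (ε : ℝ), 0 < ε ∧
      B = {y : {x : K // q x = l} | p ⟨((x₀ : K), (y : K)), x₀.2.trans y.2.symm⟩ < ε}}

variable {P : Set ({z : K × K // q z.1 = q z.2} → ℝ)}

/-- Balls are open in the fiber, assuming the generation hypothesis. -/
lemma isOpen_of_generateBalls
    (hPg : ∀ l : L, (inferInstance : TopologicalSpace {x : K // q x = l}) =
      TopologicalSpace.generateFrom (Balls q P l))
    {l : L} {B : Set {x : K // q x = l}} (hB : B ∈ Balls q P l) : IsOpen B := by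
  have h : @IsOpen _ (TopologicalSpace.generateFrom (Balls q P l)) B :=
    TopologicalSpace.GenerateOpen.basic _ hB
  exact Eq.mpr (congrArg (fun t : TopologicalSpace {x : K // q x = l} => @IsOpen _ t B)
    (hPg l)) h

lemma exists_balls_subset
    (hPg : ∀ l : L, (inferInstance : TopologicalSpace {x : K // q x = l}) =
      TopologicalSpace.generateFrom (Balls q P l))
    {l : L} {s : Set {x : K // q x = l}} (hs : IsOpen s)
    {Z : {x : K // q x = l}} (hZ : Z ∈ s) :
    ∃ T : Finset (Set {x : K // q x = l}),
      (∀ B ∈ T, B ∈ Balls q P l ∧ Z ∈ B) ∧ (⋂ B ∈ T, (B : Set _)) ⊆ s := by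
  have hs' : TopologicalSpace.GenerateOpen (Balls q P l) s := by
    have h : @IsOpen _ (TopologicalSpace.generateFrom (Balls q P l)) s :=
      Eq.mp (congrArg (fun t : TopologicalSpace {x : K // q x = l} => @IsOpen _ t s)
        (hPg l)) hs
    exact h
  exact generateOpen_exists_finite hs' Z hZ

/-- Two points of a fiber at `P`-distance zero for all `p ∈ P` coincide. -/
lemma p_separation
    (hPt : ∀ p ∈ P, ∀ x y z : K, ∀ (hxy : q x = q y) (hyz : q y = q z),
      p ⟨(x, z), hxy.trans hyz⟩ ≤ p ⟨(x, y), hxy⟩ + p ⟨(y, z), hyz⟩)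
    (hPg : ∀ l : L, (inferInstance : TopologicalSpace {x : K // q x = l}) =
      TopologicalSpace.generateFrom (Balls q P l))
    {l : L} (z w : {x : K // q x = l})
    (h0 : ∀ p ∈ P, p ⟨((z : K), (w : K)), z.2.trans w.2.symm⟩ = 0) : z = w := by
  by_contra hne
  have hopen : IsOpen {y : {x : K // q x = l} | y ≠ w} := isOpen_compl_singleton
  obtain ⟨T, hT, hTsub⟩ := exists_balls_subset hPg hopen hne
  have hwT : w ∈ ⋂ B ∈ T, (B : Set _) := by
    refine mem_iInter₂.mpr fun B hB => ?_
    obtain ⟨hBballs, hzB⟩ := hT B hB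
    obtain ⟨p, hpP, x₀, ε, hε, rfl⟩ := hBballs
    have hzB' : p ⟨((x₀ : K), (z : K)), x₀.2.trans z.2.symm⟩ < ε := hzB
    have htri := hPt p hpP (x₀ : K) (z : K) (w : K) (x₀.2.trans z.2.symm) (z.2.trans w.2.symm)
    have : p ⟨((x₀ : K), (w : K)), x₀.2.trans w.2.symm⟩ ≤
        p ⟨((x₀ : K), (z : K)), x₀.2.trans z.2.symm⟩ := by
      calc p ⟨((x₀ : K), (w : K)), x₀.2.trans w.2.symm⟩
          = p ⟨((x₀ : K), (w : K)), (x₀.2.trans z.2.symm).trans (z.2.trans w.2.symm)⟩ := rfl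
        _ ≤ _ := htri
        _ = p ⟨((x₀ : K), (z : K)), x₀.2.trans z.2.symm⟩ + 0 := by rw [h0 p hpP]
        _ = _ := add_zero _
    exact lt_of_le_of_lt this hzB'
  exact (hTsub hwT) rfl

end BallsSec

end EK

namespace EK

section IsoSec

variable {G K L : Type} [Group G] [TopologicalSpace G]
  [TopologicalSpace K] [CompactSpace K] [T2Space K] [Nonempty K]
  [TopologicalSpace L] [CompactSpace L] [T2Space L]
  [MulAction G K] [ContinuousSMul G K] [MulAction G L] [ContinuousSMul G L]

variable {q : K → L}

lemma p_congr {p : {z : K × K // q z.1 = q z.2} → ℝ} {x y x' y' : K}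
    (hxx : x = x') (hyy : y = y') (h : q x = q y) (h' : q x' = q y') :
    p ⟨(x, y), h⟩ = p ⟨(x', y'), h'⟩ := by subst hxx; subst hyy; rfl

/-- The set of fiber maps which are `P`-isometries. -/
def Iso (q : K → L) (P : Set ({z : K × K // q z.1 = q z.2} → ℝ)) : Set (FiberMap q q) :=
  {θ | ∀ p ∈ P, ∀ (x y : K) (hx : q x = θ.src) (hy : q y = θ.src),
    p ⟨(θ.toFun ⟨x, hx⟩, θ.toFun ⟨y, hy⟩),
       (θ.maps_to ⟨x, hx⟩).trans (θ.maps_to ⟨y, hy⟩).symm⟩ = p ⟨(x, y), hx.trans hy.symm⟩}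

variable {P : Set ({z : K × K // q z.1 = q z.2} → ℝ)}

lemma transitionSet_subset_Iso
    (heq : ∀ (g : G) (x : K), q (g • x) = g • q x)
    (hPi : ∀ p ∈ P, ∀ (g : G) (x y : K), ∀ (h : q x = q y) (h' : q (g • x) = q (g • y)),
      p ⟨(g • x, g • y), h'⟩ = p ⟨(x, y), h⟩) :
    transitionSet G q ⊆ Iso q P := by
  rintro θ ⟨g, hr, hf⟩ p hp x y hx hy
  have hgxy : q (g • x) = q (g • y) := by
    rw [heq g x, heq g y, hx, hy]
  calc p ⟨(θ.toFun ⟨x, hx⟩, θ.toFun ⟨y, hy⟩), _⟩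
      = p ⟨(g • x, g • y), hgxy⟩ := p_congr (hf ⟨x, hx⟩) (hf ⟨y, hy⟩) _ _
    _ = p ⟨(x, y), hx.trans hy.symm⟩ := hPi p hp g x y _ _

lemma Iso_sgpd : IsSubsemigroupoid (Iso q P) := by
  rintro θ hθ η hη h p hp x y hx hy
  have h1 := hη p hp (θ.toFun ⟨x, hx⟩) (θ.toFun ⟨y, hy⟩)
    ((θ.maps_to ⟨x, hx⟩).trans h) ((θ.maps_to ⟨y, hy⟩).trans h)
  have h2 := hθ p hp x y hx hy
  exact h1.trans h2

lemma Iso_isClosed (hq : Continuous q) (hqs : Function.Surjective q) (hqo : IsOpenMap q)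
    (heq : ∀ (g : G) (x : K), q (g • x) = g • q x)
    (hte : TopologicallyErgodic G L)
    (hPc : ∀ p ∈ P, Continuous p)
    (hP0 : ∀ p ∈ P, ∀ z, 0 ≤ p z)
    (hPr : ∀ p ∈ P, ∀ x : K, p ⟨(x, x), rfl⟩ = 0)
    (hPi : ∀ p ∈ P, ∀ (g : G) (x y : K), ∀ (h : q x = q y) (h' : q (g • x) = q (g • y)),
      p ⟨(g • x, g • y), h'⟩ = p ⟨(x, y), h⟩) :
    IsClosed (Iso q P) := by
  rw [← isOpen_compl_iff, isOpen_iff_forall_mem_open]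
  intro θ₀ hθ₀
  have hθ₀' : ¬ (θ₀ ∈ Iso q P) := hθ₀
  rw [Iso, mem_setOf_eq] at hθ₀'
  push_neg at hθ₀'
  obtain ⟨p, hp, x₀, y₀, hx₀, hy₀, hne⟩ := hθ₀'
  set a : K := θ₀.toFun ⟨x₀, hx₀⟩ with ha
  set b : K := θ₀.toFun ⟨y₀, hy₀⟩ with hb
  have hab : q a = q b := (θ₀.maps_to ⟨x₀, hx₀⟩).trans (θ₀.maps_to ⟨y₀, hy₀⟩).symm
  set c : ℝ := p ⟨(a, b), hab⟩ with hc
  set d : ℝ := p ⟨(x₀, y₀), hx₀.trans hy₀.symm⟩ with hd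
  have hcd : c ≠ d := hne
  set δ : ℝ := |c - d| / 6 with hδdef
  have hδ : 0 < δ := by
    have : 0 < |c - d| := abs_pos.mpr (sub_ne_zero.mpr hcd)
    positivity
  have h6 : |c - d| = 6 * δ := by rw [hδdef]; ring
  -- fdiam is constant and at least max c d
  have hDconst : ∀ l l' : L, fdiam (q := q) p l = fdiam (q := q) p l' :=
    fdiam_const hq hqs hqo heq hte (hPc p hp) (hPi p hp)
  have hDd : d ≤ fdiam (q := q) p θ₀.src :=
    le_fdiam hq (hPc p hp) (z := ⟨(x₀, y₀), hx₀.trans hy₀.symm⟩) hx₀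
  have hDc : c ≤ fdiam (q := q) p θ₀.rng :=
    le_fdiam hq (hPc p hp) (z := ⟨(a, b), hab⟩) (θ₀.maps_to ⟨x₀, hx₀⟩)
  have hDm : ∀ m : L, c ≤ fdiam (q := q) p m ∧ d ≤ fdiam (q := q) p m := fun m =>
    ⟨le_of_le_of_eq hDc (hDconst θ₀.rng m), le_of_le_of_eq hDd (hDconst θ₀.src m)⟩
  -- pair controls
  obtain ⟨A₁, B₁, hA₁, hB₁, haA₁, hbB₁, ctrl₁⟩ := pair_control (hPc p hp) hab hδ
  obtain ⟨A₂, A₃, hA₂, hA₃, haA₂, haA₃, ctrl₂⟩ := pair_control (hPc p hp) (rfl : q a = q a) hδ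
  obtain ⟨B₂, B₃, hB₂, hB₃, hbB₂, hbB₃, ctrl₃⟩ := pair_control (hPc p hp) (rfl : q b = q b) hδ
  obtain ⟨U₁, U₂, hU₁, hU₂, hx₀U₁, hy₀U₂, ctrlU⟩ :=
    pair_control (hPc p hp) (hx₀.trans hy₀.symm) hδ
  set Bx : Set K := A₁ ∩ A₂ ∩ A₃ with hBxdef
  set By : Set K := B₁ ∩ B₂ ∩ B₃ with hBydef
  have haBx : a ∈ Bx := ⟨⟨haA₁, haA₂⟩, haA₃⟩
  have hbBy : b ∈ By := ⟨⟨hbB₁, hbB₂⟩, hbB₃⟩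
  have hBxo : IsOpen Bx := (hA₁.inter hA₂).inter hA₃
  have hByo : IsOpen By := (hB₁.inter hB₂).inter hB₃
  have ctrlXY : ∀ u v : K, u ∈ Bx → v ∈ By → ∀ h : q u = q v, |p ⟨(u, v), h⟩ - c| < δ :=
    fun u v hu hv h => ctrl₁ u v hu.1.1 hv.1.1 h
  have ctrlX : ∀ u v : K, u ∈ Bx → v ∈ Bx → ∀ h : q u = q v, p ⟨(u, v), h⟩ < δ := by
    intro u v hu hv h
    have := ctrl₂ u v hu.1.2 hv.2 h
    rw [hPr p hp a, sub_zero] at this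
    exact lt_of_le_of_lt (le_abs_self _) this
  have ctrlY : ∀ u v : K, u ∈ By → v ∈ By → ∀ h : q u = q v, p ⟨(u, v), h⟩ < δ := by
    intro u v hu hv h
    have := ctrl₃ u v hu.1.2 hv.2 h
    rw [hPr p hp b, sub_zero] at this
    exact lt_of_le_of_lt (le_abs_self _) this
  -- neighbourhoods of x₀, y₀
  have hpreX : IsOpen (θ₀.toFun ⁻¹' Bx) := θ₀.continuous_toFun.isOpen_preimage _ hBxo
  rw [isOpen_induced_iff] at hpreX
  obtain ⟨Vx, hVx, hVxeq⟩ := hpreX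
  have hx₀Vx : x₀ ∈ Vx := by
    have h' : (⟨x₀, hx₀⟩ : {x : K // q x = θ₀.src}) ∈ θ₀.toFun ⁻¹' Bx := haBx
    rw [← hVxeq] at h'; exact h'
  have hpreY : IsOpen (θ₀.toFun ⁻¹' By) := θ₀.continuous_toFun.isOpen_preimage _ hByo
  rw [isOpen_induced_iff] at hpreY
  obtain ⟨Vy, hVy, hVyeq⟩ := hpreY
  have hy₀Vy : y₀ ∈ Vy := by
    have h' : (⟨y₀, hy₀⟩ : {x : K // q x = θ₀.src}) ∈ θ₀.toFun ⁻¹' By := hbBy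
    rw [← hVyeq] at h'; exact h'
  obtain ⟨Cx, ⟨hCxmem, hCxcl⟩, hCxsub⟩ := (closed_nhds_basis x₀).mem_iff.mp
    ((hVx.inter hU₁).mem_nhds ⟨hx₀Vx, hx₀U₁⟩)
  obtain ⟨Cy, ⟨hCymem, hCycl⟩, hCysub⟩ := (closed_nhds_basis y₀).mem_iff.mp
    ((hVy.inter hU₂).mem_nhds ⟨hy₀Vy, hy₀U₂⟩)
  set Ux : Set K := interior Cx with hUxdef
  set Uy : Set K := interior Cy with hUydef
  have hx₀Ux : x₀ ∈ Ux := mem_interior_iff_mem_nhds.mpr hCxmem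
  have hy₀Uy : y₀ ∈ Uy := mem_interior_iff_mem_nhds.mpr hCymem
  -- gadget compacts
  set Gx : Set K := Cx ∪ q ⁻¹' ((q '' Ux)ᶜ) with hGxdef
  set Gy : Set K := Cy ∪ q ⁻¹' ((q '' Uy)ᶜ) with hGydef
  have hGxcpt : IsCompact Gx :=
    (hCxcl.union (((hqo _ isOpen_interior).isClosed_compl).preimage hq)).isCompact
  have hGycpt : IsCompact Gy :=
    (hCycl.union (((hqo _ isOpen_interior).isClosed_compl).preimage hq)).isCompact
  refine ⟨Wset q Gx Bx ∩ Wset q Gy By, ?_, (isOpen_Wset hGxcpt hBxo).inter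
    (isOpen_Wset hGycpt hByo), ?_, ?_⟩
  · -- the neighbourhood avoids Iso
    rintro ψ ⟨hψx, hψy⟩ hψIso
    have hψIso' : ψ ∈ Iso q P := hψIso
    by_cases hmx : ψ.src ∈ q '' Ux
    · by_cases hmy : ψ.src ∈ q '' Uy
      · -- near case
        obtain ⟨u, huUx, hqu⟩ := hmx
        obtain ⟨v, hvUy, hqv⟩ := hmy
        have hzu : ψ.toFun ⟨u, hqu⟩ ∈ Bx := hψx ⟨u, hqu⟩ (Or.inl (interior_subset huUx))
        have hzv : ψ.toFun ⟨v, hqv⟩ ∈ By := hψy ⟨v, hqv⟩ (Or.inl (interior_subset hvUy))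
        have e1 := ctrlXY _ _ hzu hzv
          ((ψ.maps_to ⟨u, hqu⟩).trans (ψ.maps_to ⟨v, hqv⟩).symm)
        have e2 := hψIso' p hp u v hqu hqv
        have e3 := ctrlU u v (hCxsub (interior_subset huUx)).2
          (hCysub (interior_subset hvUy)).2 (hqu.trans hqv.symm)
        rw [e2] at e1
        have e1' := abs_lt.mp e1
        have e3' := abs_lt.mp e3
        have habs : |c - d| < 2 * δ := by
          rw [abs_lt]; constructor <;> linarith
        linarith [habs, h6, hδ]
      · -- whole fiber of ψ.src goes into By
        have hall : ∀ u : {x : K // q x = ψ.src}, ψ.toFun u ∈ By := by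
          intro u
          refine hψy u (Or.inr ?_)
          intro hmem
          exact hmy (by rw [← u.2]; exact hmem)
        have hdiam : fdiam (q := q) p ψ.src ≤ δ := by
          refine fdiam_le hqs ?_
          rintro ⟨⟨x, y⟩, hxy⟩ hz
          have hzx : q x = ψ.src := hz
          have hzy : q y = ψ.src := hxy.symm.trans hz
          have hsmall := ctrlY _ _ (hall ⟨x, hzx⟩) (hall ⟨y, hzy⟩)
            ((ψ.maps_to ⟨x, hzx⟩).trans (ψ.maps_to ⟨y, hzy⟩).symm)
          have e2 := hψIso' p hp x y hzx hzy
          rw [e2] at hsmall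
          exact le_of_lt hsmall
        obtain ⟨hc', hd'⟩ := hDm ψ.src
        have hc0 : 0 ≤ c := hP0 p hp _
        have hd0 : 0 ≤ d := hP0 p hp _
        have : |c - d| ≤ δ := by
          rw [abs_le]; constructor <;> linarith
        linarith [h6, hδ]
    · -- whole fiber of ψ.src goes into Bx
      have hall : ∀ u : {x : K // q x = ψ.src}, ψ.toFun u ∈ Bx := by
        intro u
        refine hψx u (Or.inr ?_)
        intro hmem
        exact hmx (by rw [← u.2]; exact hmem)
      have hdiam : fdiam (q := q) p ψ.src ≤ δ := by
        refine fdiam_le hqs ?_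
        rintro ⟨⟨x, y⟩, hxy⟩ hz
        have hzx : q x = ψ.src := hz
        have hzy : q y = ψ.src := hxy.symm.trans hz
        have hsmall := ctrlX _ _ (hall ⟨x, hzx⟩) (hall ⟨y, hzy⟩)
          ((ψ.maps_to ⟨x, hzx⟩).trans (ψ.maps_to ⟨y, hzy⟩).symm)
        have e2 := hψIso' p hp x y hzx hzy
        rw [e2] at hsmall
        exact le_of_lt hsmall
      obtain ⟨hc', hd'⟩ := hDm ψ.src
      have hc0 : 0 ≤ c := hP0 p hp _
      have hd0 : 0 ≤ d := hP0 p hp _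
      have : |c - d| ≤ δ := by
        rw [abs_le]; constructor <;> linarith
      linarith [h6, hδ]
  · -- θ₀ belongs to the first subbasic set
    intro u hu
    rcases hu with hu | hu
    · have h' : u ∈ θ₀.toFun ⁻¹' Bx := by
        rw [← hVxeq]
        exact (hCxsub hu).1
      exact h'
    · exact absurd (show θ₀.src ∈ q '' Ux from ⟨x₀, hx₀Ux, hx₀⟩) (by
        have h' : q (u : K) ∈ (q '' Ux)ᶜ := hu
        rw [u.2] at h'
        exact fun hc => h' hc)
  · -- θ₀ belongs to the second subbasic set
    intro u hu
    rcases hu with hu | hu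
    · have h' : u ∈ θ₀.toFun ⁻¹' By := by
        rw [← hVyeq]
        exact (hCysub hu).1
      exact h'
    · exact absurd (show θ₀.src ∈ q '' Uy from ⟨y₀, hy₀Uy, hy₀⟩) (by
        have h' : q (u : K) ∈ (q '' Uy)ᶜ := hu
        rw [u.2] at h'
        exact fun hc => h' hc)

end IsoSec

end EK

namespace EK

section CptSec

variable {G K L : Type} [Group G] [TopologicalSpace G]
  [TopologicalSpace K] [CompactSpace K] [T2Space K] [Nonempty K]
  [TopologicalSpace L] [CompactSpace L] [T2Space L]
  [MulAction G K] [ContinuousSMul G K] [MulAction G L] [ContinuousSMul G L]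

variable {q : K → L}
variable {P : Set ({z : K × K // q z.1 = q z.2} → ℝ)}

/-- `𝓝` in the fibered compact-open topology as an infimum over subbasic sets. -/
lemma nhds_FM (θ : FiberMap q q) :
    (𝓝 θ : Filter (FiberMap q q)) = ⨅ s ∈ {s | θ ∈ s ∧ s ∈
      {W | ∃ (C : Set K) (O : Set K), IsCompact C ∧ IsOpen O ∧
        W = {θ' : FiberMap q q | ∀ x : {x : K // q x = θ'.src},
          (x : K) ∈ C → θ'.toFun x ∈ O}}}, 𝓟 s :=
  TopologicalSpace.nhds_generateFrom

lemma Iso_isCompact (hq : Continuous q) (hqs : Function.Surjective q) (hqo : IsOpenMap q)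
    (hPc : ∀ p ∈ P, Continuous p)
    (hP0 : ∀ p ∈ P, ∀ z, 0 ≤ p z)
    (hPr : ∀ p ∈ P, ∀ x : K, p ⟨(x, x), rfl⟩ = 0)
    (hPt : ∀ p ∈ P, ∀ x y z : K, ∀ (hxy : q x = q y) (hyz : q y = q z),
      p ⟨(x, z), hxy.trans hyz⟩ ≤ p ⟨(x, y), hxy⟩ + p ⟨(y, z), hyz⟩)
    (hPg : ∀ l : L, (inferInstance : TopologicalSpace {x : K // q x = l}) =
      TopologicalSpace.generateFrom (Balls q P l)) :
    IsCompact (Iso q P) := by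
  rw [isCompact_iff_ultrafilter_le_nhds]
  intro 𝒰 h𝒰
  rw [le_principal_iff] at h𝒰
  -- limits of sources and ranges
  obtain ⟨ls, -, hls⟩ := isCompact_univ.ultrafilter_le_nhds
    (𝒰.map (fun θ : FiberMap q q => θ.src)) (le_principal_iff.mpr univ_mem)
  obtain ⟨rs, -, hrs⟩ := isCompact_univ.ultrafilter_le_nhds
    (𝒰.map (fun θ : FiberMap q q => θ.rng)) (le_principal_iff.mpr univ_mem)
  rw [Ultrafilter.coe_map] at hls hrs
  have hsrc : Tendsto (fun θ : FiberMap q q => θ.src) 𝒰 (𝓝 ls) := hls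
  have hrng : Tendsto (fun θ : FiberMap q q => θ.rng) 𝒰 (𝓝 rs) := hrs
  -- pointwise limits along approximating ultrafilters
  have key : ∀ u : {x : K // q x = ls}, ∃ (V : Ultrafilter (Dom q)) (z : K),
      Ultrafilter.map (fun w : Dom q => w.1.1) V = 𝒰 ∧
      Tendsto (fun w : Dom q => w.1.2) V (𝓝 (u : K)) ∧
      Tendsto (ev (q := q)) V (𝓝 z) := by
    intro u
    obtain ⟨V, hV1, hV2⟩ := exists_approx_ultrafilter hqo 𝒰 hsrc u.2
    obtain ⟨z, -, hz⟩ := isCompact_univ.ultrafilter_le_nhds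
      (V.map (ev (q := q))) (le_principal_iff.mpr univ_mem)
    rw [Ultrafilter.coe_map] at hz
    exact ⟨V, z, hV1, hV2, hz⟩
  choose V zf hV1 hV2 hV3 using key
  -- the limit map lands in the fiber over rs
  have hTπ : ∀ u, Tendsto (fun w : Dom q => w.1.1) (V u) (𝒰 : Filter (FiberMap q q)) := by
    intro u
    have h' : (map (fun w : Dom q => w.1.1) (V u : Filter (Dom q))) =
        (𝒰 : Filter (FiberMap q q)) := by
      rw [← Ultrafilter.coe_map, hV1 u]
    exact le_of_eq h'
  have hmaps : ∀ u, q (zf u) = rs := by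
    intro u
    have t1 : Tendsto (fun w : Dom q => q (ev w)) (V u) (𝓝 (q (zf u))) :=
      (hq.tendsto _).comp (hV3 u)
    have heval : (fun w : Dom q => q (ev w)) =
        (fun θ : FiberMap q q => θ.rng) ∘ (fun w : Dom q => w.1.1) := by
      funext w
      exact w.1.1.maps_to _
    have t2 : Tendsto (fun w : Dom q => q (ev w)) (V u) (𝓝 rs) := by
      rw [heval]
      exact hrng.comp (hTπ u)
    exact tendsto_nhds_unique t1 t2
  -- the limit map is a P-isometry
  have hIso : ∀ p ∈ P, ∀ u v : {x : K // q x = ls},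
      p ⟨(zf u, zf v), (hmaps u).trans (hmaps v).symm⟩ =
      p ⟨((u : K), (v : K)), u.2.trans v.2.symm⟩ := by
    intro p hp u v
    have habs : ∀ ε : ℝ, 0 < ε →
        |p ⟨(zf u, zf v), (hmaps u).trans (hmaps v).symm⟩ -
          p ⟨((u : K), (v : K)), u.2.trans v.2.symm⟩| < 2 * ε := by
      intro ε hε
      obtain ⟨B₁, B₂, hB₁, hB₂, hz1, hz2, ctrlB⟩ :=
        pair_control (hPc p hp) ((hmaps u).trans (hmaps v).symm) hε
      obtain ⟨U₁, U₂, hU₁, hU₂, hu1, hu2, ctrlU⟩ :=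
        pair_control (hPc p hp) (u.2.trans v.2.symm) hε
      have hT₁ : {w : Dom q | w.1.2 ∈ U₁ ∧ ev w ∈ B₁} ∈ V u := by
        have m1 : (fun w : Dom q => w.1.2) ⁻¹' U₁ ∈ V u := (hV2 u) (hU₁.mem_nhds hu1)
        have m2 : (ev (q := q)) ⁻¹' B₁ ∈ V u := (hV3 u) (hB₁.mem_nhds hz1)
        exact inter_mem m1 m2
      have hT₂ : {w : Dom q | w.1.2 ∈ U₂ ∧ ev w ∈ B₂} ∈ V v := by
        have m1 : (fun w : Dom q => w.1.2) ⁻¹' U₂ ∈ V v := (hV2 v) (hU₂.mem_nhds hu2)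
        have m2 : (ev (q := q)) ⁻¹' B₂ ∈ V v := (hV3 v) (hB₂.mem_nhds hz2)
        exact inter_mem m1 m2
      have hS₁ : (fun w : Dom q => w.1.1) '' {w : Dom q | w.1.2 ∈ U₁ ∧ ev w ∈ B₁} ∈ 𝒰 := by
        rw [← hV1 u, Ultrafilter.mem_map]
        exact mem_of_superset hT₁ (subset_preimage_image _ _)
      have hS₂ : (fun w : Dom q => w.1.1) '' {w : Dom q | w.1.2 ∈ U₂ ∧ ev w ∈ B₂} ∈ 𝒰 := by
        rw [← hV1 v, Ultrafilter.mem_map]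
        exact mem_of_superset hT₂ (subset_preimage_image _ _)
      obtain ⟨θ, hθ⟩ := Ultrafilter.nonempty_of_mem (inter_mem (inter_mem hS₁ hS₂) h𝒰)
      obtain ⟨⟨hθ1, hθ2⟩, hθIso⟩ := hθ
      obtain ⟨w₁, hw₁, hw₁π⟩ := hθ1
      obtain ⟨w₂, hw₂, hw₂π⟩ := hθ2
      obtain ⟨hu₁U, hevB₁⟩ := hw₁
      obtain ⟨hu₂U, hevB₂⟩ := hw₂
      have hq₁ : q w₁.1.2 = θ.src := hw₁π ▸ w₁.2
      have hq₂ : q w₂.1.2 = θ.src := hw₂π ▸ w₂.2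
      have hev₁ : ev w₁ = θ.toFun ⟨w₁.1.2, hq₁⟩ := ev_congr w₁ hw₁π
      have hev₂ : ev w₂ = θ.toFun ⟨w₂.1.2, hq₂⟩ := ev_congr w₂ hw₂π
      have hqq : q (ev w₁) = q (ev w₂) := by
        rw [hev₁, hev₂]
        exact (θ.maps_to _).trans (θ.maps_to _).symm
      have e1 := ctrlB _ _ hevB₁ hevB₂ hqq
      have e2 : p ⟨(ev w₁, ev w₂), hqq⟩ = p ⟨(w₁.1.2, w₂.1.2), hq₁.trans hq₂.symm⟩ :=
        (p_congr hev₁ hev₂ _ _).trans (hθIso p hp w₁.1.2 w₂.1.2 hq₁ hq₂)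
      have e3 := ctrlU w₁.1.2 w₂.1.2 hu₁U hu₂U (hq₁.trans hq₂.symm)
      rw [e2] at e1
      have e1' := abs_lt.mp e1
      have e3' := abs_lt.mp e3
      rw [abs_lt]
      constructor <;> linarith
    by_contra hne
    have hpos : 0 < |p ⟨(zf u, zf v), (hmaps u).trans (hmaps v).symm⟩ -
      p ⟨((u : K), (v : K)), u.2.trans v.2.symm⟩| := abs_pos.mpr (sub_ne_zero.mpr hne)
    have := habs _ (half_pos hpos)
    linarith
  -- continuity of the limit map
  have hcont : Continuous (fun u : {x : K // q x = ls} => zf u) := by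
    have hζ : Continuous (fun u : {x : K // q x = ls} =>
        (⟨zf u, hmaps u⟩ : {x : K // q x = rs})) := by
      rw [continuous_iff_continuousAt]
      intro u₀
      rw [ContinuousAt, tendsto_def]
      intro s hs
      rw [mem_nhds_iff] at hs
      obtain ⟨O, hOs, hO, hζO⟩ := hs
      obtain ⟨T, hT, hTsub⟩ := exists_balls_subset hPg hO hζO
      have hball : ∀ B ∈ T, (fun u : {x : K // q x = ls} =>
          (⟨zf u, hmaps u⟩ : {x : K // q x = rs})) ⁻¹' B ∈ 𝓝 u₀ := by
        intro B hB
        obtain ⟨hBballs, hζ₀B⟩ := hT B hB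
        obtain ⟨p, hp, x₀, ε, hε, rfl⟩ := hBballs
        set ρ : ℝ := p ⟨((x₀ : K), zf u₀), x₀.2.trans (hmaps u₀).symm⟩ with hρ
        have hρε : ρ < ε := hζ₀B
        have hball' : {u : {x : K // q x = ls} |
            p ⟨((u₀ : K), (u : K)), u₀.2.trans u.2.symm⟩ < ε - ρ} ∈ Balls q P ls :=
          ⟨p, hp, u₀, ε - ρ, by linarith, rfl⟩
        have hmem₀ : u₀ ∈ {u : {x : K // q x = ls} |
            p ⟨((u₀ : K), (u : K)), u₀.2.trans u.2.symm⟩ < ε - ρ} := by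
          show p ⟨((u₀ : K), (u₀ : K)), _⟩ < ε - ρ
          have : p ⟨((u₀ : K), (u₀ : K)), u₀.2.trans u₀.2.symm⟩ = 0 := hPr p hp _
          rw [this]; linarith
        refine mem_of_superset ((isOpen_of_generateBalls hPg hball').mem_nhds hmem₀) ?_
        intro u hu
        have hu' : p ⟨((u₀ : K), (u : K)), u₀.2.trans u.2.symm⟩ < ε - ρ := hu
        have hiso := hIso p hp u₀ u
        have htri := hPt p hp (x₀ : K) (zf u₀) (zf u)
          (x₀.2.trans (hmaps u₀).symm) ((hmaps u₀).trans (hmaps u).symm)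
        show p ⟨((x₀ : K), zf u), x₀.2.trans (hmaps u).symm⟩ < ε
        calc p ⟨((x₀ : K), zf u), x₀.2.trans (hmaps u).symm⟩
            = p ⟨((x₀ : K), zf u),
                (x₀.2.trans (hmaps u₀).symm).trans ((hmaps u₀).trans (hmaps u).symm)⟩ := rfl
          _ ≤ p ⟨((x₀ : K), zf u₀), x₀.2.trans (hmaps u₀).symm⟩ +
                p ⟨(zf u₀, zf u), (hmaps u₀).trans (hmaps u).symm⟩ := htri
          _ = ρ + p ⟨((u₀ : K), (u : K)), u₀.2.trans u.2.symm⟩ := by rw [hiso]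
          _ < ρ + (ε - ρ) := by linarith
          _ = ε := by ring
      have : (⋂ B ∈ T, ((fun u : {x : K // q x = ls} =>
          (⟨zf u, hmaps u⟩ : {x : K // q x = rs})) ⁻¹' B)) ∈ 𝓝 u₀ :=
        (Filter.biInter_finset_mem T).mpr hball
      refine mem_of_superset this ?_
      intro u hu
      refine hOs (hTsub ?_)
      rw [mem_iInter₂] at hu ⊢
      exact fun B hB => hu B hB
    exact continuous_subtype_val.comp hζ
  -- assemble the limit fiber map
  set θstar : FiberMap q q :=
    ⟨ls, rs, fun u => zf u, hmaps, hcont⟩ with hθstar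
  refine ⟨θstar, ?_, ?_⟩
  · -- θstar is a P-isometry
    intro p hp x y hx hy
    exact hIso p hp ⟨x, hx⟩ ⟨y, hy⟩
  · -- convergence
    rw [nhds_FM]
    refine le_iInf₂ ?_
    rintro s ⟨hθs, C, O, hC, hO, rfl⟩
    rw [le_principal_iff]
    by_contra hWnot
    have hWc : {θ' : FiberMap q q | ∀ x : {x : K // q x = θ'.src},
        (x : K) ∈ C → θ'.toFun x ∈ O}ᶜ ∈ 𝒰 := Ultrafilter.compl_mem_iff_notMem.mpr hWnot
    -- selection of witnesses
    have hsel : ∀ θ : FiberMap q q, ∃ w : Dom q, w.1.1 = θ ∧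
        (θ ∉ {θ' : FiberMap q q | ∀ x : {x : K // q x = θ'.src},
          (x : K) ∈ C → θ'.toFun x ∈ O} → (w.1.2 ∈ C ∧ ev w ∉ O)) := by
      intro θ
      by_cases h : θ ∈ {θ' : FiberMap q q | ∀ x : {x : K // q x = θ'.src},
          (x : K) ∈ C → θ'.toFun x ∈ O}
      · obtain ⟨x, hx⟩ := hqs θ.src
        exact ⟨⟨(θ, x), hx⟩, rfl, fun hc => (hc h).elim⟩
      · have h' : ¬ ∀ x : {x : K // q x = θ.src}, (x : K) ∈ C → θ.toFun x ∈ O := h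
        push_neg at h'
        obtain ⟨x, hxC, hxO⟩ := h'
        exact ⟨⟨(θ, (x : K)), x.2⟩, rfl, fun _ => ⟨hxC, hxO⟩⟩
    choose sel hsel1 hsel2 using hsel
    set 𝒲 : Ultrafilter (Dom q) := 𝒰.map sel with h𝒲
    have hπ𝒲 : Ultrafilter.map (fun w : Dom q => w.1.1) 𝒲 = 𝒰 := by
      apply Ultrafilter.coe_injective
      rw [Ultrafilter.coe_map, h𝒲, Ultrafilter.coe_map, Filter.map_map]
      have : ((fun w : Dom q => w.1.1) ∘ sel) = id := funext fun θ => hsel1 θ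
      rw [this, Filter.map_id]
    have hTπ𝒲 : Tendsto (fun w : Dom q => w.1.1) 𝒲 (𝒰 : Filter (FiberMap q q)) := by
      have h' : (map (fun w : Dom q => w.1.1) (𝒲 : Filter (Dom q))) =
          (𝒰 : Filter (FiberMap q q)) := by
        rw [← Ultrafilter.coe_map, hπ𝒲]
      exact le_of_eq h'
    have hA : {w : Dom q | w.1.2 ∈ C ∧ ev w ∉ O} ∈ 𝒲 := by
      rw [h𝒲, Ultrafilter.mem_map]
      refine mem_of_superset hWc ?_
      intro θ hθ
      exact hsel2 θ hθ
    -- limits along 𝒲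
    obtain ⟨xbar, -, hxbar⟩ := isCompact_univ.ultrafilter_le_nhds
      (𝒲.map (fun w : Dom q => w.1.2)) (le_principal_iff.mpr univ_mem)
    obtain ⟨zbar, -, hzbar⟩ := isCompact_univ.ultrafilter_le_nhds
      (𝒲.map (ev (q := q))) (le_principal_iff.mpr univ_mem)
    rw [Ultrafilter.coe_map] at hxbar hzbar
    have hxt : Tendsto (fun w : Dom q => w.1.2) 𝒲 (𝓝 xbar) := hxbar
    have hzt : Tendsto (ev (q := q)) 𝒲 (𝓝 zbar) := hzbar
    have hxbarC : xbar ∈ C := by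
      rw [← hC.isClosed.closure_eq]
      rw [mem_closure_iff_ultrafilter]
      refine ⟨𝒲.map (fun w : Dom q => w.1.2), ?_, hxbar⟩
      rw [Ultrafilter.mem_map]
      exact mem_of_superset hA (fun w hw => hw.1)
    have hzbarO : zbar ∉ O := by
      have : zbar ∈ Oᶜ := by
        rw [← (hO.isClosed_compl).closure_eq]
        rw [mem_closure_iff_ultrafilter]
        refine ⟨𝒲.map (ev (q := q)), ?_, hzbar⟩
        rw [Ultrafilter.mem_map]
        exact mem_of_superset hA (fun w hw => hw.2)
      exact this
    have hqxbar : q xbar = ls := by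
      have t1 : Tendsto (fun w : Dom q => q w.1.2) 𝒲 (𝓝 (q xbar)) := (hq.tendsto _).comp hxt
      have heval : (fun w : Dom q => q w.1.2) =
          (fun θ : FiberMap q q => θ.src) ∘ (fun w : Dom q => w.1.1) := funext fun w => w.2
      have t2 : Tendsto (fun w : Dom q => q w.1.2) 𝒲 (𝓝 ls) := by
        rw [heval]; exact hsrc.comp hTπ𝒲
      exact tendsto_nhds_unique t1 t2
    have hqzbar : q zbar = rs := by
      have t1 : Tendsto (fun w : Dom q => q (ev w)) 𝒲 (𝓝 (q zbar)) := (hq.tendsto _).comp hzt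
      have heval : (fun w : Dom q => q (ev w)) =
          (fun θ : FiberMap q q => θ.rng) ∘ (fun w : Dom q => w.1.1) :=
        funext fun w => w.1.1.maps_to _
      have t2 : Tendsto (fun w : Dom q => q (ev w)) 𝒲 (𝓝 rs) := by
        rw [heval]; exact hrng.comp hTπ𝒲
      exact tendsto_nhds_unique t1 t2
    -- the two candidate limits agree
    set ub : {x : K // q x = ls} := ⟨xbar, hqxbar⟩ with hub
    have hzero : ∀ p ∈ P, p ⟨(zbar, zf ub), hqzbar.trans (hmaps ub).symm⟩ = 0 := by
      intro p hp
      have hnn := hP0 p hp ⟨(zbar, zf ub), hqzbar.trans (hmaps ub).symm⟩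
      have hption : ∀ ε : ℝ, 0 < ε →
          p ⟨(zbar, zf ub), hqzbar.trans (hmaps ub).symm⟩ < 2 * ε := by
        intro ε hε
        obtain ⟨B₁, B₂, hB₁, hB₂, hz1, hz2, ctrlB⟩ :=
          pair_control (hPc p hp) (hqzbar.trans (hmaps ub).symm) hε
        obtain ⟨U₁, U₂, hU₁, hU₂, hu1, hu2, ctrlU⟩ :=
          pair_control (hPc p hp) (rfl : q xbar = q xbar) hε
        have hT₁ : {w : Dom q | w.1.2 ∈ U₁ ∧ ev w ∈ B₁} ∈ 𝒲 :=
          inter_mem (hxt (hU₁.mem_nhds hu1)) (hzt (hB₁.mem_nhds hz1))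
        have hT₂ : {w : Dom q | w.1.2 ∈ U₂ ∧ ev w ∈ B₂} ∈ V ub :=
          inter_mem ((hV2 ub) (hU₂.mem_nhds hu2)) ((hV3 ub) (hB₂.mem_nhds hz2))
        have hS₁ : (fun w : Dom q => w.1.1) '' {w : Dom q | w.1.2 ∈ U₁ ∧ ev w ∈ B₁} ∈ 𝒰 := by
          rw [← hπ𝒲, Ultrafilter.mem_map]
          exact mem_of_superset hT₁ (subset_preimage_image _ _)
        have hS₂ : (fun w : Dom q => w.1.1) '' {w : Dom q | w.1.2 ∈ U₂ ∧ ev w ∈ B₂} ∈ 𝒰 := by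
          rw [← hV1 ub, Ultrafilter.mem_map]
          exact mem_of_superset hT₂ (subset_preimage_image _ _)
        obtain ⟨θ, hθ⟩ := Ultrafilter.nonempty_of_mem (inter_mem (inter_mem hS₁ hS₂) h𝒰)
        obtain ⟨⟨hθ1, hθ2⟩, hθIso⟩ := hθ
        obtain ⟨w₁, hw₁, hw₁π⟩ := hθ1
        obtain ⟨w₂, hw₂, hw₂π⟩ := hθ2
        obtain ⟨hu₁U, hevB₁⟩ := hw₁
        obtain ⟨hu₂U, hevB₂⟩ := hw₂
        have hq₁ : q w₁.1.2 = θ.src := hw₁π ▸ w₁.2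
        have hq₂ : q w₂.1.2 = θ.src := hw₂π ▸ w₂.2
        have hev₁ : ev w₁ = θ.toFun ⟨w₁.1.2, hq₁⟩ := ev_congr w₁ hw₁π
        have hev₂ : ev w₂ = θ.toFun ⟨w₂.1.2, hq₂⟩ := ev_congr w₂ hw₂π
        have hqq : q (ev w₁) = q (ev w₂) := by
          rw [hev₁, hev₂]
          exact (θ.maps_to _).trans (θ.maps_to _).symm
        have e1 := ctrlB _ _ hevB₁ hevB₂ hqq
        have e2 : p ⟨(ev w₁, ev w₂), hqq⟩ = p ⟨(w₁.1.2, w₂.1.2), hq₁.trans hq₂.symm⟩ :=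
          (p_congr hev₁ hev₂ _ _).trans (hθIso p hp w₁.1.2 w₂.1.2 hq₁ hq₂)
        have e3 := ctrlU w₁.1.2 w₂.1.2 hu₁U hu₂U (hq₁.trans hq₂.symm)
        rw [e2] at e1
        rw [hPr p hp xbar, sub_zero] at e3
        have e1' := abs_lt.mp e1
        have e3' : p ⟨(w₁.1.2, w₂.1.2), hq₁.trans hq₂.symm⟩ < ε :=
          lt_of_le_of_lt (le_abs_self _) e3
        linarith
      by_contra hne0
      have hpos : 0 < p ⟨(zbar, zf ub), hqzbar.trans (hmaps ub).symm⟩ :=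
        lt_of_le_of_ne hnn (Ne.symm hne0)
      have := hption (p ⟨(zbar, zf ub), hqzbar.trans (hmaps ub).symm⟩ / 2) (by positivity)
      linarith
    have hsep : (⟨zbar, hqzbar⟩ : {x : K // q x = rs}) = ⟨zf ub, hmaps ub⟩ :=
      p_separation hPt hPg _ _ hzero
    have hzbarO' : zbar ∈ O := by
      have : θstar.toFun ub ∈ O := hθs ub hxbarC
      have hz : zf ub = zbar := congrArg Subtype.val hsep.symm
      rw [show θstar.toFun ub = zf ub from rfl, hz] at this
      exact this
    exact hzbarO hzbarO'

end CptSec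

end EK

namespace EK

section FwdSec

variable {G K L : Type} [Group G] [TopologicalSpace G]
  [TopologicalSpace K] [CompactSpace K] [T2Space K] [Nonempty K]
  [TopologicalSpace L] [CompactSpace L] [T2Space L]
  [MulAction G K] [ContinuousSMul G K] [MulAction G L] [ContinuousSMul G L]

variable {q : K → L}

lemma forward (hq : Continuous q) (hqs : Function.Surjective q) (hqo : IsOpenMap q)
    (heq : ∀ (g : G) (x : K), q (g • x) = g • q x)
    (hte : TopologicallyErgodic G L)
    (hP : IsPseudoIsometricExt G q) : IsCompact (uniformEnveloping G q) := by
  obtain ⟨P, hPc, hP0, hPr, hPs, hPt, hPg, hPi⟩ := hP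
  have hPg' : ∀ l : L, (inferInstance : TopologicalSpace {x : K // q x = l}) =
      TopologicalSpace.generateFrom (Balls q P l) := hPg
  have hPi' : ∀ p ∈ P, ∀ (g : G) (x y : K), ∀ (h : q x = q y) (h' : q (g • x) = q (g • y)),
      p ⟨(g • x, g • y), h'⟩ = p ⟨(x, y), h⟩ := fun p hp g x y h h' => hPi p hp g x y h h'
  exact (Iso_isCompact hq hqs hqo hPc hP0 hPr hPt hPg').of_isClosed_subset Eu_isClosed
    (Eu_subset (transitionSet_subset_Iso heq hPi') Iso_sgpd
      (Iso_isClosed hq hqs hqo heq hte hPc hP0 hPr hPi'))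

end FwdSec

end EK

namespace EK

section InvSec

variable {G K L : Type} [Group G] [TopologicalSpace G]
  [TopologicalSpace K] [CompactSpace K] [T2Space K] [Nonempty K]
  [TopologicalSpace L] [CompactSpace L] [T2Space L]
  [MulAction G K] [ContinuousSMul G K] [MulAction G L] [ContinuousSMul G L]

variable {q : K → L}

lemma toFun_congr (θ : FiberMap q q) {x y : K} (hx : q x = θ.src) (hy : q y = θ.src)
    (hxy : x = y) : θ.toFun ⟨x, hx⟩ = θ.toFun ⟨y, hy⟩ := by subst hxy; rfl

/-- `σ` is a left inverse of `θ`. -/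
def LeftInv (q : K → L) (θ σ : FiberMap q q) : Prop :=
  σ.src = θ.rng ∧ σ.rng = θ.src ∧
  ∀ (x : K) (hx : q x = θ.src) (h2 : q (θ.toFun ⟨x, hx⟩) = σ.src),
    σ.toFun ⟨θ.toFun ⟨x, hx⟩, h2⟩ = x

/-- Elements of `E_u(q)` possessing a left inverse in `E_u(q)`. -/
def Einv (G : Type) [Group G] [MulAction G K] [MulAction G L] (q : K → L) :
    Set (FiberMap q q) :=
  {θ | θ ∈ uniformEnveloping G q ∧ ∃ σ ∈ uniformEnveloping G q, LeftInv q θ σ}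

lemma tendsto_ev {𝒲 : Filter (Dom q)} {θ : FiberMap q q} {x : K} (hx : q x = θ.src)
    (h1 : Tendsto (fun w : Dom q => w.1.1) 𝒲 (𝓝 θ))
    (h2 : Tendsto (fun w : Dom q => w.1.2) 𝒲 (𝓝 x)) :
    Tendsto (ev (q := q)) 𝒲 (𝓝 (θ.toFun ⟨x, hx⟩)) := by
  have hd : Tendsto (fun w : Dom q => (w : FiberMap q q × K)) 𝒲 (𝓝 ((θ, x))) := by
    rw [nhds_prod_eq]
    exact h1.prodMk h2
  have hdsub : Tendsto (fun w : Dom q => w) 𝒲 (𝓝 (⟨(θ, x), hx⟩ : Dom q)) := by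
    rw [nhds_subtype_eq_comap, tendsto_comap_iff]
    exact hd
  exact (continuous_ev.tendsto _).comp hdsub

lemma transitionSet_subset_Einv (heq : ∀ (g : G) (x : K), q (g • x) = g • q x) :
    transitionSet G q ⊆ Einv G q := by
  rintro θ hθt
  obtain ⟨g, hr, hf⟩ := hθt
  refine ⟨transitionSet_subset_Eu ⟨g, hr, hf⟩, transFM heq g⁻¹ θ.rng,
    transFM_mem_Eu heq g⁻¹ θ.rng, rfl, ?_, ?_⟩
  · show g⁻¹ • θ.rng = θ.src
    rw [hr, inv_smul_smul]
  · intro x hx h2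
    show g⁻¹ • (θ.toFun ⟨x, hx⟩) = x
    rw [hf ⟨x, hx⟩, inv_smul_smul]

lemma Einv_sgpd : IsSubsemigroupoid (Einv G q) := by
  rintro θ ⟨hθE, σθ, hσθE, hσθs, hσθr, hσθinv⟩ η ⟨hηE, ση, hσηE, hσηs, hσηr, hσηinv⟩ h
  have hc : ση.rng = σθ.src := by
    rw [hσηr, hσθs]
    exact h.symm
  refine ⟨Eu_sgpd θ hθE η hηE h, FiberMap.comp σθ ση hc,
    Eu_sgpd ση hσηE σθ hσθE hc, ?_, ?_, ?_⟩
  · show ση.src = η.rng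
    exact hσηs
  · show σθ.rng = θ.src
    exact hσθr
  · intro x hx h2
    have hx' : q (θ.toFun ⟨x, hx⟩) = η.src := (θ.maps_to _).trans h
    have h2' : q (η.toFun ⟨θ.toFun ⟨x, hx⟩, hx'⟩) = ση.src := (η.maps_to _).trans hσηs.symm
    have hinner : ση.toFun ⟨η.toFun ⟨θ.toFun ⟨x, hx⟩, hx'⟩, h2'⟩ = θ.toFun ⟨x, hx⟩ :=
      hσηinv (θ.toFun ⟨x, hx⟩) hx' h2'
    have pfB : q (ση.toFun ⟨η.toFun ⟨θ.toFun ⟨x, hx⟩, hx'⟩, h2'⟩) = σθ.src :=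
      (ση.maps_to _).trans hc
    have pfB' : q (θ.toFun ⟨x, hx⟩) = σθ.src := (θ.maps_to _).trans hσθs.symm
    show σθ.toFun ⟨ση.toFun ⟨η.toFun ⟨θ.toFun ⟨x, hx⟩, hx'⟩, h2'⟩, pfB⟩ = x
    calc σθ.toFun ⟨ση.toFun ⟨η.toFun ⟨θ.toFun ⟨x, hx⟩, hx'⟩, h2'⟩, pfB⟩
        = σθ.toFun ⟨θ.toFun ⟨x, hx⟩, pfB'⟩ := toFun_congr σθ _ _ hinner
      _ = x := hσθinv x hx pfB'

lemma Einv_isClosed (hq : Continuous q) (hqs : Function.Surjective q) (hqo : IsOpenMap q)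
    (hE : IsCompact (uniformEnveloping G q)) : IsClosed (Einv G q) := by
  apply isClosed_of_closure_subset
  intro θ hθcl
  have hθE : θ ∈ uniformEnveloping G q := by
    have hsub : closure (Einv G q) ⊆ closure (uniformEnveloping G q) :=
      closure_mono (fun θ' hθ' => hθ'.1)
    rw [Eu_isClosed.closure_eq] at hsub
    exact hsub hθcl
  obtain ⟨𝒰, h𝒰mem, h𝒰le⟩ := mem_closure_iff_ultrafilter.mp hθcl
  -- selection of left inverses
  have hselex : ∀ θ' : FiberMap q q, ∃ σ' : FiberMap q q,
      (θ' ∈ Einv G q → σ' ∈ uniformEnveloping G q ∧ LeftInv q θ' σ') ∧ σ'.src = θ'.rng := by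
    intro θ'
    by_cases h : θ' ∈ Einv G q
    · obtain ⟨-, σ', hσ'E, hσ'inv⟩ := h
      exact ⟨σ', fun _ => ⟨hσ'E, hσ'inv⟩, hσ'inv.1⟩
    · exact ⟨idFM q θ'.rng, fun hc => (h hc).elim, rfl⟩
  choose σsel hσ1 hσ2 using hselex
  set 𝒱 : Ultrafilter (FiberMap q q) := 𝒰.map σsel with h𝒱
  have h𝒱E : uniformEnveloping G q ∈ 𝒱 := by
    rw [h𝒱, Ultrafilter.mem_map]
    exact mem_of_superset h𝒰mem (fun θ' hθ' => ((hσ1 θ' hθ').1 : _ ∈ _))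
  obtain ⟨σ, hσE, hσle⟩ := hE.ultrafilter_le_nhds 𝒱 (le_principal_iff.mpr h𝒱E)
  have hσtend : Tendsto σsel (𝒰 : Filter (FiberMap q q)) (𝓝 σ) := by
    have h' : map σsel (𝒰 : Filter (FiberMap q q)) = (𝒱 : Filter (FiberMap q q)) := by
      rw [h𝒱, Ultrafilter.coe_map]
    rw [Tendsto, h']
    exact hσle
  have hsθ : Tendsto (fun θ' : FiberMap q q => θ'.src) 𝒰 (𝓝 θ.src) :=
    ((continuous_src hq hqs).tendsto θ).mono_left h𝒰le
  have hrθ : Tendsto (fun θ' : FiberMap q q => θ'.rng) 𝒰 (𝓝 θ.rng) :=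
    ((continuous_rng hq hqs).tendsto θ).mono_left h𝒰le
  have hσsrc : σ.src = θ.rng := by
    have t1 : Tendsto (fun θ' : FiberMap q q => (σsel θ').src) 𝒰 (𝓝 σ.src) :=
      ((continuous_src hq hqs).tendsto σ).comp hσtend
    have hfun : (fun θ' : FiberMap q q => (σsel θ').src) =
        (fun θ' : FiberMap q q => θ'.rng) := funext hσ2
    rw [hfun] at t1
    exact tendsto_nhds_unique t1 hrθ
  have hσrng : σ.rng = θ.src := by
    have t1 : Tendsto (fun θ' : FiberMap q q => (σsel θ').rng) 𝒰 (𝓝 σ.rng) :=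
      ((continuous_rng hq hqs).tendsto σ).comp hσtend
    have hcongr : (fun θ' : FiberMap q q => (σsel θ').rng) =ᶠ[(𝒰 : Filter (FiberMap q q))]
        (fun θ' : FiberMap q q => θ'.src) :=
      eventuallyEq_of_mem h𝒰mem (fun θ' hθ' => ((hσ1 θ' hθ').2.2.1 : (σsel θ').rng = θ'.src))
    rw [tendsto_congr' hcongr] at t1
    exact tendsto_nhds_unique t1 hsθ
  refine ⟨hθE, σ, hσE, hσsrc, hσrng, ?_⟩
  intro x hx h2
  obtain ⟨𝒲, h𝒲π, h𝒲pt⟩ := exists_approx_ultrafilter hqo 𝒰 hsθ hx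
  have h𝒲πt : Tendsto (fun w : Dom q => w.1.1) 𝒲 (𝒰 : Filter (FiberMap q q)) := by
    have h' : map (fun w : Dom q => w.1.1) (𝒲 : Filter (Dom q)) =
        (𝒰 : Filter (FiberMap q q)) := by
      rw [← Ultrafilter.coe_map, h𝒲π]
    exact le_of_eq h'
  have h𝒲toθ : Tendsto (fun w : Dom q => w.1.1) 𝒲 (𝓝 θ) := h𝒲πt.trans h𝒰le
  have hev1 : Tendsto (ev (q := q)) 𝒲 (𝓝 (θ.toFun ⟨x, hx⟩)) := tendsto_ev hx h𝒲toθ h𝒲pt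
  -- second-level evaluation
  set F2 : Dom q → Dom q := fun w =>
    ⟨(σsel w.1.1, ev w), (w.1.1.maps_to _).trans (hσ2 w.1.1).symm⟩ with hF2
  have hπ2 : Tendsto (fun w : Dom q => (F2 w).1.1) 𝒲 (𝓝 σ) := by
    have : (fun w : Dom q => (F2 w).1.1) = σsel ∘ (fun w : Dom q => w.1.1) := rfl
    rw [this]
    exact hσtend.comp h𝒲πt
  have hpt2 : Tendsto (fun w : Dom q => (F2 w).1.2) 𝒲 (𝓝 (θ.toFun ⟨x, hx⟩)) := hev1
  have hev2 : Tendsto (fun w : Dom q => ev (F2 w)) 𝒲 (𝓝 (σ.toFun ⟨θ.toFun ⟨x, hx⟩, h2⟩)) := by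
    have := tendsto_ev (𝒲 := map F2 (𝒲 : Filter (Dom q))) h2
      (by rw [tendsto_map'_iff]; exact hπ2) (by rw [tendsto_map'_iff]; exact hpt2)
    rw [tendsto_map'_iff] at this
    exact this
  have hcongr : (fun w : Dom q => ev (F2 w)) =ᶠ[(𝒲 : Filter (Dom q))]
      (fun w : Dom q => w.1.2) := by
    have hmem : (fun w : Dom q => w.1.1) ⁻¹' (Einv G q) ∈ 𝒲 := by
      have : Einv G q ∈ Ultrafilter.map (fun w : Dom q => w.1.1) 𝒲 := by
        rw [h𝒲π]; exact h𝒰mem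
      rwa [Ultrafilter.mem_map] at this
    refine eventuallyEq_of_mem hmem ?_
    intro w hw
    have hLI := (hσ1 w.1.1 hw).2
    show (σsel w.1.1).toFun ⟨ev w, (w.1.1.maps_to _).trans (hσ2 w.1.1).symm⟩ = w.1.2
    exact hLI.2.2 w.1.2 w.2 _
  rw [tendsto_congr' hcongr] at hev2
  exact tendsto_nhds_unique hev2 h𝒲pt

lemma Eu_subset_Einv (hq : Continuous q) (hqs : Function.Surjective q) (hqo : IsOpenMap q)
    (heq : ∀ (g : G) (x : K), q (g • x) = g • q x)
    (hE : IsCompact (uniformEnveloping G q)) :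
    uniformEnveloping G q ⊆ Einv G q :=
  Eu_subset (transitionSet_subset_Einv heq) Einv_sgpd (Einv_isClosed hq hqs hqo hE)

/-- Every element of a compact `E_u(q)` has a two-sided inverse in `E_u(q)`. -/
lemma exists_inverse (hq : Continuous q) (hqs : Function.Surjective q) (hqo : IsOpenMap q)
    (heq : ∀ (g : G) (x : K), q (g • x) = g • q x)
    (hE : IsCompact (uniformEnveloping G q)) :
    ∀ θ ∈ uniformEnveloping G q, ∃ σ ∈ uniformEnveloping G q,
      σ.src = θ.rng ∧ σ.rng = θ.src ∧
      (∀ (x : K) (hx : q x = θ.src) (h2 : q (θ.toFun ⟨x, hx⟩) = σ.src),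
        σ.toFun ⟨θ.toFun ⟨x, hx⟩, h2⟩ = x) ∧
      (∀ (z : K) (hz : q z = σ.src) (h2 : q (σ.toFun ⟨z, hz⟩) = θ.src),
        θ.toFun ⟨σ.toFun ⟨z, hz⟩, h2⟩ = z) := by
  intro θ hθE
  obtain ⟨-, σ, hσE, hσs, hσr, hσinv⟩ := Eu_subset_Einv hq hqs hqo heq hE hθE
  obtain ⟨-, τ, hτE, hτs, hτr, hτinv⟩ := Eu_subset_Einv hq hqs hqo heq hE hσE
  refine ⟨σ, hσE, hσs, hσr, hσinv, ?_⟩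
  intro z hz h2
  -- u := σ z, v := θ u
  have hv : q (θ.toFun ⟨σ.toFun ⟨z, hz⟩, h2⟩) = σ.src := (θ.maps_to _).trans hσs.symm
  have hvτ : q (σ.toFun ⟨θ.toFun ⟨σ.toFun ⟨z, hz⟩, h2⟩, hv⟩) = τ.src :=
    (σ.maps_to _).trans hτs.symm
  have hzτ : q (σ.toFun ⟨z, hz⟩) = τ.src := (σ.maps_to _).trans hτs.symm
  -- σ (θ u) = u by left inverse of θ applied at u
  have h1 : σ.toFun ⟨θ.toFun ⟨σ.toFun ⟨z, hz⟩, h2⟩, hv⟩ = σ.toFun ⟨z, hz⟩ :=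
    hσinv (σ.toFun ⟨z, hz⟩) h2 hv
  -- τ (σ v) = v with v := θ u
  have h3 : τ.toFun ⟨σ.toFun ⟨θ.toFun ⟨σ.toFun ⟨z, hz⟩, h2⟩, hv⟩, hvτ⟩ =
      θ.toFun ⟨σ.toFun ⟨z, hz⟩, h2⟩ := hτinv (θ.toFun ⟨σ.toFun ⟨z, hz⟩, h2⟩) hv hvτ
  -- τ (σ z) = z
  have h4 : τ.toFun ⟨σ.toFun ⟨z, hz⟩, hzτ⟩ = z := hτinv z hz hzτ
  calc θ.toFun ⟨σ.toFun ⟨z, hz⟩, h2⟩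
      = τ.toFun ⟨σ.toFun ⟨θ.toFun ⟨σ.toFun ⟨z, hz⟩, h2⟩, hv⟩, hvτ⟩ := h3.symm
    _ = τ.toFun ⟨σ.toFun ⟨z, hz⟩, hzτ⟩ := toFun_congr τ _ _ h1
    _ = z := h4

end InvSec

end EK

namespace EK

section ReachSec

variable {G K L : Type} [Group G] [TopologicalSpace G]
  [TopologicalSpace K] [CompactSpace K] [T2Space K] [Nonempty K]
  [TopologicalSpace L] [CompactSpace L] [T2Space L]
  [MulAction G K] [ContinuousSMul G K] [MulAction G L] [ContinuousSMul G L]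

variable {q : K → L}

/-- The reachability relation of `E_u(q)` on `L`. -/
def Rrel (G : Type) [Group G] [MulAction G K] [MulAction G L] (q : K → L) : Set (L × L) :=
  {ab | ∃ θ ∈ uniformEnveloping G q, θ.src = ab.1 ∧ θ.rng = ab.2}

lemma Rrel_refl (a : L) : (a, a) ∈ Rrel G q := ⟨idFM q a, idFM_mem_Eu a, rfl, rfl⟩

lemma Rrel_orbit (heq : ∀ (g : G) (x : K), q (g • x) = g • q x) (g : G) (l : L) :
    (l, g • l) ∈ Rrel G q := ⟨transFM heq g l, transFM_mem_Eu heq g l, rfl, rfl⟩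

lemma Rrel_trans {a b c : L} (h1 : (a, b) ∈ Rrel G q) (h2 : (b, c) ∈ Rrel G q) :
    (a, c) ∈ Rrel G q := by
  obtain ⟨θ, hθE, hθs, hθr⟩ := h1
  obtain ⟨η, hηE, hηs, hηr⟩ := h2
  have h : θ.rng = η.src := hθr.trans hηs.symm
  exact ⟨FiberMap.comp η θ h, Eu_sgpd θ hθE η hηE h, hθs, hηr⟩

lemma Rrel_symm (hq : Continuous q) (hqs : Function.Surjective q) (hqo : IsOpenMap q)
    (heq : ∀ (g : G) (x : K), q (g • x) = g • q x)
    (hE : IsCompact (uniformEnveloping G q)) {a b : L} (h : (a, b) ∈ Rrel G q) :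
    (b, a) ∈ Rrel G q := by
  obtain ⟨θ, hθE, hθs, hθr⟩ := h
  obtain ⟨-, σ, hσE, hσs, hσr, -⟩ := Eu_subset_Einv hq hqs hqo heq hE hθE
  exact ⟨σ, hσE, hσs.trans hθr, hσr.trans hθs⟩

lemma Rrel_isClosed (hq : Continuous q) (hqs : Function.Surjective q)
    (hE : IsCompact (uniformEnveloping G q)) : IsClosed (Rrel G q) := by
  have himg : Rrel G q = (fun θ : FiberMap q q => (θ.src, θ.rng)) '' uniformEnveloping G q := by
    ext ab
    constructor
    · rintro ⟨θ, hθE, hθs, hθr⟩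
      exact ⟨θ, hθE, by simp only; rw [hθs, hθr]⟩
    · rintro ⟨θ, hθE, hab⟩
      exact ⟨θ, hθE, congrArg Prod.fst hab, congrArg Prod.snd hab⟩
  rw [himg]
  exact (hE.image ((continuous_src hq hqs).prodMk (continuous_rng hq hqs))).isClosed

/-- Saturation of a set under the reachability relation. -/
def Rsat (G : Type) [Group G] [MulAction G K] [MulAction G L] (q : K → L) (F : Set L) :
    Set L := {m | ∃ s ∈ F, (s, m) ∈ Rrel G q}

lemma Rsat_isClosed (hq : Continuous q) (hqs : Function.Surjective q)
    (hE : IsCompact (uniformEnveloping G q)) {F : Set L} (hF : IsClosed F) :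
    IsClosed (Rsat G q F) := by
  have himg : Rsat G q F = Prod.snd '' (Rrel G q ∩ (F ×ˢ univ)) := by
    ext m
    constructor
    · rintro ⟨s, hsF, hR⟩
      exact ⟨(s, m), ⟨hR, hsF, mem_univ _⟩, rfl⟩
    · rintro ⟨⟨s, m'⟩, ⟨hR, hsF, -⟩, rfl⟩
      exact ⟨s, hsF, hR⟩
  rw [himg]
  have hRcpt : IsCompact (Rrel G q) := by
    have himg2 : Rrel G q = (fun θ : FiberMap q q => (θ.src, θ.rng)) '' uniformEnveloping G q := by
      ext ab
      constructor
      · rintro ⟨θ, hθE, hθs, hθr⟩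
        exact ⟨θ, hθE, by simp only; rw [hθs, hθr]⟩
      · rintro ⟨θ, hθE, hab⟩
        exact ⟨θ, hθE, congrArg Prod.fst hab, congrArg Prod.snd hab⟩
    rw [himg2]
    exact hE.image ((continuous_src hq hqs).prodMk (continuous_rng hq hqs))
  exact ((hRcpt.inter_right (hF.prod isClosed_univ)).image continuous_snd).isClosed

lemma separated_classes (hq : Continuous q) (hqs : Function.Surjective q) (hqo : IsOpenMap q)
    (heq : ∀ (g : G) (x : K), q (g • x) = g • q x)
    (hE : IsCompact (uniformEnveloping G q)) {a b : L} (hab : (a, b) ∉ Rrel G q) :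
    ∃ U' V' : Set L, IsOpen U' ∧ IsOpen V' ∧ a ∈ U' ∧ b ∈ V' ∧ U' ∩ V' = ∅ ∧
      (∀ m ∈ U', ∀ m', (m, m') ∈ Rrel G q → m' ∈ U') ∧
      (∀ m ∈ V', ∀ m', (m, m') ∈ Rrel G q → m' ∈ V') := by
  set Ca : Set L := {m | (a, m) ∈ Rrel G q} with hCa
  set Cb : Set L := {m | (b, m) ∈ Rrel G q} with hCb
  have hCacl : IsClosed Ca := (Rrel_isClosed hq hqs hE).preimage
    ((Continuous.prodMk continuous_const continuous_id) : Continuous fun m : L => (a, m))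
  have hCbcl : IsClosed Cb := (Rrel_isClosed hq hqs hE).preimage
    ((Continuous.prodMk continuous_const continuous_id) : Continuous fun m : L => (b, m))
  have hdisj : Disjoint Ca Cb := by
    rw [disjoint_left]
    intro m hma hmb
    exact hab (Rrel_trans hma (Rrel_symm hq hqs hqo heq hE hmb))
  obtain ⟨U, V, hU, hV, hCaU, hCbV, hUV⟩ := NormalSpace.normal Ca Cb hCacl hCbcl hdisj
  set U' : Set L := (Rsat G q Uᶜ)ᶜ with hU'
  set V' : Set L := (Rsat G q Vᶜ)ᶜ with hV'
  have hU'o : IsOpen U' := (Rsat_isClosed hq hqs hE hU.isClosed_compl).isOpen_compl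
  have hV'o : IsOpen V' := (Rsat_isClosed hq hqs hE hV.isClosed_compl).isOpen_compl
  have hU'sub : U' ⊆ U := by
    intro m hm
    by_contra hmU
    exact hm ⟨m, hmU, Rrel_refl m⟩
  have hV'sub : V' ⊆ V := by
    intro m hm
    by_contra hmV
    exact hm ⟨m, hmV, Rrel_refl m⟩
  have hsatU : ∀ m ∈ U', ∀ m', (m, m') ∈ Rrel G q → m' ∈ U' := by
    intro m hm m' hmm' hsat
    obtain ⟨s, hsU, hsm'⟩ := hsat
    exact hm ⟨s, hsU, Rrel_trans hsm' (Rrel_symm hq hqs hqo heq hE hmm')⟩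
  have hsatV : ∀ m ∈ V', ∀ m', (m, m') ∈ Rrel G q → m' ∈ V' := by
    intro m hm m' hmm' hsat
    obtain ⟨s, hsV, hsm'⟩ := hsat
    exact hm ⟨s, hsV, Rrel_trans hsm' (Rrel_symm hq hqs hqo heq hE hmm')⟩
  have haU' : a ∈ U' := by
    intro hsat
    obtain ⟨s, hsU, hsa⟩ := hsat
    exact hsU (hCaU (Rrel_symm hq hqs hqo heq hE hsa))
  have hbV' : b ∈ V' := by
    intro hsat
    obtain ⟨s, hsV, hsb⟩ := hsat
    exact hsV (hCbV (Rrel_symm hq hqs hqo heq hE hsb))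
  refine ⟨U', V', hU'o, hV'o, haU', hbV', ?_, hsatU, hsatV⟩
  rw [← subset_empty_iff]
  intro m hm
  exact hUV.le_bot ⟨hU'sub hm.1, hV'sub hm.2⟩

/-- Reachability: for a compact `E_u(q)` over an ergodic base, every pair of points of `L`
is connected by an element of `E_u(q)`. -/
lemma reach (hq : Continuous q) (hqs : Function.Surjective q) (hqo : IsOpenMap q)
    (heq : ∀ (g : G) (x : K), q (g • x) = g • q x)
    (hte : TopologicallyErgodic G L)
    (hE : IsCompact (uniformEnveloping G q)) :
    ∀ a b : L, ∃ θ ∈ uniformEnveloping G q, θ.src = a ∧ θ.rng = b := by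
  intro a b
  by_contra hab'
  have hab : (a, b) ∉ Rrel G q := fun h => hab' h
  -- the quotient by the reachability relation
  set s : Setoid L := ⟨fun x y => (x, y) ∈ Rrel G q,
    ⟨Rrel_refl, fun h => Rrel_symm hq hqs hqo heq hE h, fun h1 h2 => Rrel_trans h1 h2⟩⟩ with hs
  haveI : CompactSpace (Quotient s) := Quotient.compactSpace
  have hopenQ : ∀ (W : Set L), IsOpen W → (∀ m ∈ W, ∀ m', (m, m') ∈ Rrel G q → m' ∈ W) →
      IsOpen (Quotient.mk s '' W) := by
    intro W hW hsat
    rw [isOpen_coinduced (f := Quotient.mk s)]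
    have hpre : (Quotient.mk s) ⁻¹' (Quotient.mk s '' W) = W := by
      ext m
      constructor
      · rintro ⟨u, huW, hum⟩
        exact hsat u huW m (Quotient.exact hum)
      · intro hm
        exact ⟨m, hm, rfl⟩
    rw [hpre]
    exact hW
  haveI hT2Q : T2Space (Quotient s) := by
    constructor
    intro x y hxy
    induction x using Quotient.ind with | _ x =>
    induction y using Quotient.ind with | _ y =>
    have hnotR : (x, y) ∉ Rrel G q := fun h => hxy (Quotient.sound h)
    obtain ⟨Ux, Vy, hUxo, hVyo, hxUx, hyVy, hUVxy, hsatUx, hsatVy⟩ :=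
      separated_classes hq hqs hqo heq hE hnotR
    refine ⟨Quotient.mk s '' Ux, Quotient.mk s '' Vy, hopenQ Ux hUxo hsatUx,
      hopenQ Vy hVyo hsatVy, ⟨x, hxUx, rfl⟩, ⟨y, hyVy, rfl⟩, ?_⟩
    rw [disjoint_left]
    rintro z ⟨u, huU, huz⟩ ⟨v, hvV, hvz⟩
    have hrel : (u, v) ∈ Rrel G q := Quotient.exact (huz.trans hvz.symm)
    have : v ∈ Ux ∩ Vy := ⟨hsatUx u huU v hrel, hvV⟩
    rw [hUVxy] at this
    exact this
  -- Urysohn separation on the quotient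
  have hne : (Quotient.mk s a) ≠ (Quotient.mk s b) := fun h => hab (Quotient.exact h)
  obtain ⟨f, hf0, hf1, -⟩ := exists_continuous_zero_one_of_isClosed
    (isClosed_singleton (x := Quotient.mk s a)) (isClosed_singleton (x := Quotient.mk s b))
    (disjoint_singleton.mpr hne)
  set F : ContinuousMap L ℂ := ⟨fun l => ((f (Quotient.mk s l) : ℝ) : ℂ),
    Complex.continuous_ofReal.comp (f.continuous.comp continuous_quotient_mk')⟩ with hF
  have hinv : ∀ (g : G) (l : L), F (g • l) = F l := by
    intro g l
    have : Quotient.mk s (g • l) = Quotient.mk s l :=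
      Quotient.sound (Rrel_symm hq hqs hqo heq hE (Rrel_orbit heq g l))
    simp only [hF, ContinuousMap.coe_mk, this]
  have := hte F hinv a b
  simp only [hF, ContinuousMap.coe_mk] at this
  rw [hf0 (mem_singleton _), hf1 (mem_singleton _)] at this
  norm_num at this

end ReachSec

end EK

namespace EK

section HfSec

variable {G K L : Type} [Group G] [TopologicalSpace G]
  [TopologicalSpace K] [CompactSpace K] [T2Space K] [Nonempty K]
  [TopologicalSpace L] [CompactSpace L] [T2Space L]
  [MulAction G K] [ContinuousSMul G K] [MulAction G L] [ContinuousSMul G L]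

variable {q : K → L}

/-- The value set of the sup-pseudometric associated to `f`. -/
def HfSet (G : Type) [Group G] [MulAction G K] [MulAction G L] (q : K → L) (f : K → ℝ)
    (z : {z : K × K // q z.1 = q z.2}) : Set ℝ :=
  {r | ∃ θ ∈ uniformEnveloping G q, ∃ (hx : q z.1.1 = θ.src) (hy : q z.1.2 = θ.src),
    r = |f (θ.toFun ⟨z.1.1, hx⟩) - f (θ.toFun ⟨z.1.2, hy⟩)|}

/-- The sup-pseudometric associated to `f` over the enveloping semigroupoid. -/
noncomputable def Hf (G : Type) [Group G] [MulAction G K] [MulAction G L] (q : K → L)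
    (f : K → ℝ) (z : {z : K × K // q z.1 = q z.2}) : ℝ :=
  sSup (HfSet G q f z)

lemma HfSet_nonempty (f : K → ℝ) (z : {z : K × K // q z.1 = q z.2}) :
    (HfSet G q f z).Nonempty :=
  ⟨_, idFM q (q z.1.1), idFM_mem_Eu (q z.1.1), rfl, z.2.symm, rfl⟩

lemma exists_f_bound {f : K → ℝ} (hf : Continuous f) : ∃ M : ℝ, ∀ u : K, |f u| ≤ M := by
  obtain ⟨u₀, -, hu₀⟩ := isCompact_univ.exists_isMaxOn univ_nonempty
    (continuous_abs.comp hf).continuousOn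
  exact ⟨|f u₀|, fun u => hu₀ (mem_univ u)⟩

lemma bddAbove_HfSet {f : K → ℝ} (hf : Continuous f)
    (z : {z : K × K // q z.1 = q z.2}) : BddAbove (HfSet G q f z) := by
  obtain ⟨M, hM⟩ := exists_f_bound hf
  refine ⟨2 * M, ?_⟩
  rintro r ⟨θ, -, hx, hy, rfl⟩
  calc |f (θ.toFun ⟨z.1.1, hx⟩) - f (θ.toFun ⟨z.1.2, hy⟩)|
      ≤ |f (θ.toFun ⟨z.1.1, hx⟩)| + |f (θ.toFun ⟨z.1.2, hy⟩)| := abs_sub _ _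
    _ ≤ M + M := add_le_add (hM _) (hM _)
    _ = 2 * M := by ring

lemma le_Hf {f : K → ℝ} (hf : Continuous f) {z : {z : K × K // q z.1 = q z.2}}
    {r : ℝ} (hr : r ∈ HfSet G q f z) : r ≤ Hf G q f z :=
  le_csSup (bddAbove_HfSet hf z) hr

lemma Hf_le {f : K → ℝ} {z : {z : K × K // q z.1 = q z.2}} {M : ℝ}
    (h : ∀ r ∈ HfSet G q f z, r ≤ M) : Hf G q f z ≤ M :=
  csSup_le (HfSet_nonempty f z) h

lemma dist_le_Hf {f : K → ℝ} (hf : Continuous f) (x y : K) (h : q x = q y) :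
    |f x - f y| ≤ Hf G q f ⟨(x, y), h⟩ :=
  le_Hf hf ⟨idFM q (q x), idFM_mem_Eu (q x), rfl, h.symm, rfl⟩

lemma Hf_nonneg {f : K → ℝ} (hf : Continuous f) (z : {z : K × K // q z.1 = q z.2}) :
    0 ≤ Hf G q f z :=
  le_trans (abs_nonneg _) (dist_le_Hf hf z.1.1 z.1.2 z.2)

lemma Hf_refl (f : K → ℝ) (x : K) : Hf G q f ⟨(x, x), rfl⟩ = 0 := by
  have hset : HfSet G q f ⟨(x, x), rfl⟩ = {0} := by
    ext r
    constructor
    · rintro ⟨θ, -, hx, hy, rfl⟩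
      simp [show (⟨x, hx⟩ : {u : K // q u = θ.src}) = ⟨x, hy⟩ from rfl]
    · rintro rfl
      exact ⟨idFM q (q x), idFM_mem_Eu (q x), rfl, rfl, by simp⟩
  rw [Hf, hset, csSup_singleton]

lemma Hf_symm (f : K → ℝ) (x y : K) (h : q x = q y) :
    Hf G q f ⟨(x, y), h⟩ = Hf G q f ⟨(y, x), h.symm⟩ := by
  have hset : HfSet G q f ⟨(x, y), h⟩ = HfSet G q f ⟨(y, x), h.symm⟩ := by
    ext r
    constructor
    · rintro ⟨θ, hθE, hx, hy, rfl⟩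
      exact ⟨θ, hθE, hy, hx, abs_sub_comm _ _⟩
    · rintro ⟨θ, hθE, hx, hy, rfl⟩
      exact ⟨θ, hθE, hy, hx, abs_sub_comm _ _⟩
  rw [Hf, hset, Hf]

lemma Hf_triangle {f : K → ℝ} (hf : Continuous f) (x y z : K)
    (hxy : q x = q y) (hyz : q y = q z) :
    Hf G q f ⟨(x, z), hxy.trans hyz⟩ ≤ Hf G q f ⟨(x, y), hxy⟩ + Hf G q f ⟨(y, z), hyz⟩ := by
  refine Hf_le ?_
  rintro r ⟨θ, hθE, hx, hz, rfl⟩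
  have hy' : q y = θ.src := hxy.symm.trans hx
  have h1 : |f (θ.toFun ⟨x, hx⟩) - f (θ.toFun ⟨y, hy'⟩)| ≤ Hf G q f ⟨(x, y), hxy⟩ :=
    le_Hf hf ⟨θ, hθE, hx, hy', rfl⟩
  have h2 : |f (θ.toFun ⟨y, hy'⟩) - f (θ.toFun ⟨z, hz⟩)| ≤ Hf G q f ⟨(y, z), hyz⟩ :=
    le_Hf hf ⟨θ, hθE, hy', hz, rfl⟩
  calc |f (θ.toFun ⟨x, hx⟩) - f (θ.toFun ⟨z, hz⟩)|
      ≤ |f (θ.toFun ⟨x, hx⟩) - f (θ.toFun ⟨y, hy'⟩)| +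
        |f (θ.toFun ⟨y, hy'⟩) - f (θ.toFun ⟨z, hz⟩)| := abs_sub_le _ _ _
    _ ≤ _ := add_le_add h1 h2

lemma Hf_invariant (heq : ∀ (g : G) (x : K), q (g • x) = g • q x) {f : K → ℝ}
    (hf : Continuous f) (g : G) (x y : K) (h : q x = q y) (h' : q (g • x) = q (g • y)) :
    Hf G q f ⟨(g • x, g • y), h'⟩ = Hf G q f ⟨(x, y), h⟩ := by
  apply le_antisymm
  · refine Hf_le ?_
    rintro r ⟨θ, hθE, hx, hy, rfl⟩
    have hcomp : (transFM heq g (q x)).rng = θ.src := by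
      show g • q x = θ.src
      rw [← heq g x]
      exact hx
    set θ' : FiberMap q q := FiberMap.comp θ (transFM heq g (q x)) hcomp with hθ'
    have hθ'E : θ' ∈ uniformEnveloping G q :=
      Eu_sgpd (transFM heq g (q x)) (transFM_mem_Eu heq g (q x)) θ hθE hcomp
    refine le_Hf hf ⟨θ', hθ'E, rfl, h.symm, ?_⟩
    rfl
  · refine Hf_le ?_
    rintro r ⟨θ, hθE, hx, hy, rfl⟩
    have hcomp : (transFM heq g⁻¹ (q (g • x))).rng = θ.src := by
      show g⁻¹ • q (g • x) = θ.src
      rw [heq g x, inv_smul_smul]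
      exact hx
    set θ' : FiberMap q q := FiberMap.comp θ (transFM heq g⁻¹ (q (g • x))) hcomp with hθ'
    have hθ'E : θ' ∈ uniformEnveloping G q :=
      Eu_sgpd (transFM heq g⁻¹ (q (g • x))) (transFM_mem_Eu heq g⁻¹ (q (g • x))) θ hθE hcomp
    refine le_Hf hf ⟨θ', hθ'E, rfl, h'.symm, ?_⟩
    have e1 : θ'.toFun ⟨g • x, rfl⟩ = θ.toFun ⟨x, hx⟩ := by
      show θ.toFun ⟨g⁻¹ • (g • x), _⟩ = θ.toFun ⟨x, hx⟩
      exact toFun_congr θ _ _ (inv_smul_smul g x)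
    have hy2 : q (g • y) = q (g • x) := h'.symm
    have e2 : θ'.toFun ⟨g • y, hy2⟩ = θ.toFun ⟨y, hy⟩ := by
      show θ.toFun ⟨g⁻¹ • (g • y), _⟩ = θ.toFun ⟨y, hy⟩
      exact toFun_congr θ _ _ (inv_smul_smul g y)
    rw [e1, e2]

end HfSec

end EK

namespace EK

section HfContSec

variable {G K L : Type} [Group G] [TopologicalSpace G]
  [TopologicalSpace K] [CompactSpace K] [T2Space K] [Nonempty K]
  [TopologicalSpace L] [CompactSpace L] [T2Space L]
  [MulAction G K] [ContinuousSMul G K] [MulAction G L] [ContinuousSMul G L]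

variable {q : K → L}

/-- The two-point evaluation domain. -/
abbrev Dom2 (q : K → L) : Type _ :=
  {t : FiberMap q q × K × K // q t.2.1 = t.1.src ∧ q t.2.2 = t.1.src}

/-- Evaluation of the function difference. -/
def ev2 (f : K → ℝ) (t : Dom2 q) : ℝ :=
  |f (ev (⟨(t.1.1, t.1.2.1), t.2.1⟩ : Dom q)) - f (ev (⟨(t.1.1, t.1.2.2), t.2.2⟩ : Dom q))|

/-- The source pair of a two-point evaluation datum. -/
def proj2 (t : Dom2 q) : {z : K × K // q z.1 = q z.2} :=
  ⟨(t.1.2.1, t.1.2.2), t.2.1.trans t.2.2.symm⟩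

lemma continuous_evA : Continuous (fun t : Dom2 q => ev (⟨(t.1.1, t.1.2.1), t.2.1⟩ : Dom q)) :=
  continuous_ev.comp (Continuous.subtype_mk
    ((continuous_fst.comp continuous_subtype_val).prodMk
      ((continuous_fst.comp (continuous_snd.comp continuous_subtype_val))))
    (fun t => t.2.1))

lemma continuous_evB : Continuous (fun t : Dom2 q => ev (⟨(t.1.1, t.1.2.2), t.2.2⟩ : Dom q)) :=
  continuous_ev.comp (Continuous.subtype_mk
    ((continuous_fst.comp continuous_subtype_val).prodMk
      ((continuous_snd.comp (continuous_snd.comp continuous_subtype_val))))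
    (fun t => t.2.2))

lemma continuous_ev2 {f : K → ℝ} (hf : Continuous f) : Continuous (ev2 (q := q) f) :=
  ((hf.comp continuous_evA).sub (hf.comp continuous_evB)).abs

lemma continuous_proj2 : Continuous (proj2 (q := q)) :=
  Continuous.subtype_mk
    ((continuous_fst.comp (continuous_snd.comp continuous_subtype_val)).prodMk
      (continuous_snd.comp (continuous_snd.comp continuous_subtype_val))) _

lemma isClosed_Dom2cond (hq : Continuous q) (hqs : Function.Surjective q) :
    IsClosed {t : FiberMap q q × K × K | q t.2.1 = t.1.src ∧ q t.2.2 = t.1.src} :=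
  (isClosed_eq (hq.comp (continuous_fst.comp continuous_snd))
    ((continuous_src hq hqs).comp continuous_fst)).inter
  (isClosed_eq (hq.comp (continuous_snd.comp continuous_snd))
    ((continuous_src hq hqs).comp continuous_fst))

lemma isCompact_S2 (hq : Continuous q) (hqs : Function.Surjective q)
    (hE : IsCompact (uniformEnveloping G q)) :
    IsCompact {t : Dom2 q | t.1.1 ∈ uniformEnveloping G q} := by
  have hset : {t : Dom2 q | t.1.1 ∈ uniformEnveloping G q} =
      Subtype.val ⁻¹' ((uniformEnveloping G q) ×ˢ (univ : Set (K × K))) := by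
    ext t
    simp [Set.mem_prod]
  rw [hset]
  exact ((isClosed_Dom2cond hq hqs).isClosedEmbedding_subtypeVal).isCompact_preimage
    (hE.prod isCompact_univ)

lemma HfSet_eq_image (f : K → ℝ) (z : {z : K × K // q z.1 = q z.2}) :
    HfSet G q f z = ev2 f '' ({t : Dom2 q | t.1.1 ∈ uniformEnveloping G q} ∩
      {t | proj2 t = z}) := by
  ext r
  constructor
  · rintro ⟨θ, hθE, hx, hy, rfl⟩
    exact ⟨⟨(θ, (z.1.1, z.1.2)), ⟨hx, hy⟩⟩, ⟨hθE, Subtype.ext rfl⟩, rfl⟩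
  · rintro ⟨t, ⟨htE, htproj⟩, rfl⟩
    have h1 : t.1.2.1 = z.1.1 := congrArg (fun w : {z : K × K // q z.1 = q z.2} => w.1.1) htproj
    have h2 : t.1.2.2 = z.1.2 := congrArg (fun w : {z : K × K // q z.1 = q z.2} => w.1.2) htproj
    refine ⟨t.1.1, htE, h1 ▸ t.2.1, h2 ▸ t.2.2, ?_⟩
    show ev2 f t = _
    have e1 : t.1.1.toFun ⟨t.1.2.1, t.2.1⟩ = t.1.1.toFun ⟨z.1.1, h1 ▸ t.2.1⟩ :=
      toFun_congr _ _ _ h1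
    have e2 : t.1.1.toFun ⟨t.1.2.2, t.2.2⟩ = t.1.1.toFun ⟨z.1.2, h2 ▸ t.2.2⟩ :=
      toFun_congr _ _ _ h2
    show |f (t.1.1.toFun ⟨t.1.2.1, t.2.1⟩) - f (t.1.1.toFun ⟨t.1.2.2, t.2.2⟩)| = _
    rw [e1, e2]

lemma Hf_attained (hq : Continuous q) (hqs : Function.Surjective q)
    (hE : IsCompact (uniformEnveloping G q)) {f : K → ℝ} (hf : Continuous f)
    (z : {z : K × K // q z.1 = q z.2}) :
    ∃ t : Dom2 q, t.1.1 ∈ uniformEnveloping G q ∧ proj2 t = z ∧ Hf G q f z = ev2 f t ∧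
      ∀ t' : Dom2 q, t'.1.1 ∈ uniformEnveloping G q → proj2 t' = z →
        ev2 f t' ≤ ev2 f t := by
  set Fz : Set (Dom2 q) := {t : Dom2 q | t.1.1 ∈ uniformEnveloping G q} ∩
    {t | proj2 t = z} with hFz
  have hFzcpt : IsCompact Fz := (isCompact_S2 hq hqs hE).inter_right
    (isClosed_eq continuous_proj2 continuous_const)
  have hFzne : Fz.Nonempty :=
    ⟨⟨(idFM q (q z.1.1), (z.1.1, z.1.2)), ⟨rfl, z.2.symm⟩⟩, ⟨idFM_mem_Eu _, Subtype.ext rfl⟩⟩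
  obtain ⟨t, htFz, hmax⟩ := hFzcpt.exists_isMaxOn hFzne (continuous_ev2 hf).continuousOn
  refine ⟨t, htFz.1, htFz.2, ?_, fun t' ht'E ht'proj => hmax ⟨ht'E, ht'proj⟩⟩
  have : IsGreatest (HfSet G q f z) (ev2 f t) := by
    constructor
    · rw [HfSet_eq_image]
      exact ⟨t, htFz, rfl⟩
    · rintro r hr
      rw [HfSet_eq_image] at hr
      obtain ⟨t', ht', rfl⟩ := hr
      exact hmax ht'
  show sSup (HfSet G q f z) = ev2 f t
  exact this.csSup_eq

lemma Hf_usc (hq : Continuous q) (hqs : Function.Surjective q)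
    (hE : IsCompact (uniformEnveloping G q)) {f : K → ℝ} (hf : Continuous f) (c : ℝ) :
    IsClosed {z : {z : K × K // q z.1 = q z.2} | c ≤ Hf G q f z} := by
  have himg : {z : {z : K × K // q z.1 = q z.2} | c ≤ Hf G q f z} =
      proj2 '' ({t : Dom2 q | t.1.1 ∈ uniformEnveloping G q} ∩ {t | c ≤ ev2 f t}) := by
    ext z
    constructor
    · intro hz
      obtain ⟨t, htE, htproj, hval, -⟩ := Hf_attained hq hqs hE hf z
      exact ⟨t, ⟨htE, by rw [mem_setOf_eq, ← hval]; exact hz⟩, htproj⟩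
    · rintro ⟨t, ⟨htE, htc⟩, rfl⟩
      refine le_trans htc (le_Hf hf ⟨t.1.1, htE, t.2.1, t.2.2, rfl⟩)
  rw [himg]
  haveI := compactSpace_KqK (q := q) hq
  exact (((isCompact_S2 hq hqs hE).inter_right
    (isClosed_le continuous_const (continuous_ev2 hf))).image continuous_proj2).isClosed

lemma Hf_lsc (hq : Continuous q) (hqs : Function.Surjective q) (hqo : IsOpenMap q)
    (heq : ∀ (g : G) (x : K), q (g • x) = g • q x)
    (hte : TopologicallyErgodic G L)
    (hE : IsCompact (uniformEnveloping G q)) {f : K → ℝ} (hf : Continuous f) (c : ℝ) :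
    IsOpen {z : {z : K × K // q z.1 = q z.2} | c < Hf G q f z} := by
  rw [isOpen_iff_forall_mem_open]
  intro z₀ hz₀
  obtain ⟨ts, htsE, htsproj, htsval, -⟩ := Hf_attained hq hqs hE hf z₀
  set θhat : FiberMap q q := ts.1.1 with hθhat
  set lstar : L := θhat.rng with hlstar
  -- the stabilizer index type
  set I : Type _ := {ρ : FiberMap q q // ρ ∈ uniformEnveloping G q ∧ ρ.src = lstar ∧
    ρ.rng = lstar} with hI
  set Y : Set {z : K × K // q z.1 = q z.2} := {w | q w.1.1 = lstar} with hY
  have hYcl : IsClosed Y :=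
    isClosed_eq (hq.comp (continuous_fst.comp continuous_subtype_val)) continuous_const
  set ψ : I → {w : {z : K × K // q z.1 = q z.2} // q w.1.1 = lstar} → ℝ := fun ρ w =>
    |f (ρ.1.toFun ⟨w.1.1.1, w.2.trans ρ.2.2.1.symm⟩) -
     f (ρ.1.toFun ⟨w.1.1.2, (w.1.2.symm.trans w.2).trans ρ.2.2.1.symm⟩)| with hψ
  have hψcont : ∀ ρ : I, Continuous (ψ ρ) := by
    intro ρ
    have hc1 : Continuous (fun w : {w : {z : K × K // q z.1 = q z.2} // q w.1.1 = lstar} =>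
        ρ.1.toFun ⟨w.1.1.1, w.2.trans ρ.2.2.1.symm⟩) :=
      ρ.1.continuous_toFun.comp (Continuous.subtype_mk
        (continuous_fst.comp (continuous_subtype_val.comp continuous_subtype_val)) _)
    have hc2 : Continuous (fun w : {w : {z : K × K // q z.1 = q z.2} // q w.1.1 = lstar} =>
        ρ.1.toFun ⟨w.1.1.2, (w.1.2.symm.trans w.2).trans ρ.2.2.1.symm⟩) :=
      ρ.1.continuous_toFun.comp (Continuous.subtype_mk
        (continuous_snd.comp (continuous_subtype_val.comp continuous_subtype_val)) _)
    exact ((hf.comp hc1).sub (hf.comp hc2)).abs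
  set Bd' : Set {w : {z : K × K // q z.1 = q z.2} // q w.1.1 = lstar} :=
    ⋂ ρ : I, {w | ψ ρ w ≤ c} with hBd'
  have hBd'cl : IsClosed Bd' :=
    isClosed_iInter (fun ρ => isClosed_le (hψcont ρ) continuous_const)
  set Bd : Set {z : K × K // q z.1 = q z.2} := Subtype.val '' Bd' with hBd
  have hBdcl : IsClosed Bd := (hYcl.isClosedEmbedding_subtypeVal).isClosedMap _ hBd'cl
  set Θout : Dom2 q → {z : K × K // q z.1 = q z.2} := fun t =>
    ⟨(ev (⟨(t.1.1, t.1.2.1), t.2.1⟩ : Dom q), ev (⟨(t.1.1, t.1.2.2), t.2.2⟩ : Dom q)),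
      (t.1.1.maps_to _).trans (t.1.1.maps_to _).symm⟩ with hΘout
  have hΘcont : Continuous Θout :=
    Continuous.subtype_mk (continuous_evA.prodMk continuous_evB) _
  set BadSet : Set {z : K × K // q z.1 = q z.2} :=
    proj2 '' ({t : Dom2 q | t.1.1 ∈ uniformEnveloping G q} ∩ {t | t.1.1.rng = lstar} ∩
      Θout ⁻¹' Bd) with hBadSet
  have hBadcl : IsClosed BadSet := by
    haveI := compactSpace_KqK (q := q) hq
    refine (IsCompact.image ?_ continuous_proj2).isClosed
    refine ((isCompact_S2 hq hqs hE).inter_right ?_).inter_right (hBdcl.preimage hΘcont)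
    exact isClosed_eq ((continuous_rng hq hqs).comp
      (continuous_fst.comp continuous_subtype_val)) continuous_const
  refine ⟨BadSetᶜ, ?_, hBadcl.isOpen_compl, ?_⟩
  · -- any point outside BadSet has Hf > c
    intro z hz
    obtain ⟨θ, hθE, hθs, hθr⟩ := reach hq hqs hqo heq hte hE (q z.1.1) lstar
    set t : Dom2 q := ⟨(θ, (z.1.1, z.1.2)), ⟨hθs.symm, z.2.symm.trans hθs.symm⟩⟩ with hT
    have hproj : proj2 t = z := Subtype.ext rfl
    have hmemBad : Θout t ∉ Bd := by
      intro hcon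
      exact hz ⟨t, ⟨⟨hθE, hθr⟩, hcon⟩, hproj⟩
    have hYmem : q (Θout t).1.1 = lstar := (θ.maps_to _).trans hθr
    have hnot : (⟨Θout t, hYmem⟩ : {w : {z : K × K // q z.1 = q z.2} // q w.1.1 = lstar})
        ∉ Bd' := by
      intro hcon
      exact hmemBad ⟨_, hcon, rfl⟩
    rw [hBd', mem_iInter] at hnot
    push_neg at hnot
    obtain ⟨ρ, hρval⟩ := hnot
    have hρgt : c < ψ ρ ⟨Θout t, hYmem⟩ := lt_of_not_ge hρval
    -- this value is attained by the composition ρ ∘ θ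
    have hcc : θ.rng = ρ.1.src := hθr.trans ρ.2.2.1.symm
    have hcompE : FiberMap.comp ρ.1 θ hcc ∈ uniformEnveloping G q :=
      Eu_sgpd θ hθE ρ.1 ρ.2.1 hcc
    have hmemH : ψ ρ ⟨Θout t, hYmem⟩ ∈ HfSet G q f z := by
      refine ⟨FiberMap.comp ρ.1 θ hcc, hcompE, hθs.symm, z.2.symm.trans hθs.symm, rfl⟩
    exact lt_of_lt_of_le hρgt (le_Hf hf hmemH)
  · -- z₀ is not in BadSet
    intro hcon
    obtain ⟨t, ⟨⟨htE, htrng⟩, htBd⟩, htproj⟩ := hcon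
    obtain ⟨σ', hσ'E, hσ's, hσ'r, hσ'li, -⟩ := exists_inverse hq hqs hqo heq hE t.1.1 htE
    -- identifications of sources
    have h1 : t.1.2.1 = z₀.1.1 :=
      congrArg (fun w : {z : K × K // q z.1 = q z.2} => w.1.1) htproj
    have h2 : t.1.2.2 = z₀.1.2 :=
      congrArg (fun w : {z : K × K // q z.1 = q z.2} => w.1.2) htproj
    have h1s : ts.1.2.1 = z₀.1.1 :=
      congrArg (fun w : {z : K × K // q z.1 = q z.2} => w.1.1) htsproj
    have h2s : ts.1.2.2 = z₀.1.2 :=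
      congrArg (fun w : {z : K × K // q z.1 = q z.2} => w.1.2) htsproj
    have hθ'src : t.1.1.src = q z₀.1.1 := by rw [← t.2.1, h1]
    have hθhatsrc : θhat.src = q z₀.1.1 := by rw [← ts.2.1, h1s]
    have hcompat : σ'.rng = θhat.src := by rw [hσ'r, hθ'src, hθhatsrc]
    set ρ : FiberMap q q := FiberMap.comp θhat σ' hcompat with hρ
    have hρE : ρ ∈ uniformEnveloping G q := Eu_sgpd σ' hσ'E θhat htsE hcompat
    have hρs : ρ.src = lstar := by
      show σ'.src = lstar
      rw [hσ's, htrng]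
    have hρI : (⟨ρ, hρE, hρs, rfl⟩ : I) = ⟨ρ, hρE, hρs, rfl⟩ := rfl
    have hYT : q (Θout t).1.1 = lstar := (t.1.1.maps_to _).trans htrng
    obtain ⟨w', hw'Bd', hw'val⟩ := htBd
    have hw'eq : (⟨Θout t, hYT⟩ :
        {w : {z : K × K // q z.1 = q z.2} // q w.1.1 = lstar}) = w' :=
      Subtype.ext hw'val.symm
    have hψle : ψ ⟨ρ, hρE, hρs, rfl⟩ ⟨Θout t, hYT⟩ ≤ c := by
      rw [hw'eq]
      exact mem_iInter.mp hw'Bd' _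
    -- compute the ψ-value : it equals ev2 f ts
    have hvalA : ρ.toFun ⟨(Θout t).1.1, hYT.trans hρs.symm⟩ =
        θhat.toFun ⟨ts.1.2.1, ts.2.1⟩ := by
      have hσarg : σ'.toFun ⟨(Θout t).1.1, (t.1.1.maps_to _).trans hσ's.symm⟩ = t.1.2.1 :=
        hσ'li t.1.2.1 t.2.1 _
      have step1 : ρ.toFun ⟨(Θout t).1.1, hYT.trans hρs.symm⟩ =
          θhat.toFun ⟨σ'.toFun ⟨(Θout t).1.1, (t.1.1.maps_to _).trans hσ's.symm⟩,
            (σ'.maps_to _).trans hcompat⟩ := rfl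
      rw [step1]
      have hmid1 : q t.1.2.1 = θhat.src := (congrArg q h1).trans hθhatsrc.symm
      exact (toFun_congr θhat ((σ'.maps_to _).trans hcompat) hmid1 hσarg).trans
        (toFun_congr θhat hmid1 ts.2.1 (h1.trans h1s.symm))
    have hvalB : ρ.toFun ⟨(Θout t).1.2, ((Θout t).2.symm.trans hYT).trans hρs.symm⟩ =
        θhat.toFun ⟨ts.1.2.2, ts.2.2⟩ := by
      have hσarg : σ'.toFun ⟨(Θout t).1.2, (t.1.1.maps_to _).trans hσ's.symm⟩ = t.1.2.2 :=
        hσ'li t.1.2.2 t.2.2 _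
      have step1 : ρ.toFun ⟨(Θout t).1.2, ((Θout t).2.symm.trans hYT).trans hρs.symm⟩ =
          θhat.toFun ⟨σ'.toFun ⟨(Θout t).1.2, (t.1.1.maps_to _).trans hσ's.symm⟩,
            (σ'.maps_to _).trans hcompat⟩ := rfl
      rw [step1]
      have hmid2 : q t.1.2.2 = θhat.src := (congrArg q h2).trans
        (z₀.2.symm.trans hθhatsrc.symm)
      exact (toFun_congr θhat ((σ'.maps_to _).trans hcompat) hmid2 hσarg).trans
        (toFun_congr θhat hmid2 ts.2.2 (h2.trans h2s.symm))
    have hψeq : ψ ⟨ρ, hρE, hρs, rfl⟩ ⟨Θout t, hYT⟩ = ev2 f ts := by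
      show |f (ρ.toFun ⟨(Θout t).1.1, _⟩) - f (ρ.toFun ⟨(Θout t).1.2, _⟩)| = ev2 f ts
      rw [hvalA, hvalB]
      rfl
    rw [hψeq] at hψle
    have hz₀' : c < Hf G q f z₀ := hz₀
    rw [htsval] at hz₀'
    exact absurd hψle (not_le.mpr hz₀')

lemma Hf_continuous (hq : Continuous q) (hqs : Function.Surjective q) (hqo : IsOpenMap q)
    (heq : ∀ (g : G) (x : K), q (g • x) = g • q x)
    (hte : TopologicallyErgodic G L)
    (hE : IsCompact (uniformEnveloping G q)) {f : K → ℝ} (hf : Continuous f) :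
    Continuous (Hf G q f) := by
  apply continuous_of_usc_lsc
  · intro c
    have : {z : {z : K × K // q z.1 = q z.2} | Hf G q f z < c} =
        {z | c ≤ Hf G q f z}ᶜ := by
      ext z; simp [not_le]
    rw [this]
    exact (Hf_usc hq hqs hE hf c).isOpen_compl
  · exact Hf_lsc hq hqs hqo heq hte hE hf

end HfContSec

end EK

namespace EK

section FinSec

variable {G K L : Type} [Group G] [TopologicalSpace G]
  [TopologicalSpace K] [CompactSpace K] [T2Space K] [Nonempty K]
  [TopologicalSpace L] [CompactSpace L] [T2Space L]
  [MulAction G K] [ContinuousSMul G K] [MulAction G L] [ContinuousSMul G L]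

variable {q : K → L}

lemma generation (hq : Continuous q) (hqs : Function.Surjective q) (hqo : IsOpenMap q)
    (heq : ∀ (g : G) (x : K), q (g • x) = g • q x)
    (hte : TopologicallyErgodic G L)
    (hE : IsCompact (uniformEnveloping G q)) (l : L) :
    (inferInstance : TopologicalSpace {x : K // q x = l}) =
      TopologicalSpace.generateFrom
        (Balls q {p : {z : K × K // q z.1 = q z.2} → ℝ |
          ∃ f : K → ℝ, Continuous f ∧ p = Hf G q f} l) := by
  apply le_antisymm
  · -- every ball is open in the subspace topology
    apply le_generateFrom
    rintro B ⟨p, ⟨f, hf, rfl⟩, x₀, ε, hε, rfl⟩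
    have hcont : Continuous (fun y : {x : K // q x = l} =>
        Hf G q f ⟨((x₀ : K), (y : K)), x₀.2.trans y.2.symm⟩) :=
      (Hf_continuous hq hqs hqo heq hte hE hf).comp
        (Continuous.subtype_mk (continuous_const.prodMk continuous_subtype_val)
          (fun y => x₀.2.trans y.2.symm))
    exact isOpen_Iio.preimage hcont
  · -- every open subset of the fiber is generated by balls
    rw [TopologicalSpace.le_def]
    intro U hU
    haveI : CompactSpace {x : K // q x = l} :=
      isCompact_iff_compactSpace.mp (isCompact_fiber hq l)
    have hcover : ∀ Z ∈ U, ∃ B, (B ∈ Balls q {p : {z : K × K // q z.1 = q z.2} → ℝ |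
        ∃ f : K → ℝ, Continuous f ∧ p = Hf G q f} l ∧ B ⊆ U) ∧ Z ∈ B := by
      intro Z hZ
      obtain ⟨f₀, hf₀0, hf₀1, -⟩ := exists_continuous_zero_one_of_isClosed
        (isClosed_singleton (x := Z)) hU.isClosed_compl
        (by
          rw [disjoint_left]
          rintro y hy
          rw [mem_singleton_iff] at hy
          subst hy
          exact fun hc => hc hZ)
      obtain ⟨F, hF⟩ := ContinuousMap.exists_restrict_eq (Y := ℝ) (isClosed_fiber hq l) f₀
      have hFval : ∀ y : {x : K // q x = l}, F (y : K) = f₀ y := by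
        intro y
        have := congrFun (congrArg (fun g : C({x : K // q x = l}, ℝ) => (g : {x : K // q x = l} → ℝ)) hF) y
        exact this
      refine ⟨{y : {x : K // q x = l} |
          Hf G q (F : K → ℝ) ⟨((Z : K), (y : K)), Z.2.trans y.2.symm⟩ < 1},
        ⟨⟨Hf G q (F : K → ℝ), ⟨(F : K → ℝ), F.continuous, rfl⟩, Z, 1, one_pos, rfl⟩, ?_⟩, ?_⟩
      · -- the ball is contained in U
        intro y hy
        have hy' : Hf G q (F : K → ℝ) ⟨((Z : K), (y : K)), Z.2.trans y.2.symm⟩ < 1 := hy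
        have hd := dist_le_Hf (G := G) F.continuous (Z : K) (y : K) (Z.2.trans y.2.symm)
        by_contra hyU
        have h0 : F (Z : K) = 0 := by
          rw [hFval Z]
          exact hf₀0 (mem_singleton _)
        have h1 : F (y : K) = 1 := by
          rw [hFval y]
          exact hf₀1 hyU
        rw [h0, h1] at hd
        norm_num at hd
        linarith
      · -- Z is in the ball
        show Hf G q (F : K → ℝ) ⟨((Z : K), (Z : K)), Z.2.trans Z.2.symm⟩ < 1
        have := Hf_refl (G := G) (q := q) (F : K → ℝ) (Z : K)
        rw [show (⟨((Z : K), (Z : K)), Z.2.trans Z.2.symm⟩ :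
          {z : K × K // q z.1 = q z.2}) = ⟨((Z : K), (Z : K)), rfl⟩ from rfl, this]
        norm_num
    choose! Bfun hBfun hZBfun using hcover
    have hUeq : U = ⋃₀ {B | (B ∈ Balls q {p : {z : K × K // q z.1 = q z.2} → ℝ |
        ∃ f : K → ℝ, Continuous f ∧ p = Hf G q f} l) ∧ B ⊆ U} := by
      apply le_antisymm
      · intro Z hZ
        exact ⟨Bfun Z, ⟨(hBfun Z hZ).1, (hBfun Z hZ).2⟩, hZBfun Z hZ⟩
      · intro Z hZ
        obtain ⟨B, ⟨-, hBU⟩, hZB⟩ := hZ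
        exact hBU hZB
    rw [hUeq]
    exact TopologicalSpace.GenerateOpen.sUnion _
      (fun B hB => TopologicalSpace.GenerateOpen.basic _ hB.1)

lemma backward (hq : Continuous q) (hqs : Function.Surjective q) (hqo : IsOpenMap q)
    (heq : ∀ (g : G) (x : K), q (g • x) = g • q x)
    (hte : TopologicallyErgodic G L)
    (hE : IsCompact (uniformEnveloping G q)) : IsPseudoIsometricExt G q := by
  refine ⟨{p | ∃ f : K → ℝ, Continuous f ∧ p = Hf G q f}, ?_, ?_, ?_, ?_, ?_, ?_, ?_⟩
  · rintro p ⟨f, hf, rfl⟩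
    exact Hf_continuous hq hqs hqo heq hte hE hf
  · rintro p ⟨f, hf, rfl⟩ z
    exact Hf_nonneg hf z
  · rintro p ⟨f, hf, rfl⟩ x
    exact Hf_refl f x
  · rintro p ⟨f, hf, rfl⟩ x y h
    exact Hf_symm f x y h
  · rintro p ⟨f, hf, rfl⟩ x y z hxy hyz
    exact Hf_triangle hf x y z hxy hyz
  · exact generation hq hqs hqo heq hte hE
  · rintro p ⟨f, hf, rfl⟩ g x y h h'
    exact Hf_invariant heq hf g x y h h'

end FinSec

end EK

/-- For an open extension `q : (K,G) → (L,G)` with `(L,G)` topologically ergodic, `q` is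
pseudoisometric if and only if the uniform enveloping semigroupoid `E_u(q)` is compact. -/
theorem statement7 {G K L : Type} [Group G] [TopologicalSpace G] [IsTopologicalGroup G]
    [T2Space G] [TopologicalSpace K] [CompactSpace K] [T2Space K] [Nonempty K]
    [TopologicalSpace L] [CompactSpace L] [T2Space L] [Nonempty L]
    [MulAction G K] [ContinuousSMul G K] [MulAction G L] [ContinuousSMul G L]
    (q : K → L) (hq : Continuous q) (hqs : Function.Surjective q) (hqo : IsOpenMap q)
    (heq : ∀ (g : G) (x : K), q (g • x) = g • q x)
    (hte : TopologicallyErgodic G L) :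
    IsPseudoIsometricExt G q ↔ IsCompact (uniformEnveloping G q) :=
  ⟨fun hP => EK.forward hq hqs hqo heq hte hP, fun hE => EK.backward hq hqs hqo heq hte hE⟩
end

section
/- Let q : (K,G) → (L,G) be an open extension of topological dynamical systems with K metrizable and (L,G) topologically ergodic. Then q is pseudoisometric if and only if q is isometric. -/
open Filter Topology Set Function MeasureTheory

/-- The extension `q : (K,G) → (L,G)` is isometric: the defining set of invariant
fiberwise pseudometrics can be chosen to consist of a single function which is a metric
on each fiber. -/
def IsIsometricExt (G : Type) {K L : Type} [Group G] [TopologicalSpace K]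
    [MulAction G K] (q : K → L) : Prop :=
  ∃ p : {z : K × K // q z.1 = q z.2} → ℝ,
    Continuous p ∧
    (∀ z, 0 ≤ p z) ∧
    (∀ x : K, p ⟨(x, x), rfl⟩ = 0) ∧
    (∀ x y : K, ∀ h : q x = q y, p ⟨(x, y), h⟩ = 0 → x = y) ∧
    (∀ x y : K, ∀ h : q x = q y, p ⟨(x, y), h⟩ = p ⟨(y, x), h.symm⟩) ∧
    (∀ x y z : K, ∀ (hxy : q x = q y) (hyz : q y = q z),
      p ⟨(x, z), hxy.trans hyz⟩ ≤ p ⟨(x, y), hxy⟩ + p ⟨(y, z), hyz⟩) ∧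
    (∀ l : L, (inferInstance : TopologicalSpace {x : K // q x = l}) =
      TopologicalSpace.generateFrom
        {B | ∃ (x₀ : {x : K // q x = l}) (ε : ℝ), 0 < ε ∧
          B = {y : {x : K // q x = l} | p ⟨((x₀ : K), (y : K)), x₀.2.trans y.2.symm⟩ < ε}}) ∧
    (∀ g : G, ∀ x y : K, ∀ (h : q x = q y) (h' : q (g • x) = q (g • y)),
      p ⟨(g • x, g • y), h'⟩ = p ⟨(x, y), h⟩)

private lemma generateOpen_of_isOpen' {X : Type} {t : TopologicalSpace X} {S : Set (Set X)}
    (h : t = TopologicalSpace.generateFrom S) {U : Set X} (hU : IsOpen[t] U) :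
    TopologicalSpace.GenerateOpen S U := by subst h; exact hU

private lemma topo_eq' {X : Type} {t₁ t₂ : TopologicalSpace X}
    (hle : t₁ ≤ t₂) (hc : @CompactSpace X t₁) (h2 : @T2Space X t₂) : t₁ = t₂ := by
  refine le_antisymm hle ?_
  rw [TopologicalSpace.le_def]
  intro U hU
  have h1 : @IsClosed X t₁ Uᶜ := (@isClosed_compl_iff X t₁ U).mpr hU
  have h2' : @IsCompact X t₁ Uᶜ := @IsClosed.isCompact X t₁ Uᶜ hc h1
  have h3 : @IsCompact X t₂ Uᶜ := by
    have := @IsCompact.image X X t₁ t₂ Uᶜ id h2' (continuous_id_iff_le.mpr hle)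
    rwa [Set.image_id] at this
  have h4 : @IsClosed X t₂ Uᶜ := @IsCompact.isClosed X t₂ h2 Uᶜ h3
  have h5 := h4.isOpen_compl
  rwa [compl_compl] at h5

private lemma min_one_add' {a b c : ℝ} (ha : 0 ≤ a) (hb : 0 ≤ b) (hc : c ≤ a + b) :
    min c 1 ≤ min a 1 + min b 1 := by
  rcases le_total 1 a with h | h
  · have h1 : min a 1 = 1 := min_eq_right h
    have h2 : (0:ℝ) ≤ min b 1 := le_min hb zero_le_one
    calc min c 1 ≤ 1 := min_le_right _ _
    _ ≤ min a 1 + min b 1 := by rw [h1]; linarith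
  rcases le_total 1 b with h' | h'
  · have h1 : min b 1 = 1 := min_eq_right h'
    have h2 : (0:ℝ) ≤ min a 1 := le_min ha zero_le_one
    calc min c 1 ≤ 1 := min_le_right _ _
    _ ≤ min a 1 + min b 1 := by rw [h1]; linarith
  · rw [min_eq_left h, min_eq_left h']
    exact (min_le_left _ _).trans hc

/-- For an open extension `q : (K,G) → (L,G)` with `K` metrizable and `(L,G)`
topologically ergodic, `q` is pseudoisometric if and only if it is isometric. -/
theorem statement9 {G K L : Type} [Group G] [TopologicalSpace G] [IsTopologicalGroup G]
    [T2Space G] [TopologicalSpace K] [CompactSpace K] [T2Space K] [Nonempty K]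
    [TopologicalSpace.MetrizableSpace K]
    [TopologicalSpace L] [CompactSpace L] [T2Space L] [Nonempty L]
    [MulAction G K] [ContinuousSMul G K] [MulAction G L] [ContinuousSMul G L]
    (q : K → L) (hq : Continuous q) (hqs : Function.Surjective q) (hqo : IsOpenMap q)
    (heq : ∀ (g : G) (x : K), q (g • x) = g • q x)
    (hte : TopologicallyErgodic G L) :
    IsPseudoIsometricExt G q ↔ IsIsometricExt G q := by
  constructor
  · intro h
    classical
    obtain ⟨P, hPc, hPnn, hPrefl, hPsymm, hPtri, hPgen, hPinv⟩ := h
    -- the fibered product Z is a compact metrizable space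
    have hZclosed : IsClosed {z : K × K | q z.1 = q z.2} :=
      isClosed_eq (hq.comp continuous_fst) (hq.comp continuous_snd)
    haveI hZcomp : CompactSpace {z : K × K // q z.1 = q z.2} :=
      isCompact_iff_compactSpace.mp hZclosed.isCompact
    haveI : TopologicalSpace.MetrizableSpace {z : K × K // q z.1 = q z.2} :=
      IsEmbedding.subtypeVal.metrizableSpace
    haveI : SecondCountableTopology {z : K × K // q z.1 = q z.2} := inferInstance
    haveI : LocallyCompactSpace {z : K × K // q z.1 = q z.2} := inferInstance
    haveI : SecondCountableTopology C({z : K × K // q z.1 = q z.2}, ℝ) := inferInstance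
    -- separation from the generating family
    have hsep : ∀ (x y : K) (hxy : q x = q y),
        (∀ p₀ ∈ P, p₀ ⟨(x, y), hxy⟩ = 0) → x = y := by
      intro x y hxy h0
      by_contra hne
      set l := q y with hl
      set SB : Set (Set {a : K // q a = l}) :=
        {B | ∃ p ∈ P, ∃ (x₀ : {a : K // q a = l}) (ε : ℝ), 0 < ε ∧
          B = {y' : {a : K // q a = l} |
            p ⟨((x₀ : K), (y' : K)), x₀.2.trans y'.2.symm⟩ < ε}} with hSB
      set xs : {a : K // q a = l} := ⟨x, hxy⟩ with hxs
      set ys : {a : K // q a = l} := ⟨y, rfl⟩ with hys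
      have hxsys : xs ∈ ({ys}ᶜ : Set {a : K // q a = l}) := by
        simp only [Set.mem_compl_iff, Set.mem_singleton_iff]
        exact fun hh => hne (congrArg Subtype.val hh)
      have hopen : IsOpen ({ys}ᶜ : Set {a : K // q a = l}) := isOpen_compl_singleton
      have hgo : TopologicalSpace.GenerateOpen SB ({ys}ᶜ) :=
        generateOpen_of_isOpen' (hPgen l) hopen
      have key : ∀ U, TopologicalSpace.GenerateOpen SB U → xs ∈ U → ys ∈ U := by
        intro U hU
        induction hU with
        | basic V hV =>
          obtain ⟨p₀, hp₀, x₀, ε, hε, rfl⟩ := hV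
          intro hx
          have h1 : p₀ ⟨((x₀ : K), x), x₀.2.trans hxy.symm⟩ < ε := hx
          have tri := hPtri p₀ hp₀ (x₀ : K) x y (x₀.2.trans hxy.symm) hxy
          have hz := h0 p₀ hp₀
          show p₀ ⟨((x₀ : K), y), x₀.2.trans (ys.2.symm)⟩ < ε
          calc p₀ ⟨((x₀ : K), y), x₀.2.trans (ys.2.symm)⟩
              ≤ p₀ ⟨((x₀ : K), x), x₀.2.trans hxy.symm⟩ + p₀ ⟨(x, y), hxy⟩ := tri
          _ = p₀ ⟨((x₀ : K), x), x₀.2.trans hxy.symm⟩ := by rw [hz, add_zero]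
          _ < ε := h1
        | univ => exact fun _ => trivial
        | inter U V _ _ ihU ihV => exact fun hmem => ⟨ihU hmem.1, ihV hmem.2⟩
        | sUnion T _ ih =>
          rintro ⟨V, hV, hxV⟩
          exact ⟨V, hV, ih V hV hxV⟩
      exact (key _ hgo hxsys) rfl
    -- countable approximating family
    set S : Set C({z : K × K // q z.1 = q z.2}, ℝ) := {f | ⇑f ∈ P} with hS
    haveI : SecondCountableTopology ↥S := inferInstance
    haveI : TopologicalSpace.SeparableSpace ↥S := inferInstance
    obtain ⟨D, hDc, hDd⟩ := TopologicalSpace.exists_countable_dense ↥S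
    set Q : Set ({z : K × K // q z.1 = q z.2} → ℝ) :=
      (fun f : ↥S => ((f : C({z : K × K // q z.1 = q z.2}, ℝ)) :
        {z : K × K // q z.1 = q z.2} → ℝ)) '' D with hQ
    have hQc : Q.Countable := hDc.image _
    have hQP : ∀ f ∈ Q, f ∈ P := by
      rintro f ⟨d, _, rfl⟩
      exact d.2
    have hQapprox : ∀ p₀ ∈ P, ∀ ε > (0:ℝ), ∃ f ∈ Q, ∀ z, |f z - p₀ z| < ε := by
      intro p₀ hp₀ ε hε
      have hc := hPc p₀ hp₀
      have hpcS : (⟨p₀, hc⟩ : C({z : K × K // q z.1 = q z.2}, ℝ)) ∈ S := hp₀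
      obtain ⟨d, hdball, hdD⟩ := Metric.dense_iff.mp hDd ⟨_, hpcS⟩ ε hε
      refine ⟨((d : ↥S) : C({z : K × K // q z.1 = q z.2}, ℝ)), ⟨d, hdD, rfl⟩, ?_⟩
      intro z
      have h1 : dist (((d : ↥S) : C({z : K × K // q z.1 = q z.2}, ℝ)) z)
            ((⟨p₀, hc⟩ : C({z : K × K // q z.1 = q z.2}, ℝ)) z)
          ≤ dist ((d : ↥S) : C({z : K × K // q z.1 = q z.2}, ℝ)) ⟨p₀, hc⟩ :=
        ContinuousMap.dist_apply_le_dist z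
      have h2 : dist ((d : ↥S) : C({z : K × K // q z.1 = q z.2}, ℝ)) ⟨p₀, hc⟩ < ε := by
        have := Metric.mem_ball.mp hdball
        rwa [Subtype.dist_eq] at this
      calc |((d : ↥S) : C({z : K × K // q z.1 = q z.2}, ℝ)) z - p₀ z|
          = dist (((d : ↥S) : C({z : K × K // q z.1 = q z.2}, ℝ)) z) (p₀ z) := (Real.dist_eq _ _).symm
      _ ≤ _ := h1
      _ < ε := h2
    -- enumerate
    obtain ⟨e, he⟩ := (hQc.insert (fun _ => (0:ℝ))).exists_eq_range
      ⟨_, Set.mem_insert _ _⟩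
    have hen : ∀ n, e n = (fun _ => (0:ℝ)) ∨ e n ∈ P := by
      intro n
      have : e n ∈ insert (fun _ => (0:ℝ)) Q := he ▸ ⟨n, rfl⟩
      rcases Set.mem_insert_iff.mp this with hh | hh
      · exact Or.inl hh
      · exact Or.inr (hQP _ hh)
    have hce : ∀ n, Continuous (e n) := by
      intro n; rcases hen n with hh | hh
      · rw [hh]; exact continuous_const
      · exact hPc _ hh
    have hnn : ∀ n z, 0 ≤ e n z := by
      intro n z; rcases hen n with hh | hh
      · rw [hh]
      · exact hPnn _ hh z
    have hrefl0 : ∀ n (x : K), e n ⟨(x, x), rfl⟩ = 0 := by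
      intro n x; rcases hen n with hh | hh
      · rw [hh]
      · exact hPrefl _ hh x
    have hsym : ∀ n (x y : K) (hxy : q x = q y),
        e n ⟨(x, y), hxy⟩ = e n ⟨(y, x), hxy.symm⟩ := by
      intro n x y hxy; rcases hen n with hh | hh
      · rw [hh]
      · exact hPsymm _ hh x y hxy
    have htr : ∀ n (x y z : K) (hxy : q x = q y) (hyz : q y = q z),
        e n ⟨(x, z), hxy.trans hyz⟩ ≤ e n ⟨(x, y), hxy⟩ + e n ⟨(y, z), hyz⟩ := by
      intro n x y z hxy hyz; rcases hen n with hh | hh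
      · rw [hh]; norm_num
      · exact hPtri _ hh x y z hxy hyz
    have hin : ∀ n (g : G) (x y : K) (hxy : q x = q y) (h' : q (g • x) = q (g • y)),
        e n ⟨(g • x, g • y), h'⟩ = e n ⟨(x, y), hxy⟩ := by
      intro n g x y hxy h'; rcases hen n with hh | hh
      · rw [hh]
      · exact hPinv _ hh g x y hxy h'
    -- the combined metric
    set m : ℕ → {z : K × K // q z.1 = q z.2} → ℝ := fun n z => min (e n z) 1 with hm
    have hm0 : ∀ n z, 0 ≤ m n z := fun n z => le_min (hnn n z) zero_le_one
    have hm1 : ∀ n z, m n z ≤ 1 := fun n z => min_le_right _ _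
    set F : {z : K × K // q z.1 = q z.2} → ℝ :=
      fun z => ∑' n : ℕ, (1/2 : ℝ)^n * m n z with hF
    have hterm_nn : ∀ n z, 0 ≤ (1/2 : ℝ)^n * m n z :=
      fun n z => mul_nonneg (by positivity) (hm0 n z)
    have hsum : ∀ z, Summable (fun n => (1/2 : ℝ)^n * m n z) := fun z =>
      Summable.of_nonneg_of_le (fun n => hterm_nn n z)
        (fun n => mul_le_of_le_one_right (by positivity) (hm1 n z)) summable_geometric_two
    have hFc : Continuous F := by
      refine continuous_tsum (fun n => continuous_const.mul ((hce n).min continuous_const))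
        summable_geometric_two (fun n z => ?_)
      rw [Real.norm_eq_abs, abs_of_nonneg (hterm_nn n z)]
      exact mul_le_of_le_one_right (by positivity) (hm1 n z)
    have hFnn : ∀ z, 0 ≤ F z := fun z => tsum_nonneg (fun n => hterm_nn n z)
    have hFrefl : ∀ x : K, F ⟨(x, x), rfl⟩ = 0 := by
      intro x
      have hzero : ∀ n : ℕ, (1/2 : ℝ)^n * m n ⟨(x, x), rfl⟩ = 0 := by
        intro n
        have : m n ⟨(x, x), rfl⟩ = 0 := by
          rw [hm]; simp only [hrefl0 n x]; simp
        rw [this, mul_zero]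
      simp only [hF]
      rw [tsum_congr hzero, tsum_zero]
    have hFsym : ∀ (x y : K) (hxy : q x = q y),
        F ⟨(x, y), hxy⟩ = F ⟨(y, x), hxy.symm⟩ := by
      intro x y hxy
      exact tsum_congr (fun n => by rw [hm]; simp only [hsym n x y hxy])
    have hFtri : ∀ (x y z : K) (hxy : q x = q y) (hyz : q y = q z),
        F ⟨(x, z), hxy.trans hyz⟩ ≤ F ⟨(x, y), hxy⟩ + F ⟨(y, z), hyz⟩ := by
      intro x y z hxy hyz
      have hterm : ∀ n, (1/2 : ℝ)^n * m n ⟨(x, z), hxy.trans hyz⟩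
          ≤ (1/2 : ℝ)^n * m n ⟨(x, y), hxy⟩ + (1/2 : ℝ)^n * m n ⟨(y, z), hyz⟩ := by
        intro n
        rw [← mul_add]
        refine mul_le_mul_of_nonneg_left ?_ (by positivity)
        exact min_one_add' (hnn n _) (hnn n _) (htr n x y z hxy hyz)
      calc F ⟨(x, z), hxy.trans hyz⟩
          ≤ ∑' n : ℕ, ((1/2 : ℝ)^n * m n ⟨(x, y), hxy⟩ + (1/2 : ℝ)^n * m n ⟨(y, z), hyz⟩) :=
            Summable.tsum_le_tsum hterm (hsum _) ((hsum _).add (hsum _))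
      _ = F ⟨(x, y), hxy⟩ + F ⟨(y, z), hyz⟩ := Summable.tsum_add (hsum _) (hsum _)
    have hFinv : ∀ (g : G) (x y : K) (hxy : q x = q y) (h' : q (g • x) = q (g • y)),
        F ⟨(g • x, g • y), h'⟩ = F ⟨(x, y), hxy⟩ := by
      intro g x y hxy h'
      exact tsum_congr (fun n => by rw [hm]; simp only [hin n g x y hxy h'])
    have hFdef : ∀ (x y : K) (hxy : q x = q y), F ⟨(x, y), hxy⟩ = 0 → x = y := by
      intro x y hxy h0
      refine hsep x y hxy (fun p₀ hp₀ => ?_)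
      by_contra hp0
      have hpos : 0 < p₀ ⟨(x, y), hxy⟩ := (hPnn p₀ hp₀ _).lt_of_ne (Ne.symm hp0)
      obtain ⟨f, hfQ, hf⟩ := hQapprox p₀ hp₀ (p₀ ⟨(x, y), hxy⟩ / 2) (by linarith)
      have hfQ' : f ∈ insert (fun _ => (0:ℝ)) Q := Set.mem_insert_of_mem _ hfQ
      rw [he] at hfQ'
      obtain ⟨n, hn⟩ := hfQ'
      have hfpos : 0 < e n ⟨(x, y), hxy⟩ := by
        have := hf ⟨(x, y), hxy⟩
        rw [← hn] at this
        have habs := abs_lt.mp this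
        linarith [habs.1]
      have hmpos : 0 < m n ⟨(x, y), hxy⟩ := lt_min hfpos zero_lt_one
      have htpos : 0 < (1/2 : ℝ)^n * m n ⟨(x, y), hxy⟩ := by positivity
      have hle : (1/2 : ℝ)^n * m n ⟨(x, y), hxy⟩ ≤ F ⟨(x, y), hxy⟩ :=
        Summable.le_tsum (hsum ⟨(x, y), hxy⟩) n (fun j _ => hterm_nn j _)
      rw [h0] at hle
      linarith
    -- the fiber topologies are generated by F
    have hFtop : ∀ l : L, (inferInstance : TopologicalSpace {x : K // q x = l}) =
        TopologicalSpace.generateFrom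
          {B | ∃ (x₀ : {x : K // q x = l}) (ε : ℝ), 0 < ε ∧
            B = {y : {x : K // q x = l} | F ⟨((x₀ : K), (y : K)), x₀.2.trans y.2.symm⟩ < ε}} := by
      intro l
      haveI : CompactSpace {x : K // q x = l} :=
        isCompact_iff_compactSpace.mp ((isClosed_eq hq continuous_const).isCompact)
      have hle : (inferInstance : TopologicalSpace {x : K // q x = l}) ≤
          TopologicalSpace.generateFrom
            {B | ∃ (x₀ : {x : K // q x = l}) (ε : ℝ), 0 < ε ∧
              B = {y : {x : K // q x = l} | F ⟨((x₀ : K), (y : K)), x₀.2.trans y.2.symm⟩ < ε}} := by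
        apply le_generateFrom
        rintro B ⟨x₀, ε, hε, rfl⟩
        have hcont : Continuous fun y : {x : K // q x = l} =>
            F ⟨((x₀ : K), (y : K)), x₀.2.trans y.2.symm⟩ :=
          hFc.comp (Continuous.subtype_mk (continuous_const.prodMk continuous_subtype_val) _)
        exact isOpen_lt hcont continuous_const
      refine topo_eq' hle inferInstance ?_
      refine @T2Space.mk _ (TopologicalSpace.generateFrom _) ?_
      intro a b hab
      have hne : (a : K) ≠ (b : K) := fun hh => hab (Subtype.ext hh)
      have hqe : q (a : K) = q (b : K) := a.2.trans b.2.symm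
      have hpos : 0 < F ⟨((a : K), (b : K)), hqe⟩ :=
        (hFnn _).lt_of_ne (fun h0 => hne (hFdef _ _ hqe h0.symm))
      refine ⟨{y : {x : K // q x = l} |
          F ⟨((a : K), (y : K)), a.2.trans y.2.symm⟩ < F ⟨((a : K), (b : K)), hqe⟩ / 2},
        {y : {x : K // q x = l} |
          F ⟨((b : K), (y : K)), b.2.trans y.2.symm⟩ < F ⟨((a : K), (b : K)), hqe⟩ / 2},
        ?_, ?_, ?_, ?_, ?_⟩
      · exact TopologicalSpace.GenerateOpen.basic _ ⟨a, _, by linarith, rfl⟩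
      · exact TopologicalSpace.GenerateOpen.basic _ ⟨b, _, by linarith, rfl⟩
      · show F ⟨((a : K), (a : K)), a.2.trans a.2.symm⟩ < F ⟨((a : K), (b : K)), hqe⟩ / 2
        rw [show F ⟨((a : K), (a : K)), a.2.trans a.2.symm⟩ = 0 from hFrefl (a : K)]
        linarith
      · show F ⟨((b : K), (b : K)), b.2.trans b.2.symm⟩ < F ⟨((a : K), (b : K)), hqe⟩ / 2
        rw [show F ⟨((b : K), (b : K)), b.2.trans b.2.symm⟩ = 0 from hFrefl (b : K)]
        linarith
      · rw [Set.disjoint_left]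
        intro z hz1 hz2
        have hz1' : F ⟨((a : K), (z : K)), a.2.trans z.2.symm⟩
            < F ⟨((a : K), (b : K)), hqe⟩ / 2 := hz1
        have hz2' : F ⟨((b : K), (z : K)), b.2.trans z.2.symm⟩
            < F ⟨((a : K), (b : K)), hqe⟩ / 2 := hz2
        have tri' : F ⟨((a : K), (b : K)), hqe⟩
            ≤ F ⟨((a : K), (z : K)), a.2.trans z.2.symm⟩
              + F ⟨((b : K), (z : K)), b.2.trans z.2.symm⟩ := by
          have t1 := hFtri (a : K) (z : K) (b : K) (a.2.trans z.2.symm) (z.2.trans b.2.symm)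
          have t2 := hFsym (z : K) (b : K) (z.2.trans b.2.symm)
          rw [t2] at t1
          exact t1
        linarith
    exact ⟨F, hFc, hFnn, hFrefl, hFdef, hFsym, hFtri, hFtop, hFinv⟩
  · intro h
    obtain ⟨p, h1, h2, h3, h4, h5, h6, h7, h8⟩ := h
    refine ⟨{p}, ?_, ?_, ?_, ?_, ?_, ?_, ?_⟩
    · intro p' hp'; rw [Set.mem_singleton_iff] at hp'; subst hp'; exact h1
    · intro p' hp'; rw [Set.mem_singleton_iff] at hp'; subst hp'; exact h2
    · intro p' hp'; rw [Set.mem_singleton_iff] at hp'; subst hp'; exact h3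
    · intro p' hp'; rw [Set.mem_singleton_iff] at hp'; subst hp'; exact h5
    · intro p' hp'; rw [Set.mem_singleton_iff] at hp'; subst hp'; exact h6
    · intro l
      rw [h7 l]
      congr 1
      ext B
      simp only [Set.mem_setOf_eq, Set.mem_singleton_iff]
      constructor
      · rintro ⟨x₀, ε, hε, rfl⟩
        exact ⟨p, rfl, x₀, ε, hε, rfl⟩
      · rintro ⟨p', rfl, x₀, ε, hε, rfl⟩
        exact ⟨x₀, ε, hε, rfl⟩
    · intro p' hp' g x y hh hh'; rw [Set.mem_singleton_iff] at hp'; subst hp'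
      exact h8 g x y hh hh'
end

section
/- Let q : (K,G) → (L,G) be an open extension of topological dynamical systems such that the uniform enveloping semigroupoid E_u(q) is compact. Then E_u(q) is transitive — i.e. for all l, l' ∈ L there exists θ ∈ E_u(q) with s(θ) = l and r(θ) = l' — if and only if the smallest closed equivalence relation on L containing the orbit relation {(l, g·l) : l ∈ L, g ∈ G} equals L × L. -/
open Filter Topology Set Function MeasureTheory

/-- The smallest closed equivalence relation on `L` containing the relation `R`. -/
def smallestClosedEquiv {L : Type} [TopologicalSpace L] (R : Set (L × L)) : Set (L × L) :=
  ⋂₀ {E : Set (L × L) | R ⊆ E ∧ IsClosed E ∧ (∀ l : L, (l, l) ∈ E) ∧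
    (∀ a b : L, (a, b) ∈ E → (b, a) ∈ E) ∧
    (∀ a b c : L, (a, b) ∈ E → (b, c) ∈ E → (a, c) ∈ E)}


section Aux

theorem myContinuousSrc {K L : Type} [TopologicalSpace K] [CompactSpace K]
    [TopologicalSpace L] {q : K → L} (hq : Continuous q) (hqs : Function.Surjective q) :
    Continuous (fun θ : FiberMap q q => θ.src) := by
  rw [continuous_def]
  intro U hU
  have hset : (fun θ : FiberMap q q => θ.src) ⁻¹' U =
      {θ : FiberMap q q | ∀ x : {x : K // q x = θ.src},
        (x : K) ∈ q ⁻¹' Uᶜ → θ.toFun x ∈ (∅ : Set K)} := by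
    ext θ
    simp only [Set.mem_preimage, Set.mem_setOf_eq, Set.mem_empty_iff_false, Set.mem_compl_iff]
    constructor
    · intro h x hx
      exact hx (by rw [x.2]; exact h)
    · intro h
      obtain ⟨x, hx⟩ := hqs θ.src
      by_contra hc
      exact h ⟨x, hx⟩ (by rw [hx]; exact hc)
  rw [hset]
  exact TopologicalSpace.GenerateOpen.basic _
    ⟨q ⁻¹' Uᶜ, ∅, (hU.isClosed_compl.preimage hq).isCompact, isOpen_empty, rfl⟩

theorem myContinuousRng {K L : Type} [TopologicalSpace K] [CompactSpace K]
    [TopologicalSpace L] {q : K → L} (hq : Continuous q) (hqs : Function.Surjective q) :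
    Continuous (fun θ : FiberMap q q => θ.rng) := by
  rw [continuous_def]
  intro U hU
  have hset : (fun θ : FiberMap q q => θ.rng) ⁻¹' U =
      {θ : FiberMap q q | ∀ x : {x : K // q x = θ.src},
        (x : K) ∈ (Set.univ : Set K) → θ.toFun x ∈ q ⁻¹' U} := by
    ext θ
    simp only [Set.mem_preimage, Set.mem_setOf_eq, Set.mem_univ, forall_true_left, true_implies]
    constructor
    · intro h x
      rw [θ.maps_to x]; exact h
    · intro h
      obtain ⟨x, hx⟩ := hqs θ.src
      have := h ⟨x, hx⟩
      rwa [θ.maps_to] at this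
  rw [hset]
  exact TopologicalSpace.GenerateOpen.basic _
    ⟨Set.univ, q ⁻¹' U, isCompact_univ, hU.preimage hq, rfl⟩

theorem transitionSubset {G K L : Type} [Group G] [TopologicalSpace K]
    [MulAction G K] [MulAction G L] (q : K → L) :
    transitionSet G q ⊆ uniformEnveloping G q :=
  fun θ hθ => Set.mem_sInter.mpr fun _ hS => hS.1 hθ

theorem uESubsemigroupoid {G K L : Type} [Group G] [TopologicalSpace K]
    [MulAction G K] [MulAction G L] (q : K → L) :
    IsSubsemigroupoid (uniformEnveloping G q) :=
  fun θ hθ η hη h => Set.mem_sInter.mpr fun S hS =>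
    hS.2.1 θ (Set.mem_sInter.mp hθ S hS) η (Set.mem_sInter.mp hη S hS) h

/-- The transition map `φ_g|_{K_l}`. -/
def transMap {G K L : Type} [Group G] [TopologicalSpace G] [TopologicalSpace K] [MulAction G K]
    [ContinuousSMul G K] [MulAction G L]
    (q : K → L) (heq : ∀ (g : G) (x : K), q (g • x) = g • q x) (g : G) (l : L) :
    FiberMap q q where
  src := l
  rng := g • l
  toFun x := g • (x : K)
  maps_to x := by rw [heq, x.2]
  continuous_toFun := (continuous_const_smul g).comp continuous_subtype_val

theorem transMap_mem {G K L : Type} [Group G] [TopologicalSpace G] [TopologicalSpace K] [MulAction G K]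
    [ContinuousSMul G K] [MulAction G L]
    (q : K → L) (heq : ∀ (g : G) (x : K), q (g • x) = g • q x) (g : G) (l : L) :
    transMap q heq g l ∈ transitionSet G q :=
  ⟨g, rfl, fun _ => rfl⟩

end Aux

/-- For an open extension with compact uniform enveloping semigroupoid `E_u(q)`, the
semigroupoid `E_u(q)` is transitive if and only if the smallest closed equivalence
relation on `L` containing the orbit relation is all of `L × L`. -/

theorem statement11 {G K L : Type} [Group G] [TopologicalSpace G] [IsTopologicalGroup G]
    [T2Space G] [TopologicalSpace K] [CompactSpace K] [T2Space K] [Nonempty K]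
    [TopologicalSpace L] [CompactSpace L] [T2Space L] [Nonempty L]
    [MulAction G K] [ContinuousSMul G K] [MulAction G L] [ContinuousSMul G L]
    (q : K → L) (hq : Continuous q) (hqs : Function.Surjective q) (hqo : IsOpenMap q)
    (heq : ∀ (g : G) (x : K), q (g • x) = g • q x)
    (hcomp : IsCompact (uniformEnveloping G q)) :
    (∀ l l' : L, ∃ θ ∈ uniformEnveloping G q, θ.src = l ∧ θ.rng = l') ↔
      smallestClosedEquiv {z : L × L | ∃ g : G, g • z.1 = z.2} = Set.univ := by
  have hfc : Continuous (fun θ : FiberMap q q => (θ.src, θ.rng)) :=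
    (myContinuousSrc hq hqs).prodMk (myContinuousRng hq hqs)
  constructor
  · -- transitive ⇒ smallest closed equiv is univ
    intro htrans
    apply Set.eq_univ_of_forall
    rintro ⟨l, l'⟩
    intro E hE
    obtain ⟨hR, hcl, _hrefl, _hsymm, htr⟩ := hE
    obtain ⟨θ, hθ, hs, hr⟩ := htrans l l'
    have hSfam : transitionSet G q ⊆ {θ : FiberMap q q | (θ.src, θ.rng) ∈ E} ∧
        IsSubsemigroupoid {θ : FiberMap q q | (θ.src, θ.rng) ∈ E} ∧
        IsClosed {θ : FiberMap q q | (θ.src, θ.rng) ∈ E} := by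
      refine ⟨?_, ?_, ?_⟩
      · rintro η ⟨g, hg, -⟩
        show (η.src, η.rng) ∈ E
        rw [hg]
        exact hR ⟨g, rfl⟩
      · intro θ hθ' η hη' h
        show (θ.src, η.rng) ∈ E
        exact htr θ.src θ.rng η.rng hθ' (by rw [h]; exact hη')
      · have : {θ : FiberMap q q | (θ.src, θ.rng) ∈ E} =
            (fun θ : FiberMap q q => (θ.src, θ.rng)) ⁻¹' E := rfl
        rw [this]
        exact hcl.preimage hfc
    have : (θ.src, θ.rng) ∈ E := Set.mem_sInter.mp hθ _ hSfam
    rwa [hs, hr] at this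
  · -- smallest closed equiv = univ ⇒ transitive
    intro h l l'
    set E' : Set (L × L) := (fun θ : FiberMap q q => (θ.src, θ.rng)) '' uniformEnveloping G q
      with hE'def
    have hE'c : IsClosed E' := (hcomp.image hfc).isClosed
    have htransE' : ∀ a b c : L, (a, b) ∈ E' → (b, c) ∈ E' → (a, c) ∈ E' := by
      rintro a b c ⟨θ, hθ, hθf⟩ ⟨η, hη, hηf⟩
      have h1 : θ.src = a := congrArg Prod.fst hθf
      have h2 : θ.rng = b := congrArg Prod.snd hθf
      have h3 : η.src = b := congrArg Prod.fst hηf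
      have h4 : η.rng = c := congrArg Prod.snd hηf
      have hcm : θ.rng = η.src := h2.trans h3.symm
      exact ⟨FiberMap.comp η θ hcm, uESubsemigroupoid q θ hθ η hη hcm,
        by show (θ.src, η.rng) = (a, c); rw [h1, h4]⟩
    have hRE' : ∀ z : L × L, (∃ g : G, g • z.1 = z.2) → z ∈ E' ∧ z.swap ∈ E' := by
      rintro ⟨a, b⟩ ⟨g, hg⟩
      change g • a = b at hg
      constructor
      · exact ⟨transMap q heq g a, transitionSubset q (transMap_mem q heq g a),
          by show (a, g • a) = (a, b); rw [hg]⟩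
      · exact ⟨transMap q heq g⁻¹ b, transitionSubset q (transMap_mem q heq g⁻¹ b),
          by show (b, g⁻¹ • b) = (b, a); rw [← hg, inv_smul_smul]⟩
    have hfam : (l, l') ∈ E' ∩ Prod.swap ⁻¹' E' := by
      have hsub : smallestClosedEquiv {z : L × L | ∃ g : G, g • z.1 = z.2} ⊆
          E' ∩ Prod.swap ⁻¹' E' := by
        apply Set.sInter_subset_of_mem
        refine ⟨?_, hE'c.inter (hE'c.preimage continuous_swap), ?_, ?_, ?_⟩
        · intro z hz
          exact ⟨(hRE' z hz).1, (hRE' z hz).2⟩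
        · intro a
          exact hRE' (a, a) ⟨1, one_smul G a⟩
        · rintro a b ⟨h1, h2⟩
          exact ⟨h2, h1⟩
        · rintro a b c ⟨h1, h2⟩ ⟨h3, h4⟩
          exact ⟨htransE' a b c h1 h3, htransE' c b a h4 h2⟩
      rw [h] at hsub
      exact hsub (Set.mem_univ _)
    obtain ⟨θ, hθ, hθf⟩ := hfam.1
    exact ⟨θ, hθ, congrArg Prod.fst hθf, congrArg Prod.snd hθf⟩
end

section
/- Let q : (K,G) → (L,G) be an open extension of topological dynamical systems and let μ be a relatively invariant measure for q. Then μ is invariant under the whole uniform enveloping semigroupoid: for every θ ∈ E_u(q) and every f ∈ C(K,ℂ) one has ∫_{K_{s(θ)}} f(θ(x)) dμ_{s(θ)}(x) = ∫_K f dμ_{r(θ)}, where μ_{s(θ)} is regarded as a probability measure on the fiber K_{s(θ)} (which carries its full mass since q_*μ_{s(θ)} = δ_{s(θ)}). -/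
open Filter Topology Set Function MeasureTheory

set_option linter.unusedSectionVars false

namespace Aux14

variable {K L : Type} [TopologicalSpace K] [CompactSpace K] [T2Space K]
  [MeasurableSpace K] [BorelSpace K] [TopologicalSpace L] [T2Space L]
  [MeasurableSpace L] [BorelSpace L] {q : K → L}

lemma isOpen_W {C O : Set K} (hC : IsCompact C) (hO : IsOpen O) :
    IsOpen {θ : FiberMap q q | ∀ x : {x : K // q x = θ.src}, (x : K) ∈ C → θ.toFun x ∈ O} :=
  TopologicalSpace.isOpen_generateFrom_of_mem ⟨C, O, hC, hO, rfl⟩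

lemma continuous_src (hq : Continuous q) (hqs : Function.Surjective q) :
    Continuous (fun θ : FiberMap q q => θ.src) := by
  rw [continuous_def]
  intro U hU
  have key : (fun θ : FiberMap q q => θ.src) ⁻¹' U =
      {θ : FiberMap q q | ∀ x : {x : K // q x = θ.src},
        (x : K) ∈ q ⁻¹' Uᶜ → θ.toFun x ∈ (∅ : Set K)} := by
    ext θ
    simp only [Set.mem_preimage, Set.mem_setOf_eq]
    constructor
    · intro hθ x hx
      exact absurd hθ (by simpa [x.2] using hx)
    · intro h
      by_contra hc
      obtain ⟨x, hx⟩ := hqs θ.src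
      exact h ⟨x, hx⟩ (by simpa [hx] using hc)
  rw [key]
  exact isOpen_W ((hU.isClosed_compl.preimage hq).isCompact) isOpen_empty

lemma continuous_rng (hq : Continuous q) (hqs : Function.Surjective q) :
    Continuous (fun θ : FiberMap q q => θ.rng) := by
  rw [continuous_def]
  intro V hV
  have key : (fun θ : FiberMap q q => θ.rng) ⁻¹' V =
      {θ : FiberMap q q | ∀ x : {x : K // q x = θ.src},
        (x : K) ∈ (Set.univ : Set K) → θ.toFun x ∈ q ⁻¹' V} := by
    ext θ
    simp only [Set.mem_preimage, Set.mem_setOf_eq, Set.mem_univ, forall_const]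
    constructor
    · intro hθ x
      show q (θ.toFun x) ∈ V
      rw [θ.maps_to x]; exact hθ
    · intro h
      obtain ⟨x, hx⟩ := hqs θ.src
      have := h ⟨x, hx⟩
      rwa [θ.maps_to] at this
  rw [key]
  exact isOpen_W isCompact_univ (hV.preimage hq)

lemma integrable_of_continuous {X : Type} [TopologicalSpace X] [CompactSpace X]
    [MeasurableSpace X] [OpensMeasurableSpace X] (ν : Measure X) [IsFiniteMeasure ν]
    {g : X → ℂ} (hg : Continuous g) : Integrable g ν :=
  (BoundedContinuousFunction.mkOfCompact (⟨g, hg⟩ : C(X, ℂ))).integrable ν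

lemma fiber_measure_compl_eq_zero (hq : Continuous q) {l : L} {ν : Measure K}
    (hν : ν.map q = Measure.dirac l) : ν (q ⁻¹' {l})ᶜ = 0 := by
  have hms : MeasurableSet ({l} : Set L) := isClosed_singleton.measurableSet
  have h1 : ν.map q {l}ᶜ = ν (q ⁻¹' {l})ᶜ := by
    rw [Measure.map_apply hq.measurable hms.compl, Set.preimage_compl]
  rw [hν] at h1
  rw [← h1, Measure.dirac_apply' _ hms.compl]
  simp

lemma fiber_measure_one (hq : Continuous q) {l : L} {ν : Measure K} [IsProbabilityMeasure ν]
    (hν : ν.map q = Measure.dirac l) : ν (q ⁻¹' {l}) = 1 := by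
  have h := prob_add_prob_compl (μ := ν) (s := q ⁻¹' {l})
    ((isClosed_singleton.preimage hq).measurableSet)
  rwa [fiber_measure_compl_eq_zero hq hν, add_zero] at h

lemma comap_isProbability (hq : Continuous q) {l : L} {ν : Measure K} [IsProbabilityMeasure ν]
    (hν : ν.map q = Measure.dirac l) :
    IsProbabilityMeasure (ν.comap (Subtype.val : {x : K // q x = l} → K)) := by
  constructor
  have hs : MeasurableSet (q ⁻¹' {l}) := (isClosed_singleton.preimage hq).measurableSet
  show (Measure.comap (Subtype.val : (q ⁻¹' {l} : Set K) → K) ν) Set.univ = 1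
  rw [(MeasurableEmbedding.subtype_coe hs).comap_apply, Set.image_univ, Subtype.range_coe]
  exact fiber_measure_one hq hν

lemma fiber_compactSpace (hq : Continuous q) (l : L) : CompactSpace {x : K // q x = l} :=
  isCompact_iff_compactSpace.mp (isClosed_singleton.preimage hq).isCompact

lemma integral_fiber (hq : Continuous q) {l : L} {ν : Measure K} [IsProbabilityMeasure ν]
    (hν : ν.map q = Measure.dirac l) {g : K → ℂ} (hg : Continuous g) :
    ∫ x : {x : K // q x = l}, g x ∂(ν.comap Subtype.val) = ∫ x, g x ∂ν := by
  have hs : MeasurableSet (q ⁻¹' {l}) := (isClosed_singleton.preimage hq).measurableSet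
  have h1 : ∫ x : (q ⁻¹' {l} : Set K), g x ∂(ν.comap Subtype.val) = ∫ x in q ⁻¹' {l}, g x ∂ν :=
    integral_subtype_comap hs g
  have hint : Integrable g ν := integrable_of_continuous ν hg
  have hz : ∫ x in (q ⁻¹' {l})ᶜ, g x ∂ν = 0 := by
    rw [Measure.restrict_eq_zero.mpr (fiber_measure_compl_eq_zero hq hν)]
    exact integral_zero_measure g
  have h2 : ∫ x in q ⁻¹' {l}, g x ∂ν = ∫ x, g x ∂ν := by
    rw [← integral_add_compl hs hint, hz, add_zero]
  exact h1.trans h2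

lemma continuous_integral_C (f : C(K, ℂ)) :
    Continuous fun ν : ProbabilityMeasure K => ∫ x, f x ∂(ν : Measure K) := by
  have hre : Continuous fun ν : ProbabilityMeasure K => ∫ x, (f x).re ∂(ν : Measure K) := by
    have := MeasureTheory.ProbabilityMeasure.continuous_integral_boundedContinuousFunction
      (BoundedContinuousFunction.mkOfCompact
        (⟨fun x => (f x).re, (Complex.continuous_re.comp f.continuous)⟩ : C(K, ℝ)))
    simpa using this
  have him : Continuous fun ν : ProbabilityMeasure K => ∫ x, (f x).im ∂(ν : Measure K) := by
    have := MeasureTheory.ProbabilityMeasure.continuous_integral_boundedContinuousFunction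
      (BoundedContinuousFunction.mkOfCompact
        (⟨fun x => (f x).im, (Complex.continuous_im.comp f.continuous)⟩ : C(K, ℝ)))
    simpa using this
  have key : ∀ ν : ProbabilityMeasure K, ∫ x, f x ∂(ν : Measure K) =
      ((∫ x, (f x).re ∂(ν : Measure K) : ℝ) : ℂ)
        + ((∫ x, (f x).im ∂(ν : Measure K) : ℝ) : ℂ) * Complex.I := by
    intro ν
    have hint : Integrable f (ν : Measure K) := integrable_of_continuous _ f.continuous
    rw [← integral_coe_re_add_coe_im hint, integral_ofReal, integral_ofReal]
    simp [RCLike.re_to_complex, RCLike.im_to_complex]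
  rw [show (fun ν : ProbabilityMeasure K => ∫ x, f x ∂(ν : Measure K)) = _ from funext key]
  exact (Complex.continuous_ofReal.comp hre).add
    ((Complex.continuous_ofReal.comp him).mul continuous_const)

lemma exists_extension (hq : Continuous q) (l : L) (g : {x : K // q x = l} → ℂ)
    (hg : Continuous g) : ∃ F : C(K, ℂ), ∀ x : {x : K // q x = l}, F x = g x := by
  have hs : IsClosed (q ⁻¹' {l}) := isClosed_singleton.preimage hq
  obtain ⟨F, hF⟩ := ContinuousMap.exists_restrict_eq hs
    (⟨fun x : (q ⁻¹' {l} : Set K) => g ⟨x.1, x.2⟩,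
      hg.comp (continuous_subtype_val.subtype_mk _)⟩ : C((q ⁻¹' {l} : Set K), ℂ))
  exact ⟨F, fun x => ContinuousMap.congr_fun hF ⟨x.1, x.2⟩⟩

lemma continuous_LHS (hq : Continuous q) (hqs : Function.Surjective q)
    (μ : L → ProbabilityMeasure K) (hc : Continuous μ)
    (hd : ∀ l, (μ l : Measure K).map q = Measure.dirac l) (f : C(K, ℂ)) :
    Continuous (fun θ : FiberMap q q =>
      ∫ x : {x : K // q x = θ.src}, f (θ.toFun x)
        ∂(Measure.comap Subtype.val (μ θ.src : Measure K))) := by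
  rw [continuous_iff_continuousAt]
  intro θ
  rw [ContinuousAt, Metric.tendsto_nhds]
  intro ε hε
  set ε' := ε / 4 with hε'def
  have hε' : 0 < ε' := by positivity
  obtain ⟨F, hF⟩ := exists_extension hq θ.src (fun x => f (θ.toFun x))
    (f.continuous.comp θ.continuous_toFun)
  have step : ∀ a : {x : K // q x = θ.src}, ∃ (Ca : Set K) (Oa : Set K),
      IsCompact Ca ∧ IsOpen Oa ∧ (a : K) ∈ interior Ca ∧
      (∀ x : {x : K // q x = θ.src}, (x : K) ∈ Ca → θ.toFun x ∈ Oa) ∧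
      (∀ y ∈ Oa, dist (f y) (f (θ.toFun a)) < ε') ∧
      (∀ y ∈ Ca, dist (F y) (F (a : K)) < ε') := by
    intro a
    set Oa := f ⁻¹' Metric.ball (f (θ.toFun a)) ε' with hOadef
    have hOa : IsOpen Oa := Metric.isOpen_ball.preimage f.continuous
    have hpre : IsOpen (θ.toFun ⁻¹' Oa) := hOa.preimage θ.continuous_toFun
    obtain ⟨U1, hU1o, hU1⟩ := isOpen_induced_iff.mp hpre
    set U2 := F ⁻¹' Metric.ball (F (a : K)) ε' with hU2def
    have hU2o : IsOpen U2 := Metric.isOpen_ball.preimage F.continuous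
    have haU : (a : K) ∈ U1 ∩ U2 := by
      constructor
      · have h : a ∈ θ.toFun ⁻¹' Oa := by
          show θ.toFun a ∈ Oa
          simp [hOadef, hε']
        rw [← hU1] at h
        exact h
      · simp [hU2def, hε']
    obtain ⟨Ca, hCac, haCa, hCaU⟩ := exists_compact_subset (hU1o.inter hU2o) haU
    refine ⟨Ca, Oa, hCac, hOa, haCa, ?_, ?_, ?_⟩
    · intro x hx
      have h : x ∈ Subtype.val ⁻¹' U1 := (hCaU hx).1
      rw [hU1] at h
      exact h
    · intro y hy
      exact Metric.mem_ball.mp hy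
    · intro y hy
      exact Metric.mem_ball.mp (hCaU hy).2
  choose Ca Oa hCcomp hOopen hmemint hWθ hfO hFC using step
  have hfibcomp : IsCompact (q ⁻¹' {θ.src}) := (isClosed_singleton.preimage hq).isCompact
  have hcover : q ⁻¹' {θ.src} ⊆ ⋃ a : {x : K // q x = θ.src}, interior (Ca a) := by
    intro x hx
    exact Set.mem_iUnion.mpr ⟨⟨x, hx⟩, hmemint ⟨x, hx⟩⟩
  obtain ⟨t, ht⟩ := hfibcomp.elim_finite_subcover (fun a => interior (Ca a))
    (fun a => isOpen_interior) hcover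
  set V : Set K := ⋃ a ∈ t, interior (Ca a) with hVdef
  have hVopen : IsOpen V := isOpen_biUnion fun a _ => isOpen_interior
  set N1 : Set (FiberMap q q) := ⋂ a ∈ t, {θ' : FiberMap q q |
      ∀ x : {x : K // q x = θ'.src}, (x : K) ∈ Ca a → θ'.toFun x ∈ Oa a} with hN1def
  have hN1open : IsOpen N1 := isOpen_biInter_finset fun a _ => isOpen_W (hCcomp a) (hOopen a)
  have hθN1 : θ ∈ N1 := Set.mem_iInter₂.mpr fun a _ => fun x hx => hWθ a x hx
  set SL : Set L := {l : L | q ⁻¹' {l} ⊆ V} with hSLdef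
  have hSLopen : IsOpen SL := by
    have hSLeq : SL = (q '' Vᶜ)ᶜ := by
      ext l
      constructor
      · intro hsub hmem
        obtain ⟨x, hxV, hxl⟩ := hmem
        exact hxV (hsub hxl)
      · intro hnm x hx
        by_contra hxV
        exact hnm ⟨x, hxV, hx⟩
    rw [hSLeq]
    exact ((hVopen.isClosed_compl.isCompact.image hq).isClosed).isOpen_compl
  have hθSL : θ.src ∈ SL := ht
  set N2 := (fun θ' : FiberMap q q => θ'.src) ⁻¹' SL with hN2def
  have hN2open : IsOpen N2 := hSLopen.preimage (continuous_src hq hqs)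
  have hcont3 : Continuous fun θ' : FiberMap q q => ∫ x, F x ∂(μ θ'.src : Measure K) :=
    (continuous_integral_C F).comp (hc.comp (continuous_src hq hqs))
  set N3 := (fun θ' : FiberMap q q => ∫ x, F x ∂(μ θ'.src : Measure K)) ⁻¹'
      (Metric.ball (∫ x, F x ∂(μ θ.src : Measure K)) ε') with hN3def
  have hN3open : IsOpen N3 := Metric.isOpen_ball.preimage hcont3
  have hθN3 : θ ∈ N3 := by
    show (∫ x, F x ∂(μ θ.src : Measure K)) ∈ Metric.ball (∫ x, F x ∂(μ θ.src : Measure K)) ε'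
    exact Metric.mem_ball_self hε'
  have hNopen : IsOpen (N1 ∩ N2 ∩ N3) := (hN1open.inter hN2open).inter hN3open
  have hθN : θ ∈ N1 ∩ N2 ∩ N3 := ⟨⟨hθN1, hθSL⟩, hθN3⟩
  refine Filter.eventually_of_mem (hNopen.mem_nhds hθN) ?_
  intro θ' hθ'mem
  obtain ⟨⟨hθ'1, hθ'2⟩, hθ'3⟩ := hθ'mem
  haveI : IsProbabilityMeasure (Measure.comap
      (Subtype.val : {x : K // q x = θ'.src} → K) (μ θ'.src : Measure K)) :=
    comap_isProbability hq (hd θ'.src)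
  haveI : IsProbabilityMeasure (Measure.comap
      (Subtype.val : {x : K // q x = θ.src} → K) (μ θ.src : Measure K)) :=
    comap_isProbability hq (hd θ.src)
  haveI : CompactSpace {x : K // q x = θ'.src} := fiber_compactSpace hq θ'.src
  haveI : OpensMeasurableSpace {x : K // q x = θ'.src} :=
    inferInstanceAs (OpensMeasurableSpace ({x : K | q x = θ'.src} : Set K))
  have hpt : ∀ x : {x : K // q x = θ'.src}, ‖f (θ'.toFun x) - F (x : K)‖ ≤ 2 * ε' := by
    intro x
    have hxV : (x : K) ∈ V := hθ'2 x.2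
    obtain ⟨a, hat, hxa⟩ := Set.mem_iUnion₂.mp hxV
    have hxCa : (x : K) ∈ Ca a := interior_subset hxa
    have h1 : θ'.toFun x ∈ Oa a := (Set.mem_iInter₂.mp hθ'1 a hat) x hxCa
    have h2 : dist (f (θ'.toFun x)) (f (θ.toFun a)) < ε' := hfO a _ h1
    have h3 : dist (F (x : K)) (F (a : K)) < ε' := hFC a _ hxCa
    have h4 : F (a : K) = f (θ.toFun a) := hF a
    calc ‖f (θ'.toFun x) - F (x : K)‖ = dist (f (θ'.toFun x)) (F (x : K)) :=
          (dist_eq_norm _ _).symm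
      _ ≤ dist (f (θ'.toFun x)) (f (θ.toFun a)) + dist (f (θ.toFun a)) (F (x : K)) :=
          dist_triangle _ _ _
      _ ≤ ε' + ε' := by
          have h3' : dist (f (θ.toFun a)) (F (x : K)) < ε' := by
            rw [← h4, dist_comm]; exact h3
          exact (add_lt_add h2 h3').le
      _ = 2 * ε' := by ring
  have hint1 : Integrable (fun x : {x : K // q x = θ'.src} => f (θ'.toFun x))
      (Measure.comap Subtype.val (μ θ'.src : Measure K)) :=
    integrable_of_continuous _ (f.continuous.comp θ'.continuous_toFun)
  have hint2 : Integrable (fun x : {x : K // q x = θ'.src} => F (x : K))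
      (Measure.comap Subtype.val (μ θ'.src : Measure K)) :=
    integrable_of_continuous _ (F.continuous.comp continuous_subtype_val)
  have hdiff : ‖(∫ x : {x : K // q x = θ'.src}, f (θ'.toFun x)
        ∂(Measure.comap Subtype.val (μ θ'.src : Measure K)))
      - ∫ x : {x : K // q x = θ'.src}, F (x : K)
        ∂(Measure.comap Subtype.val (μ θ'.src : Measure K))‖ ≤ 2 * ε' := by
    rw [← integral_sub hint1 hint2]
    have h := norm_integral_le_of_norm_le_const
      (μ := Measure.comap Subtype.val (μ θ'.src : Measure K))
      (f := fun x : {x : K // q x = θ'.src} => f (θ'.toFun x) - F (x : K)) (C := 2 * ε')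
      (Filter.Eventually.of_forall fun x => hpt x)
    simpa [measure_univ] using h
  have heqF : ∫ x : {x : K // q x = θ'.src}, F (x : K)
      ∂(Measure.comap Subtype.val (μ θ'.src : Measure K)) = ∫ x, F x ∂(μ θ'.src : Measure K) :=
    integral_fiber hq (hd θ'.src) F.continuous
  have hΦθ : (∫ x : {x : K // q x = θ.src}, f (θ.toFun x)
      ∂(Measure.comap Subtype.val (μ θ.src : Measure K)))
        = ∫ x, F x ∂(μ θ.src : Measure K) := by
    rw [show (fun x : {x : K // q x = θ.src} => f (θ.toFun x))
        = fun x : {x : K // q x = θ.src} => F (x : K) from funext fun x => (hF x).symm]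
    exact integral_fiber hq (hd θ.src) F.continuous
  have h6 : dist (∫ x, F x ∂(μ θ'.src : Measure K)) (∫ x, F x ∂(μ θ.src : Measure K)) < ε' :=
    Metric.mem_ball.mp hθ'3
  have h5 : dist (∫ x : {x : K // q x = θ'.src}, f (θ'.toFun x)
      ∂(Measure.comap Subtype.val (μ θ'.src : Measure K)))
      (∫ x, F x ∂(μ θ'.src : Measure K)) ≤ 2 * ε' := by
    rw [← heqF, dist_eq_norm]
    exact hdiff
  have goal' : dist (∫ x : {x : K // q x = θ'.src}, f (θ'.toFun x)
      ∂(Measure.comap Subtype.val (μ θ'.src : Measure K)))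
    (∫ x : {x : K // q x = θ.src}, f (θ.toFun x)
      ∂(Measure.comap Subtype.val (μ θ.src : Measure K))) < ε := by
    rw [hΦθ]
    have htri := dist_triangle (∫ x : {x : K // q x = θ'.src}, f (θ'.toFun x)
        ∂(Measure.comap Subtype.val (μ θ'.src : Measure K)))
      (∫ x, F x ∂(μ θ'.src : Measure K)) (∫ x, F x ∂(μ θ.src : Measure K))
    have hεeq : ε = 4 * ε' := by rw [hε'def]; ring
    linarith
  exact goal'

end Aux14

/-- A relatively invariant measure for the extension `q : (K,G) → (L,G)`: a
weak*-continuous family of Radon (regular Borel) probability measures `μ_l` on `K` with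
`q_*μ_l = δ_l` and `g_*μ_l = μ_{g•l}` for all `g ∈ G`, `l ∈ L`. -/
def IsRIM (G : Type) {K L : Type} [Group G] [TopologicalSpace K] [MeasurableSpace K]
    [OpensMeasurableSpace K] [TopologicalSpace L] [MeasurableSpace L]
    [MulAction G K] [MulAction G L] (q : K → L)
    (μ : L → MeasureTheory.ProbabilityMeasure K) : Prop :=
  Continuous μ ∧
  (∀ l : L, ((μ l : MeasureTheory.Measure K)).Regular) ∧
  (∀ l : L, (μ l : MeasureTheory.Measure K).map q = MeasureTheory.Measure.dirac l) ∧
  (∀ (g : G) (l : L),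
    (μ l : MeasureTheory.Measure K).map (fun x => g • x) = (μ (g • l) : MeasureTheory.Measure K))

/-- A relatively invariant measure is fully supported if `supp μ_l = K_l` for every `l`,
i.e. every open set meeting the fiber `K_l` has positive `μ_l`-measure. -/
def IsFullySupportedRIM {K L : Type} [TopologicalSpace K] [MeasurableSpace K]
    (q : K → L) (μ : L → MeasureTheory.ProbabilityMeasure K) : Prop :=
  ∀ l : L, ∀ U : Set K, IsOpen U → (U ∩ q ⁻¹' {l}).Nonempty →
    (μ l : MeasureTheory.Measure K) U ≠ 0

/-- A relatively invariant measure for an open extension `q : (K,G) → (L,G)` is invariant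
under the whole uniform enveloping semigroupoid: for every `θ ∈ E_u(q)` and every
`f ∈ C(K,ℂ)` one has `∫_{K_{s(θ)}} f∘θ dμ_{s(θ)} = ∫_K f dμ_{r(θ)}`, where `μ_{s(θ)}` is
regarded as a measure on the fiber `K_{s(θ)}` via the subspace (comap) measure. -/
theorem statement14 {G K L : Type} [Group G] [TopologicalSpace G] [IsTopologicalGroup G]
    [T2Space G] [TopologicalSpace K] [CompactSpace K] [T2Space K] [Nonempty K]
    [MeasurableSpace K] [BorelSpace K]
    [TopologicalSpace L] [CompactSpace L] [T2Space L] [Nonempty L]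
    [MeasurableSpace L] [BorelSpace L]
    [MulAction G K] [ContinuousSMul G K] [MulAction G L] [ContinuousSMul G L]
    (q : K → L) (hq : Continuous q) (hqs : Function.Surjective q) (hqo : IsOpenMap q)
    (heq : ∀ (g : G) (x : K), q (g • x) = g • q x)
    (μ : L → MeasureTheory.ProbabilityMeasure K) (hμ : IsRIM G q μ) :
    ∀ θ ∈ uniformEnveloping G q, ∀ f : ContinuousMap K ℂ,
      (∫ x : {x : K // q x = θ.src}, f (θ.toFun x)
          ∂(MeasureTheory.Measure.comap Subtype.val (μ θ.src : MeasureTheory.Measure K)))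
        = ∫ x : K, f x ∂(μ θ.rng : MeasureTheory.Measure K) := by
  obtain ⟨hc, hreg, hd, hinv⟩ := hμ
  set Good : Set (FiberMap q q) := {θ : FiberMap q q | ∀ f : ContinuousMap K ℂ,
    (∫ x : {x : K // q x = θ.src}, f (θ.toFun x)
        ∂(MeasureTheory.Measure.comap Subtype.val (μ θ.src : MeasureTheory.Measure K)))
      = ∫ x : K, f x ∂(μ θ.rng : MeasureTheory.Measure K)} with hGoodDef
  have hclosed : IsClosed Good := by
    have hGeq : Good = ⋂ f : ContinuousMap K ℂ, {θ : FiberMap q q |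
        (∫ x : {x : K // q x = θ.src}, f (θ.toFun x)
          ∂(MeasureTheory.Measure.comap Subtype.val (μ θ.src : MeasureTheory.Measure K)))
        = ∫ x : K, f x ∂(μ θ.rng : MeasureTheory.Measure K)} := by
      ext θ
      simp only [hGoodDef, Set.mem_setOf_eq, Set.mem_iInter]
    rw [hGeq]
    exact isClosed_iInter fun f => isClosed_eq (Aux14.continuous_LHS hq hqs μ hc hd f)
      ((Aux14.continuous_integral_C f).comp (hc.comp (Aux14.continuous_rng hq hqs)))
  have htrans : transitionSet G q ⊆ Good := by
    rintro θ ⟨g, hrng, hfun⟩ f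
    haveI : IsProbabilityMeasure (Measure.comap
        (Subtype.val : {x : K // q x = θ.src} → K) (μ θ.src : Measure K)) :=
      Aux14.comap_isProbability hq (hd θ.src)
    have h1 : (fun x : {x : K // q x = θ.src} => f (θ.toFun x))
        = fun x : {x : K // q x = θ.src} => f (g • (x : K)) :=
      funext fun x => by rw [hfun x]
    show (∫ x : {x : K // q x = θ.src}, f (θ.toFun x)
        ∂(Measure.comap Subtype.val (μ θ.src : Measure K)))
      = ∫ x : K, f x ∂(μ θ.rng : Measure K)
    rw [h1, Aux14.integral_fiber (g := fun x => f (g • x)) hq (hd θ.src)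
      (f.continuous.comp (continuous_const_smul g))]
    have h3 : ∫ x, f (g • x) ∂(μ θ.src : Measure K)
        = ∫ y, f y ∂((μ θ.src : Measure K).map (fun x => g • x)) :=
      (integral_map (continuous_const_smul g).measurable.aemeasurable
        f.continuous.aestronglyMeasurable).symm
    rw [h3, hinv g θ.src, hrng]
  have hsemi : IsSubsemigroupoid Good := by
    intro θ hθ η hη h f
    haveI : IsProbabilityMeasure (Measure.comap
        (Subtype.val : {x : K // q x = η.src} → K) (μ η.src : Measure K)) :=
      Aux14.comap_isProbability hq (hd η.src)
    obtain ⟨F, hF⟩ := Aux14.exists_extension hq η.src (fun y => f (η.toFun y))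
      (f.continuous.comp η.continuous_toFun)
    show (∫ x : {x : K // q x = θ.src}, f ((FiberMap.comp η θ h).toFun x)
        ∂(Measure.comap Subtype.val (μ θ.src : Measure K)))
      = ∫ x : K, f x ∂(μ η.rng : Measure K)
    have h1 : (fun x : {x : K // q x = θ.src} => f ((FiberMap.comp η θ h).toFun x))
        = fun x : {x : K // q x = θ.src} => F (θ.toFun x) :=
      funext fun x => (hF ⟨θ.toFun x, (θ.maps_to x).trans h⟩).symm
    rw [h1, hθ F, h,
      ← Aux14.integral_fiber (q := q) hq (hd η.src) F.continuous,
      show (fun y : {x : K // q x = η.src} => F (y : K))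
        = fun y : {x : K // q x = η.src} => f (η.toFun y) from funext fun y => hF y,
      hη f]
  intro θ hθ
  exact Set.mem_sInter.mp hθ Good ⟨htrans, hsemi, hclosed⟩
end

section
/- Let q : K → L be an open continuous surjection between compact Hausdorff spaces and let μ : L → P(K) be a weak*-continuous map into the Radon probability measures on K with q_*μ_l = δ_l for every l ∈ L. If a net (f_α)_{α∈A} in C_q(K) converges in the compact-open topology to f ∈ C_q(K), then ∫_{K_{s(f_α)}} f_α dμ_{s(f_α)} converges to ∫_{K_{s(f)}} f dμ_{s(f)}, where each μ_l is regarded as a probability measure on the fiber K_l (which carries its full mass since q_*μ_l = δ_l). -/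
open Filter Topology Set Function MeasureTheory

/-- Continuity of fiberwise integration: if `μ : L → P(K)` is weak*-continuous with
`q_*μ_l = δ_l` and a net `(f_α)` in `C_q(K)` converges to `f` in the compact-open
topology, then `∫_{K_{s(f_α)}} f_α dμ_{s(f_α)} → ∫_{K_{s(f)}} f dμ_{s(f)}`, where each
`μ_l` is regarded as a measure on the fiber `K_l` via the subspace (comap) measure. -/
theorem statement15 {K L : Type} [TopologicalSpace K] [CompactSpace K] [T2Space K]
    [MeasurableSpace K] [BorelSpace K]
    [TopologicalSpace L] [CompactSpace L] [T2Space L]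
    [MeasurableSpace L] [BorelSpace L]
    (q : K → L) (hq : Continuous q) (hqs : Function.Surjective q) (hqo : IsOpenMap q)
    (μ : L → MeasureTheory.ProbabilityMeasure K) (hμc : Continuous μ)
    (hμreg : ∀ l : L, ((μ l : MeasureTheory.Measure K)).Regular)
    (hμq : ∀ l : L, (μ l : MeasureTheory.Measure K).map q = MeasureTheory.Measure.dirac l) :
    ∀ (A : Type) [Preorder A] [IsDirected A (· ≤ ·)] [Nonempty A]
      (f : A → FiberMap q (fun _ : ℂ => ())) (f' : FiberMap q (fun _ : ℂ => ())),
      Filter.Tendsto f Filter.atTop (nhds f') →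
      Filter.Tendsto
        (fun a => ∫ x : {x : K // q x = (f a).src}, (f a).toFun x
          ∂(MeasureTheory.Measure.comap Subtype.val
              (μ (f a).src : MeasureTheory.Measure K)))
        Filter.atTop
        (nhds (∫ x : {x : K // q x = f'.src}, f'.toFun x
          ∂(MeasureTheory.Measure.comap Subtype.val
              (μ f'.src : MeasureTheory.Measure K)))) := by
  intro A _ _ _ f f' hT
  classical
  set l' := f'.src with hl'
  -- basic facts about fibers
  have fibClosed : ∀ l : L, IsClosed (q ⁻¹' {l}) := fun l => isClosed_singleton.preimage hq
  have fibMeas : ∀ l : L, MeasurableSet (q ⁻¹' {l}) := fun l => (fibClosed l).measurableSet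
  have fibMass : ∀ l : L, (μ l : Measure K) (q ⁻¹' {l}) = 1 := by
    intro l
    have h1 : (μ l : Measure K).map q {l} = 1 := by rw [hμq l]; simp
    rwa [Measure.map_apply hq.measurable (measurableSet_singleton l)] at h1
  have hcs : ∀ s : L, CompactSpace {x : K // q x = s} := fun s =>
    isCompact_iff_compactSpace.mp (fibClosed s).isCompact
  have hprob : ∀ s : L, IsProbabilityMeasure
      (Measure.comap (Subtype.val : {x : K // q x = s} → K) (μ s)) := by
    intro s
    constructor
    have h := (MeasurableEmbedding.subtype_coe (fibMeas s)).comap_apply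
      (μ s : Measure K) univ
    rw [image_univ, Subtype.range_coe_subtype] at h
    exact h.trans (fibMass s)
  -- integrability of continuous functions on fibers
  have hint : ∀ (s : L) (g : {x : K // q x = s} → ℂ), Continuous g →
      Integrable g (Measure.comap (Subtype.val : {x : K // q x = s} → K) (μ s)) := by
    intro s g hg
    haveI := hcs s
    haveI := hprob s
    haveI : OpensMeasurableSpace {x : K // q x = s} :=
      inferInstanceAs (OpensMeasurableSpace {x : K | q x = s})
    exact hg.integrable_of_hasCompactSupport (HasCompactSupport.of_compactSpace g)
  -- source convergence
  have hsrc : Tendsto (fun a => (f a).src) atTop (𝓝 l') := by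
    rw [tendsto_nhds]
    intro U hU hU'
    set C : Set K := q ⁻¹' Uᶜ with hC
    have hCc : IsCompact C := (hU.isClosed_compl.preimage hq).isCompact
    set S : Set (FiberMap q (fun _ : ℂ => ())) :=
      {θ | ∀ x : {x : K // q x = θ.src}, (x : K) ∈ C → θ.toFun x ∈ (∅ : Set ℂ)} with hS
    have hSopen : IsOpen S :=
      TopologicalSpace.isOpen_generateFrom_of_mem ⟨C, ∅, hCc, isOpen_empty, rfl⟩
    have hf'S : f' ∈ S := by
      intro x hx
      exact hx (show q ↑x ∈ U by rw [x.2]; exact hU')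
    filter_upwards [hT (hSopen.mem_nhds hf'S)] with a ha
    by_contra h
    obtain ⟨x, hx⟩ := hqs (f a).src
    exact ha ⟨x, hx⟩ (by simpa [hC, hx] using h)
  -- Tietze extension of f'
  obtain ⟨F, hFr⟩ := ContinuousMap.exists_restrict_eq (Y := ℂ) (fibClosed l')
    ⟨fun x => f'.toFun ⟨x.1, x.2⟩, f'.continuous_toFun.comp
      (Continuous.subtype_mk continuous_subtype_val _)⟩
  have hFx : ∀ x : {x : K // q x = l'}, F ↑x = f'.toFun x := by
    intro x
    have := ContinuousMap.congr_fun hFr ⟨x.1, x.2⟩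
    simpa using this
  -- uniform approximation on nearby fibers
  have hunif : ∀ ε : ℝ, 0 < ε → ∀ᶠ a in atTop,
      ∀ x : {x : K // q x = (f a).src}, ‖(f a).toFun x - F ↑x‖ ≤ ε := by
    intro ε hε
    have hch : ∀ y : K, ∃ C : Set K, C ∈ 𝓝 y ∧
        C ⊆ {z | ‖F z - F y‖ < ε/2} ∧ IsCompact C := by
      intro y
      have hcont : Continuous fun z => ‖F z - F y‖ :=
        (F.continuous.sub continuous_const).norm
      have hopen : IsOpen {z | ‖F z - F y‖ < ε/2} := isOpen_lt hcont continuous_const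
      exact local_compact_nhds (hopen.mem_nhds (show ‖F y - F y‖ < ε/2 by simpa using half_pos hε))
    choose Cy hCy_nhds hCy_sub hCy_cpt using hch
    obtain ⟨t, -, hcover⟩ := (fibClosed l').isCompact.elim_nhds_subcover
      (fun y => interior (Cy y)) (fun y _ => interior_mem_nhds.2 (hCy_nhds y))
    set U : Set K := ⋃ y ∈ t, interior (Cy y) with hU
    have hUopen : IsOpen U := isOpen_biUnion fun y _ => isOpen_interior
    set V : Set L := (q '' Uᶜ)ᶜ with hV
    have hVopen : IsOpen V :=
      (((hUopen.isClosed_compl.isCompact).image hq).isClosed).isOpen_compl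
    have hl'V : l' ∈ V := by
      rintro ⟨x, hxU, hxq⟩
      exact hxU (hcover (show x ∈ q ⁻¹' {l'} by simp [hxq]))
    -- eventually in each subbasic set
    have ev2 : ∀ y ∈ t, ∀ᶠ a in atTop, ∀ x : {x : K // q x = (f a).src},
        (x : K) ∈ Cy y → (f a).toFun x ∈ Metric.ball (F y) (ε/2) := by
      intro y _
      set Sy : Set (FiberMap q (fun _ : ℂ => ())) :=
        {θ | ∀ x : {x : K // q x = θ.src}, (x : K) ∈ Cy y →
          θ.toFun x ∈ Metric.ball (F y) (ε/2)} with hSy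
      have hSopen : IsOpen Sy :=
        TopologicalSpace.isOpen_generateFrom_of_mem
          ⟨Cy y, Metric.ball (F y) (ε/2), hCy_cpt y, Metric.isOpen_ball, rfl⟩
      have hf'Sy : f' ∈ Sy := by
        intro x hx
        rw [mem_ball_iff_norm, ← hFx x]
        exact hCy_sub y hx
      exact hT (hSopen.mem_nhds hf'Sy)
    have ev1 : ∀ᶠ a in atTop, (f a).src ∈ V := by
      rw [tendsto_nhds] at hsrc
      exact hsrc V hVopen hl'V
    filter_upwards [ev1, (eventually_all_finset t).2 ev2] with a ha1 ha2
    intro x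
    have hxU : (x : K) ∈ U := by
      by_contra hxU
      exact ha1 ⟨x, hxU, x.2⟩
    obtain ⟨y, hyt, hxy⟩ := mem_iUnion₂.1 hxU
    have h1 : ‖(f a).toFun x - F y‖ < ε/2 := by
      have := ha2 y hyt x (interior_subset hxy)
      rwa [mem_ball_iff_norm] at this
    have h2 : ‖F ↑x - F y‖ < ε/2 := hCy_sub y (interior_subset hxy)
    calc ‖(f a).toFun x - F ↑x‖
        ≤ ‖(f a).toFun x - F y‖ + ‖F y - F ↑x‖ := norm_sub_le_norm_sub_add_norm_sub _ _ _
      _ ≤ ε := by rw [norm_sub_rev (F y)]; linarith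
  -- transfer integral of F from fiber to K
  have htrans : ∀ l : L,
      (∫ x : {x : K // q x = l}, F ↑x
        ∂(Measure.comap (Subtype.val : {x : K // q x = l} → K) (μ l)))
      = ∫ x, F x ∂(μ l : Measure K) := by
    intro l
    have h1 : Measure.map (Subtype.val : {x : K // q x = l} → K)
        (Measure.comap Subtype.val (μ l)) = (μ l : Measure K).restrict (q ⁻¹' {l}) := by
      have h := (MeasurableEmbedding.subtype_coe (fibMeas l)).map_comap (μ l : Measure K)
      rw [Subtype.range_coe_subtype] at h
      exact h
    have h2 : (μ l : Measure K).restrict (q ⁻¹' {l}) = (μ l : Measure K) := by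
      apply Measure.restrict_eq_self_of_ae_mem
      rw [ae_iff]
      have : (μ l : Measure K) (q ⁻¹' {l})ᶜ = 0 := by
        rw [measure_compl (fibMeas l) (measure_ne_top _ _), fibMass, measure_univ, tsub_self]
      exact this
    calc (∫ x : {x : K // q x = l}, F ↑x
          ∂(Measure.comap (Subtype.val : {x : K // q x = l} → K) (μ l)))
        = ∫ x, F x ∂(Measure.map (Subtype.val : {x : K // q x = l} → K)
            (Measure.comap Subtype.val (μ l))) :=
          ((MeasurableEmbedding.subtype_coe (fibMeas l)).integral_map _).symm
      _ = ∫ x, F x ∂(μ l : Measure K) := by rw [h1, h2]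
  -- weak convergence of ∫ F
  have hFint : ∀ ν : ProbabilityMeasure K, Integrable (⇑F) (ν : Measure K) := fun ν =>
    F.continuous.integrable_of_hasCompactSupport (HasCompactSupport.of_compactSpace _)
  have hμt : Tendsto (fun a => μ ((f a).src)) atTop (𝓝 (μ l')) :=
    (hμc.tendsto l').comp hsrc
  have hweak : Tendsto (fun a => ∫ x, F x ∂(μ ((f a).src) : Measure K)) atTop
      (𝓝 (∫ x, F x ∂(μ l' : Measure K))) := by
    have hre := ProbabilityMeasure.tendsto_iff_forall_integral_tendsto.mp hμt
      (BoundedContinuousFunction.mkOfCompact ⟨fun x => (F x).re,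
        Complex.continuous_re.comp F.continuous⟩)
    have him := ProbabilityMeasure.tendsto_iff_forall_integral_tendsto.mp hμt
      (BoundedContinuousFunction.mkOfCompact ⟨fun x => (F x).im,
        Complex.continuous_im.comp F.continuous⟩)
    simp only [BoundedContinuousFunction.mkOfCompact_apply, ContinuousMap.coe_mk] at hre him
    have key : ∀ ν : ProbabilityMeasure K, ∫ x, F x ∂(ν : Measure K) =
        ((∫ x, (F x).re ∂(ν : Measure K) : ℝ) : ℂ)
          + ((∫ x, (F x).im ∂(ν : Measure K) : ℝ) : ℂ) * Complex.I := by
      intro ν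
      exact (integral_re_add_im (hFint ν)).symm
    simp only [key]
    exact ((Complex.continuous_ofReal.tendsto _).comp hre).add
      (((Complex.continuous_ofReal.tendsto _).comp him).mul tendsto_const_nhds)
  -- final assembly
  have hIJ : (∫ x : {x : K // q x = l'}, f'.toFun x
      ∂(Measure.comap (Subtype.val : {x : K // q x = l'} → K) (μ l')))
      = ∫ x, F x ∂(μ l' : Measure K) := by
    rw [← htrans l']
    exact integral_congr_ae (Eventually.of_forall fun x => (hFx x).symm)
  rw [Metric.tendsto_nhds]
  intro ε hε
  have h2 := Metric.tendsto_nhds.mp hweak (ε/2) (half_pos hε)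
  filter_upwards [hunif (ε/2) (half_pos hε), h2] with a ha1 ha2
  haveI := hprob (f a).src
  have e1 : dist (∫ x : {x : K // q x = (f a).src}, (f a).toFun x
      ∂(Measure.comap (Subtype.val : {x : K // q x = (f a).src} → K) (μ (f a).src)))
      (∫ x, F x ∂(μ (f a).src : Measure K)) ≤ ε/2 := by
    rw [← htrans (f a).src, dist_eq_norm,
      ← integral_sub (hint _ _ (f a).continuous_toFun)
        (hint _ (fun x => F ↑x) (F.continuous.comp continuous_subtype_val))]
    calc ‖∫ x : {x : K // q x = (f a).src}, ((f a).toFun x - F ↑x)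
          ∂(Measure.comap (Subtype.val : {x : K // q x = (f a).src} → K) (μ (f a).src))‖
        ≤ (ε/2) * ((Measure.comap (Subtype.val : {x : K // q x = (f a).src} → K)
            (μ (f a).src)) univ).toReal :=
          norm_integral_le_of_norm_le_const (Eventually.of_forall ha1)
      _ = ε/2 := by rw [(hprob (f a).src).measure_univ]; simp
  rw [hIJ]
  have tri := dist_triangle
    (∫ x : {x : K // q x = (f a).src}, (f a).toFun x
      ∂(Measure.comap (Subtype.val : {x : K // q x = (f a).src} → K) (μ (f a).src)))
    (∫ x, F x ∂(μ (f a).src : Measure K))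
    (∫ x, F x ∂(μ l' : Measure K))
  linarith
end
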